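/- arXiv:0908.0776 — 5 statements merged into one kernel-verified Lean document; each statement's English description precedes it below -/
import Mathlib

section
/- Let c : (0,∞) → [0,∞) with ∫₀^∞ c(s)²/s ds ≤ E, and let 0 < s₋ ≤ s₊ and j ≥ 1 a natural number. Then the iterated integral over the ordered simplex satisfies ∫_{s₋ ≤ s₁ ≤ ⋯ ≤ s_j ≤ s₊} (c(s₁)/s₁)⋯(c(s_j)/s_j) ds₁⋯ds_j ≤ E^{j/2} (log(s₊/s₋))^{j/2} / j!. -/
open MeasureTheory Set

/-- Auxiliary: the permutation-symmetrization bound. For a nonnegative integrable `F`,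
`j! * ∫_{Monotone} ∏ F(xᵢ) ≤ (∫ F)^j`. -/
theorem aux_perm_bound (j : ℕ) (F : ℝ → ℝ) (hFmeas : Measurable F) (hF0 : ∀ s, 0 ≤ F s)
    (hFint : Integrable F) :
    (Nat.factorial j : ℝ) *
      (∫ x in {x : Fin j → ℝ | Monotone x}, ∏ i, F (x i))
      ≤ (∫ s, F s) ^ j := by
  classical
  set G : (Fin j → ℝ) → ℝ := fun x => ∏ i, F (x i) with hGdef
  have hGmeas : Measurable G := by
    exact Finset.measurable_prod _ fun i _ => hFmeas.comp (measurable_pi_apply i)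
  have hGint : Integrable G := Integrable.fintype_prod (fun _ => hFint)
  have hG0 : ∀ x, 0 ≤ G x := fun x => Finset.prod_nonneg fun i _ => hF0 _
  have hGcube : ∫ x, G x = (∫ s, F s) ^ j := by
    simpa [volume_pi] using MeasureTheory.integral_fintype_prod_eq_pow (ι := Fin j) F
  set M : Set (Fin j → ℝ) := {x | Monotone x} with hMdef
  set M' : Set (Fin j → ℝ) := {x | StrictMono x} with hM'def
  -- B σ
  set B : Equiv.Perm (Fin j) → Set (Fin j → ℝ) := fun σ => {x | StrictMono (x ∘ σ)} with hBdef
  have hBmeas : ∀ σ : Equiv.Perm (Fin j), MeasurableSet (B σ) := by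
    intro σ
    have : B σ = ⋂ (p : Fin j × Fin j) (_ : p.1 < p.2), {x : Fin j → ℝ | x (σ p.1) < x (σ p.2)} := by
      ext x
      simp only [hBdef, Set.mem_setOf_eq, Set.mem_iInter]
      constructor
      · intro h p hp; exact h hp
      · intro h a b hab; exact h (a, b) hab
    rw [this]
    exact MeasurableSet.iInter fun p => MeasurableSet.iInter fun _ =>
      measurableSet_lt (measurable_pi_apply _) (measurable_pi_apply _)
  have hM'meas : MeasurableSet M' := by
    have : M' = B 1 := by
      ext x; simp [hBdef, hM'def]
    rw [this]; exact hBmeas 1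
  have hMmeas : MeasurableSet M := by
    have : M = ⋂ (p : Fin j × Fin j) (_ : p.1 ≤ p.2), {x : Fin j → ℝ | x p.1 ≤ x p.2} := by
      ext x
      simp only [hMdef, Set.mem_setOf_eq, Set.mem_iInter]
      constructor
      · intro h p hp; exact h hp
      · intro h a b hab; exact h (a, b) hab
    rw [this]
    exact MeasurableSet.iInter fun p => MeasurableSet.iInter fun _ =>
      measurableSet_le (measurable_pi_apply _) (measurable_pi_apply _)
  -- null difference
  have hnull : volume (M \ M') = 0 := by
    have hsub : M \ M' ⊆ ⋃ p : Fin j × Fin j,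
        {x : Fin j → ℝ | p.1 ≠ p.2 ∧ x p.1 = x p.2} := by
      rintro x ⟨hxM, hxM'⟩
      simp only [hM'def, Set.mem_setOf_eq, StrictMono] at hxM'
      push_neg at hxM'
      obtain ⟨a, b, hab, hba⟩ := hxM'
      refine Set.mem_iUnion.2 ⟨(a, b), hab.ne, le_antisymm (hxM hab.le) ?_⟩
      simpa using hba
    refine measure_mono_null hsub (measure_iUnion_null fun p => ?_)
    rcases eq_or_ne p.1 p.2 with h | h
    · simp [h]
    · have heq : {x : Fin j → ℝ | p.1 ≠ p.2 ∧ x p.1 = x p.2} =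
          (LinearMap.ker ((LinearMap.proj p.1 : (Fin j → ℝ) →ₗ[ℝ] ℝ) - LinearMap.proj p.2) :
            Submodule ℝ (Fin j → ℝ)) := by
        ext x
        simp [h, LinearMap.mem_ker, sub_eq_zero]
      rw [heq]
      refine Measure.addHaar_submodule _ _ ?_
      intro htop
      have : Pi.single p.1 (1:ℝ) ∈ LinearMap.ker
          ((LinearMap.proj p.1 : (Fin j → ℝ) →ₗ[ℝ] ℝ) - LinearMap.proj p.2) := by
        rw [htop]; trivial
      simp [LinearMap.mem_ker, Pi.single_apply, h, h.symm] at this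
  have hMM' : M =ᵐ[volume] M' := by
    rw [ae_eq_set]
    constructor
    · exact hnull
    · have : M' \ M = ∅ := by
        ext x
        simp only [Set.mem_diff, Set.mem_empty_iff_false, iff_false, not_and, not_not]
        intro hx
        exact hx.monotone
      simp [this]
  -- each B σ has the same integral as M'
  have hBint : ∀ σ : Equiv.Perm (Fin j), ∫ x in B σ, G x = ∫ x in M', G x := by
    intro σ
    have hmp := MeasureTheory.volume_measurePreserving_piCongrLeft (fun _ : Fin j => ℝ) σ.symm
    have hemb := (MeasurableEquiv.piCongrLeft (fun _ : Fin j => ℝ) σ.symm).measurableEmbedding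
    have hT : ∀ (x : Fin j → ℝ) (k : Fin j),
        (MeasurableEquiv.piCongrLeft (fun _ : Fin j => ℝ) σ.symm) x k = x (σ k) := by
      intro x k
      have h1 := MeasurableEquiv.piCongrLeft_apply_apply σ.symm (β := fun _ : Fin j => ℝ) x (σ k)
      rwa [Equiv.symm_apply_apply] at h1
    have hpre : (MeasurableEquiv.piCongrLeft (fun _ : Fin j => ℝ) σ.symm) ⁻¹' M' = B σ := by
      ext x
      simp only [Set.mem_preimage, hM'def, Set.mem_setOf_eq, hBdef]
      constructor
      · intro h
        have : (fun k => x (σ k)) = (MeasurableEquiv.piCongrLeft (fun _ : Fin j => ℝ) σ.symm) x := by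
          ext k; rw [hT]
        intro a b hab
        simpa only [Function.comp_apply, ← hT] using h hab
      · intro h a b hab
        simpa only [hT, Function.comp_apply] using h hab
    have := hmp.setIntegral_preimage_emb hemb G M'
    rw [hpre] at this
    rw [← this]
    refine setIntegral_congr_fun (hBmeas σ) fun x _ => ?_
    simp only [hGdef]
    rw [show (fun i => F ((MeasurableEquiv.piCongrLeft (fun _ : Fin j => ℝ) σ.symm) x i)) =
      fun i => F (x (σ i)) from funext fun i => by rw [hT]]
    exact (Equiv.prod_comp σ fun i => F (x i)).symm
  -- pairwise disjoint
  have hdisj : Pairwise (Function.onFun Disjoint B) := by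
    intro σ τ hne
    rw [Function.onFun, Set.disjoint_left]
    intro x hxσ hxτ
    apply hne
    have hinj : Function.Injective x := by
      have hx : x = (x ∘ σ) ∘ ⇑σ.symm := funext fun i => by simp
      rw [hx]
      exact (hxσ.injective).comp σ.symm.injective
    have hrange : Set.range (x ∘ σ) = Set.range (x ∘ τ) := by
      rw [Set.range_comp, Set.range_comp, Equiv.range_eq_univ, Equiv.range_eq_univ]
    haveI : WellFoundedLT (Fin j) := Finite.to_wellFoundedLT
    have hfun : x ∘ σ = x ∘ τ := (StrictMono.range_inj hxσ hxτ).1 hrange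
    exact Equiv.coe_fn_injective (funext fun i => hinj (congrFun hfun i))
  calc (Nat.factorial j : ℝ) * ∫ x in M, G x
      = ∑ _σ : Equiv.Perm (Fin j), ∫ x in M', G x := by
        rw [Finset.sum_const, Finset.card_univ, Fintype.card_perm, Fintype.card_fin,
          nsmul_eq_mul, setIntegral_congr_set hMM']
    _ = ∑ σ : Equiv.Perm (Fin j), ∫ x in B σ, G x :=
        Finset.sum_congr rfl fun σ _ => (hBint σ).symm
    _ = ∫ x in ⋃ σ, B σ, G x :=
        (integral_iUnion_fintype hBmeas hdisj fun σ => hGint.integrableOn).symm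
    _ ≤ ∫ x, G x := setIntegral_le_integral hGint (ae_of_all _ hG0)
    _ = (∫ s, F s) ^ j := hGcube

/-- Auxiliary: the one-dimensional Cauchy–Schwarz bound. -/
theorem aux_cs_bound (c : ℝ → ℝ) (E : ℝ)
    (hc : ∀ s, 0 < s → 0 ≤ c s)
    (hmeas : Measurable c)
    (hint : IntegrableOn (fun s => (c s) ^ 2 / s) (Set.Ioi 0))
    (hE : (∫ s in Set.Ioi (0 : ℝ), (c s) ^ 2 / s) ≤ E)
    (sm sp : ℝ) (hsm : 0 < sm) (hsmsp : sm ≤ sp) :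
    (∫ s in Set.Icc sm sp, c s / s)
      ≤ E ^ ((1:ℝ)/2) * (Real.log (sp / sm)) ^ ((1:ℝ)/2) ∧
    IntegrableOn (fun s => c s / s) (Set.Icc sm sp) := by
  have hsub : Set.Icc sm sp ⊆ Set.Ioi (0:ℝ) := fun s hs => lt_of_lt_of_le hsm hs.1
  set μ₀ := (volume : Measure ℝ).restrict (Set.Icc sm sp) with hμ₀
  have hpos : ∀ᵐ s ∂μ₀, s ∈ Set.Icc sm sp :=
    ae_restrict_mem measurableSet_Icc
  have hL0 : 0 ≤ Real.log (sp / sm) :=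
    Real.log_nonneg (by rw [le_div_iff₀ hsm]; linarith)
  have hm1meas : Measurable fun s => c s / Real.sqrt s :=
    hmeas.div Real.continuous_sqrt.measurable
  have hm2meas : Measurable fun s : ℝ => 1 / Real.sqrt s :=
    measurable_const.div Real.continuous_sqrt.measurable
  have hsq1 : (fun s => (c s / Real.sqrt s) ^ 2) =ᵐ[μ₀] fun s => c s ^ 2 / s := by
    filter_upwards [hpos] with s hs
    have h0 : (0:ℝ) < s := hsub hs
    rw [div_pow, Real.sq_sqrt h0.le]
  have hsq2 : (fun s => (1 / Real.sqrt s) ^ 2) =ᵐ[μ₀] fun s => 1 / s := by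
    filter_upwards [hpos] with s hs
    have h0 : (0:ℝ) < s := hsub hs
    rw [div_pow, Real.sq_sqrt h0.le, one_pow]
  have hint1 : Integrable (fun s => c s ^ 2 / s) μ₀ := hint.mono_set hsub
  have hint2 : Integrable (fun s => 1 / s) μ₀ := by
    apply ContinuousOn.integrableOn_Icc
    exact continuousOn_const.div continuousOn_id (fun s hs => (hsub hs).out.ne')
  have hm1 : MemLp (fun s => c s / Real.sqrt s) 2 μ₀ := by
    rw [memLp_two_iff_integrable_sq hm1meas.aestronglyMeasurable]
    exact hint1.congr hsq1.symm
  have hm2 : MemLp (fun s : ℝ => 1 / Real.sqrt s) 2 μ₀ := by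
    rw [memLp_two_iff_integrable_sq hm2meas.aestronglyMeasurable]
    exact hint2.congr hsq2.symm
  have hnn1 : 0 ≤ᵐ[μ₀] fun s => c s / Real.sqrt s := by
    filter_upwards [hpos] with s hs
    exact div_nonneg (hc s (hsub hs)) (Real.sqrt_nonneg s)
  have hnn2 : 0 ≤ᵐ[μ₀] fun s : ℝ => 1 / Real.sqrt s := by
    filter_upwards with s using div_nonneg one_pos.le (Real.sqrt_nonneg s)
  have h2 : (ENNReal.ofReal (2:ℝ)) = 2 := by norm_num
  have hCS := integral_mul_le_Lp_mul_Lq_of_nonneg (μ := μ₀)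
    Real.HolderConjugate.two_two hnn1 hnn2 (by rwa [h2]) (by rwa [h2])
  simp only [Real.rpow_two] at hCS
  rw [integral_congr_ae hsq1, integral_congr_ae hsq2] at hCS
  have hIcc : (∫ s in Set.Icc sm sp, c s ^ 2 / s) ≤ E := by
    refine le_trans (setIntegral_mono_set hint ?_ (HasSubset.Subset.eventuallyLE hsub)) hE
    filter_upwards [ae_restrict_mem measurableSet_Ioi] with s hs
    exact div_nonneg (sq_nonneg _) (le_of_lt hs)
  have hlog : (∫ s in Set.Icc sm sp, (1:ℝ) / s) = Real.log (sp / sm) := by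
    rw [integral_Icc_eq_integral_Ioc, ← intervalIntegral.integral_of_le hsmsp,
      integral_one_div_of_pos hsm (lt_of_lt_of_le hsm hsmsp)]
  constructor
  · calc (∫ s in Set.Icc sm sp, c s / s)
        = ∫ s, (c s / Real.sqrt s) * (1 / Real.sqrt s) ∂μ₀ := by
          refine setIntegral_congr_fun measurableSet_Icc (fun s hs => ?_)
          have h0 : (0:ℝ) < s := hsub hs
          rw [div_mul_div_comm, mul_one, Real.mul_self_sqrt h0.le]
      _ ≤ (∫ s, c s ^ 2 / s ∂μ₀) ^ ((1:ℝ)/2)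
            * (∫ s, (1:ℝ) / s ∂μ₀) ^ ((1:ℝ)/2) := hCS
      _ ≤ E ^ ((1:ℝ)/2) * (Real.log (sp / sm)) ^ ((1:ℝ)/2) := by
          rw [hμ₀, hlog]
          gcongr
          exact integral_nonneg_of_ae <| by
            filter_upwards [hpos] with s hs
            exact div_nonneg (sq_nonneg _) (le_of_lt (hsub hs))
  · refine Integrable.mono' ((hint1.add hint2).div_const 2)
      ((hmeas.div measurable_id).aestronglyMeasurable) ?_
    filter_upwards [hpos] with s hs
    have h0 : (0:ℝ) < s := hsub hs
    have hcs := hc s h0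
    rw [Real.norm_of_nonneg (div_nonneg hcs h0.le)]
    simp only [Pi.add_apply]
    rw [← add_div, div_div, div_le_div_iff₀ h0 (by positivity)]
    nlinarith [sq_nonneg (c s - 1), h0.le]

/-- **Iterated envelope integral over the ordered simplex.**
If `∫₀^∞ c(s)²/s ds ≤ E`, then for `0 < s₋ ≤ s₊` and `j ≥ 1`,
`∫_{s₋ ≤ s₁ ≤ ⋯ ≤ s_j ≤ s₊} ∏ᵢ c(sᵢ)/sᵢ ≤ E^{j/2} (log(s₊/s₋))^{j/2} / j!`. -/
theorem stmt2 (c : ℝ → ℝ) (E : ℝ)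
    (hc : ∀ s, 0 < s → 0 ≤ c s)
    (hmeas : Measurable c)
    (hE0 : 0 ≤ E)
    (hint : IntegrableOn (fun s => (c s) ^ 2 / s) (Set.Ioi 0))
    (hE : (∫ s in Set.Ioi (0 : ℝ), (c s) ^ 2 / s) ≤ E)
    (sm sp : ℝ) (hsm : 0 < sm) (hsmsp : sm ≤ sp)
    (j : ℕ) (hj : 1 ≤ j) :
    (∫ x in {x : Fin j → ℝ | (∀ i, x i ∈ Set.Icc sm sp) ∧ Monotone x},
        ∏ i, c (x i) / x i)
      ≤ E ^ ((j : ℝ) / 2) * (Real.log (sp / sm)) ^ ((j : ℝ) / 2) / (Nat.factorial j) := by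
  classical
  obtain ⟨hCS, hFI⟩ := aux_cs_bound c E hc hmeas hint hE sm sp hsm hsmsp
  set L := Real.log (sp / sm) with hLdef
  have hL0 : 0 ≤ L := Real.log_nonneg (by rw [le_div_iff₀ hsm]; linarith)
  set F : ℝ → ℝ := (Set.Icc sm sp).indicator (fun s => c s / s) with hFdef
  have hFmeas : Measurable F := (hmeas.div measurable_id).indicator measurableSet_Icc
  have hF0 : ∀ s, 0 ≤ F s := by
    intro s
    rw [hFdef]
    by_cases hs : s ∈ Set.Icc sm sp
    · rw [Set.indicator_of_mem hs]
      exact div_nonneg (hc s (lt_of_lt_of_le hsm hs.1)) (le_of_lt (lt_of_lt_of_le hsm hs.1))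
    · rw [Set.indicator_of_notMem hs]
  have hFint : Integrable F := (integrable_indicator_iff measurableSet_Icc).2 hFI
  set I := ∫ s, F s with hIdef
  have hIeq : I = ∫ s in Set.Icc sm sp, c s / s := integral_indicator measurableSet_Icc
  have hI0 : 0 ≤ I := by
    rw [hIdef]
    exact integral_nonneg hF0
  -- main set
  set S : Set (Fin j → ℝ) := {x | (∀ i, x i ∈ Set.Icc sm sp) ∧ Monotone x} with hSdef
  have hSmeas : MeasurableSet S := by
    have : S = (⋂ i, (fun x : Fin j → ℝ => x i) ⁻¹' (Set.Icc sm sp)) ∩ {x | Monotone x} := by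
      ext x
      simp only [hSdef, Set.mem_setOf_eq, Set.mem_inter_iff, Set.mem_iInter, Set.mem_preimage]
    rw [this]
    refine MeasurableSet.inter (MeasurableSet.iInter fun i =>
      (measurable_pi_apply i) measurableSet_Icc) ?_
    have hM : {x : Fin j → ℝ | Monotone x} =
        ⋂ (p : Fin j × Fin j) (_ : p.1 ≤ p.2), {x : Fin j → ℝ | x p.1 ≤ x p.2} := by
      ext x
      simp only [Set.mem_setOf_eq, Set.mem_iInter]
      constructor
      · intro h p hp; exact h hp
      · intro h a b hab; exact h (a, b) hab
    rw [hM]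
    exact MeasurableSet.iInter fun p => MeasurableSet.iInter fun _ =>
      measurableSet_le (measurable_pi_apply _) (measurable_pi_apply _)
  -- integrand agrees with ∏ F on S
  have hcongr : (∫ x in S, ∏ i, c (x i) / x i) = ∫ x in S, ∏ i, F (x i) := by
    refine setIntegral_congr_fun hSmeas fun x hx => ?_
    refine Finset.prod_congr rfl fun i _ => ?_
    rw [hFdef, Set.indicator_of_mem (hx.1 i)]
  have hGint : Integrable (fun x : Fin j → ℝ => ∏ i, F (x i)) :=
    Integrable.fintype_prod (fun _ => hFint)
  have hmono : (∫ x in S, ∏ i, F (x i)) ≤ ∫ x in {x : Fin j → ℝ | Monotone x}, ∏ i, F (x i) := by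
    refine setIntegral_mono_set hGint.integrableOn ?_ ?_
    · filter_upwards with x using Finset.prod_nonneg fun i _ => hF0 _
    · exact HasSubset.Subset.eventuallyLE fun x hx => hx.2
  have hkey := aux_perm_bound j F hFmeas hF0 hFint
  -- combine
  have hfacpos : (0:ℝ) < (Nat.factorial j : ℝ) := by
    exact_mod_cast Nat.factorial_pos j
  have hIpow : I ^ j ≤ E ^ ((j:ℝ)/2) * L ^ ((j:ℝ)/2) := by
    have h1 : I ^ j ≤ (E ^ ((1:ℝ)/2) * L ^ ((1:ℝ)/2)) ^ j := by
      refine pow_le_pow_left₀ hI0 ?_ j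
      rw [hIeq]
      exact hCS
    refine le_trans h1 (le_of_eq ?_)
    rw [mul_pow, ← Real.rpow_natCast (E ^ ((1:ℝ)/2)) j, ← Real.rpow_natCast (L ^ ((1:ℝ)/2)) j,
      ← Real.rpow_mul hE0, ← Real.rpow_mul hL0]
    rw [show (1:ℝ)/2 * (j:ℕ) = (j:ℝ)/2 by push_cast; ring]
  calc (∫ x in S, ∏ i, c (x i) / x i)
      = ∫ x in S, ∏ i, F (x i) := hcongr
    _ ≤ ∫ x in {x : Fin j → ℝ | Monotone x}, ∏ i, F (x i) := hmono
    _ ≤ I ^ j / (Nat.factorial j : ℝ) := by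
        rw [le_div_iff₀ hfacpos, mul_comm]
        exact hkey
    _ ≤ E ^ ((j:ℝ)/2) * L ^ ((j:ℝ)/2) / (Nat.factorial j : ℝ) := by
        gcongr
end

section
/- Define ‖u‖_{A^m(s)} := Σ_{j=0}^m s^{j/2}‖∇_x^j u‖_{L^∞(ℝ²)} + s^{(j+1)/2}‖∇_x^{j+1}u‖_{L²(ℝ²)} for Schwartz u on ℝ² and s > 0. Then for every m ≥ 0 there is a constant C_m such that ‖uv‖_{A^m(s)} ≤ C_m ‖u‖_{A^m(s)} ‖v‖_{A^m(s)} for all Schwartz u, v. -/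
open MeasureTheory Set
open ENNReal

noncomputable section

/-- The scale-weighted Sobolev-type norm
`‖u‖_{A^m(s)} = ∑_{j=0}^m s^{j/2}‖∇^j u‖_{L^∞} + s^{(j+1)/2}‖∇^{j+1}u‖_{L²}`. -/
def Anorm (m : ℕ) (s : ℝ) (u : EuclideanSpace ℝ (Fin 2) → ℂ) : ℝ :=
  ∑ j ∈ Finset.range (m + 1),
    (s ^ ((j : ℝ) / 2) * (eLpNorm (fun x => ‖iteratedFDeriv ℝ j u x‖) ⊤ volume).toReal
      + s ^ (((j : ℝ) + 1) / 2)
          * (eLpNorm (fun x => ‖iteratedFDeriv ℝ (j + 1) u x‖) 2 volume).toReal)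

namespace Stmt5Aux

abbrev E2 := EuclideanSpace ℝ (Fin 2)

def TT (j : ℕ) (w : E2 → ℂ) : ℝ≥0∞ := eLpNorm (fun x => ‖iteratedFDeriv ℝ j w x‖) ⊤ volume
def SS (j : ℕ) (w : E2 → ℂ) : ℝ≥0∞ := eLpNorm (fun x => ‖iteratedFDeriv ℝ j w x‖) 2 volume

lemma contD {j : ℕ} {w : E2 → ℂ} (hw : ContDiff ℝ (⊤ : ℕ∞) w) :
    Continuous fun x => ‖iteratedFDeriv ℝ j w x‖ :=
  (hw.continuous_iteratedFDeriv (by exact_mod_cast le_top)).norm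

lemma mulTop (p : ℝ≥0∞) (a b : E2 → ℝ) (hb : AEStronglyMeasurable b volume) :
    eLpNorm (fun x => a x * b x) p volume ≤
      eLpNorm a ⊤ volume * eLpNorm b p volume := by
  rw [eLpNorm_exponent_top]
  exact eLpNorm_smul_le_eLpNorm_top_mul_eLpNorm p hb a

lemma mulTop' (p : ℝ≥0∞) (a b : E2 → ℝ) (ha : AEStronglyMeasurable a volume) :
    eLpNorm (fun x => a x * b x) p volume ≤
      eLpNorm a p volume * eLpNorm b ⊤ volume := by
  rw [eLpNorm_exponent_top]
  exact eLpNorm_smul_le_eLpNorm_mul_eLpNorm_top (𝕜 := ℝ) p b ha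


lemma split (p : ℝ≥0∞) (hp : 1 ≤ p) (k : ℕ) (f g : E2 → ℂ)
    (hf : ContDiff ℝ (⊤ : ℕ∞) f) (hg : ContDiff ℝ (⊤ : ℕ∞) g) :
    eLpNorm (fun x => ‖iteratedFDeriv ℝ k (fun y => f y * g y) x‖) p volume ≤
      ∑ i ∈ Finset.range (k + 1),
        (k.choose i : ℝ≥0∞) * eLpNorm (fun x =>
          ‖iteratedFDeriv ℝ i f x‖ * ‖iteratedFDeriv ℝ (k - i) g x‖) p volume := by
  have step1 : eLpNorm (fun x => ‖iteratedFDeriv ℝ k (fun y => f y * g y) x‖) p volume ≤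
      eLpNorm (fun x => ∑ i ∈ Finset.range (k + 1),
        (k.choose i : ℝ) * (‖iteratedFDeriv ℝ i f x‖ * ‖iteratedFDeriv ℝ (k - i) g x‖)) p
        volume := by
    apply eLpNorm_mono_real
    intro x
    rw [norm_norm]
    have := norm_iteratedFDeriv_mul_le (𝕜 := ℝ) hf hg x
      (by exact_mod_cast le_top : (k : WithTop ℕ∞) ≤ ((⊤ : ℕ∞) : WithTop ℕ∞))
    simpa [mul_assoc] using this
  refine step1.trans ?_
  have step2 : eLpNorm (fun x => ∑ i ∈ Finset.range (k + 1),
      (k.choose i : ℝ) * (‖iteratedFDeriv ℝ i f x‖ * ‖iteratedFDeriv ℝ (k - i) g x‖)) p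
      volume ≤ ∑ i ∈ Finset.range (k + 1), eLpNorm (fun x =>
        (k.choose i : ℝ) * (‖iteratedFDeriv ℝ i f x‖ * ‖iteratedFDeriv ℝ (k - i) g x‖)) p
        volume := by
    have := eLpNorm_sum_le (μ := volume) (p := p)
      (f := fun i x => (k.choose i : ℝ) *
        (‖iteratedFDeriv ℝ i f x‖ * ‖iteratedFDeriv ℝ (k - i) g x‖))
      (s := Finset.range (k + 1)) (fun i _ => by
        exact (((contD hf).mul (contD hg)).const_smul ((k.choose i : ℝ))).aestronglyMeasurable) hp
    simpa [Finset.sum_fn] using this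
  refine step2.trans ?_
  apply Finset.sum_le_sum
  intro i _
  have : (fun x => (k.choose i : ℝ) *
      (‖iteratedFDeriv ℝ i f x‖ * ‖iteratedFDeriv ℝ (k - i) g x‖)) =
      (k.choose i : ℝ) • (fun x =>
        ‖iteratedFDeriv ℝ i f x‖ * ‖iteratedFDeriv ℝ (k - i) g x‖) := rfl
  rw [this, eLpNorm_const_smul]
  simp


lemma TT_lt_top (j : ℕ) (u : SchwartzMap E2 ℂ) : TT j (⇑u) < ⊤ := by
  rw [TT, eLpNorm_exponent_top]
  refine eLpNormEssSup_lt_top_of_ae_bound (C := (SchwartzMap.seminorm ℝ 0 j) u) ?_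
  filter_upwards with x
  rw [norm_norm]
  exact u.norm_iteratedFDeriv_le_seminorm ℝ j x

lemma SS_lt_top (j : ℕ) (u : SchwartzMap E2 ℂ) : SS j (⇑u) < ⊤ := by
  set B : ℝ := (SchwartzMap.seminorm ℝ 0 j) u with hB
  have hBnn : 0 ≤ B := apply_nonneg _ _
  have hbound : ∀ x, ‖iteratedFDeriv ℝ j (⇑u) x‖ ≤ B := fun x =>
    u.norm_iteratedFDeriv_le_seminorm ℝ j x
  have hint : Integrable (fun x => ‖iteratedFDeriv ℝ j (⇑u) x‖) volume := by
    have := SchwartzMap.integrable_pow_mul_iteratedFDeriv (μ := volume) u 0 j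
    simpa using this
  have hmeas : AEStronglyMeasurable (fun x => ‖iteratedFDeriv ℝ j (⇑u) x‖) volume :=
    (contD (u.smooth ⊤)).aestronglyMeasurable
  have hsq : Integrable (fun x => ‖iteratedFDeriv ℝ j (⇑u) x‖ ^ 2) volume := by
    refine (hint.const_mul B).mono (hmeas.pow 2) ?_
    filter_upwards with x
    have h0 : (0:ℝ) ≤ ‖iteratedFDeriv ℝ j (⇑u) x‖ := norm_nonneg _
    have : ‖iteratedFDeriv ℝ j (⇑u) x‖ ^ 2 ≤ B * ‖iteratedFDeriv ℝ j (⇑u) x‖ := by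
      rw [sq]
      exact mul_le_mul_of_nonneg_right (hbound x) h0
    calc ‖‖iteratedFDeriv ℝ j (⇑u) x‖ ^ 2‖ = ‖iteratedFDeriv ℝ j (⇑u) x‖ ^ 2 := by
          rw [Real.norm_of_nonneg (by positivity)]
      _ ≤ B * ‖iteratedFDeriv ℝ j (⇑u) x‖ := this
      _ ≤ ‖B * ‖iteratedFDeriv ℝ j (⇑u) x‖‖ := le_abs_self _
  have : MemLp (fun x => ‖iteratedFDeriv ℝ j (⇑u) x‖) 2 volume :=
    (memLp_two_iff_integrable_sq hmeas).2 hsq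
  exact this.2


def AE (m : ℕ) (s : ℝ) (w : E2 → ℂ) : ℝ≥0∞ :=
  ∑ j ∈ Finset.range (m + 1),
    (ENNReal.ofReal (s ^ ((j : ℝ) / 2)) * TT j w
      + ENNReal.ofReal (s ^ (((j : ℝ) + 1) / 2)) * SS (j + 1) w)

lemma le_AE_T {m i : ℕ} (hi : i ≤ m) (s : ℝ) (w : E2 → ℂ) :
    ENNReal.ofReal (s ^ ((i : ℝ) / 2)) * TT i w ≤ AE m s w :=
  le_trans le_self_add
    (Finset.single_le_sum (f := fun (j : ℕ) => ENNReal.ofReal (s ^ ((j : ℝ) / 2)) * TT j w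
      + ENNReal.ofReal (s ^ (((j : ℝ) + 1) / 2)) * SS (j + 1) w)
      (fun _ _ => zero_le) (Finset.mem_range.2 (Nat.lt_succ_of_le hi)))

lemma le_AE_S {m i : ℕ} (hi : i ≤ m) (s : ℝ) (w : E2 → ℂ) :
    ENNReal.ofReal (s ^ (((i : ℝ) + 1) / 2)) * SS (i + 1) w ≤ AE m s w :=
  le_trans le_add_self
    (Finset.single_le_sum (f := fun (j : ℕ) => ENNReal.ofReal (s ^ ((j : ℝ) / 2)) * TT j w
      + ENNReal.ofReal (s ^ (((j : ℝ) + 1) / 2)) * SS (j + 1) w)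
      (fun _ _ => zero_le) (Finset.mem_range.2 (Nat.lt_succ_of_le hi)))

lemma weight_split {s : ℝ} (hs : 0 < s) {a b c : ℝ} (h : a = b + c) :
    ENNReal.ofReal (s ^ a) = ENNReal.ofReal (s ^ b) * ENNReal.ofReal (s ^ c) := by
  rw [← ENNReal.ofReal_mul (Real.rpow_nonneg hs.le _), ← Real.rpow_add hs, ← h]

lemma partA {m : ℕ} {s : ℝ} (hs : 0 < s) (u v : SchwartzMap E2 ℂ) {j : ℕ} (hj : j ≤ m) :
    ENNReal.ofReal (s ^ ((j : ℝ) / 2)) * TT j (fun x => u x * v x) ≤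
      2 ^ (m + 1) * (AE m s (⇑u) * AE m s (⇑v)) := by
  have h1 := split ⊤ le_top j (⇑u) (⇑v) (u.smooth ⊤) (v.smooth ⊤)
  calc ENNReal.ofReal (s ^ ((j : ℝ) / 2)) * TT j (fun x => u x * v x)
      ≤ ∑ i ∈ Finset.range (j + 1), ENNReal.ofReal (s ^ ((j : ℝ) / 2)) *
          ((j.choose i : ℝ≥0∞) * eLpNorm (fun x =>
            ‖iteratedFDeriv ℝ i (⇑u) x‖ * ‖iteratedFDeriv ℝ (j - i) (⇑v) x‖) ⊤ volume) := by
        rw [← Finset.mul_sum]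
        exact mul_le_mul_right h1 _
    _ ≤ ∑ i ∈ Finset.range (j + 1), (j.choose i : ℝ≥0∞) * (AE m s (⇑u) * AE m s (⇑v)) := by
        apply Finset.sum_le_sum
        intro i hi
        have hij : i ≤ j := Nat.lt_succ_iff.1 (Finset.mem_range.1 hi)
        have hcast : ((j - i : ℕ) : ℝ) = (j : ℝ) - i := Nat.cast_sub hij
        have hW : ENNReal.ofReal (s ^ ((j : ℝ) / 2)) =
            ENNReal.ofReal (s ^ ((i : ℝ) / 2)) *
              ENNReal.ofReal (s ^ (((j - i : ℕ) : ℝ) / 2)) := by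
          apply weight_split hs
          rw [hcast]; ring
        have hterm := mulTop ⊤ (fun x => ‖iteratedFDeriv ℝ i (⇑u) x‖)
          (fun x => ‖iteratedFDeriv ℝ (j - i) (⇑v) x‖)
          (contD (v.smooth ⊤)).aestronglyMeasurable
        calc ENNReal.ofReal (s ^ ((j : ℝ) / 2)) * ((j.choose i : ℝ≥0∞) *
              eLpNorm (fun x =>
                ‖iteratedFDeriv ℝ i (⇑u) x‖ * ‖iteratedFDeriv ℝ (j - i) (⇑v) x‖) ⊤ volume)
            ≤ ENNReal.ofReal (s ^ ((j : ℝ) / 2)) * ((j.choose i : ℝ≥0∞) *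
              (TT i (⇑u) * TT (j - i) (⇑v))) := by
              exact mul_le_mul_right (mul_le_mul_right hterm _) _
          _ = (j.choose i : ℝ≥0∞) * ((ENNReal.ofReal (s ^ ((i : ℝ) / 2)) * TT i (⇑u)) *
              (ENNReal.ofReal (s ^ (((j - i : ℕ) : ℝ) / 2)) * TT (j - i) (⇑v))) := by
              rw [hW]; ring
          _ ≤ (j.choose i : ℝ≥0∞) * (AE m s (⇑u) * AE m s (⇑v)) :=
              mul_le_mul_right (mul_le_mul'
                (le_AE_T (hij.trans hj) s (⇑u)) (le_AE_T ((Nat.sub_le j i).trans hj) s (⇑v))) _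
    _ = (∑ i ∈ Finset.range (j + 1), (j.choose i : ℝ≥0∞)) * (AE m s (⇑u) * AE m s (⇑v)) := by
        rw [Finset.sum_mul]
    _ ≤ 2 ^ (m + 1) * (AE m s (⇑u) * AE m s (⇑v)) := by
        apply mul_le_mul_left
        have : ∑ i ∈ Finset.range (j + 1), (j.choose i : ℝ≥0∞) = 2 ^ j := by
          rw [← Nat.cast_sum, Nat.sum_range_choose]
          simp
        rw [this]
        exact pow_le_pow_right₀ (by norm_num) (by omega)
        

lemma partB {m : ℕ} {s : ℝ} (hs : 0 < s) (u v : SchwartzMap E2 ℂ) {j : ℕ} (hj : j ≤ m) :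
    ENNReal.ofReal (s ^ (((j : ℝ) + 1) / 2)) * SS (j + 1) (fun x => u x * v x) ≤
      2 ^ (m + 1) * (AE m s (⇑u) * AE m s (⇑v)) := by
  have h1 := split 2 (by norm_num) (j + 1) (⇑u) (⇑v) (u.smooth ⊤) (v.smooth ⊤)
  calc ENNReal.ofReal (s ^ (((j : ℝ) + 1) / 2)) * SS (j + 1) (fun x => u x * v x)
      ≤ ∑ i ∈ Finset.range (j + 2), ENNReal.ofReal (s ^ (((j : ℝ) + 1) / 2)) *
          (((j + 1).choose i : ℝ≥0∞) * eLpNorm (fun x =>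
            ‖iteratedFDeriv ℝ i (⇑u) x‖ * ‖iteratedFDeriv ℝ (j + 1 - i) (⇑v) x‖) 2 volume) := by
        rw [← Finset.mul_sum]
        exact mul_le_mul_right h1 _
    _ ≤ ∑ i ∈ Finset.range (j + 2), ((j + 1).choose i : ℝ≥0∞) *
          (AE m s (⇑u) * AE m s (⇑v)) := by
        apply Finset.sum_le_sum
        intro i hi
        have hij : i ≤ j + 1 := Nat.lt_succ_iff.1 (Finset.mem_range.1 hi)
        rcases Nat.lt_succ_iff_lt_or_eq.1 (Finset.mem_range.1 hi) with hlt | heq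
        · -- i ≤ j : put u in L∞, v in L²
          have hij' : i ≤ j := Nat.lt_succ_iff.1 hlt
          have hsub : j + 1 - i = (j - i) + 1 := by omega
          have hcast : ((j - i : ℕ) : ℝ) = (j : ℝ) - i := Nat.cast_sub hij'
          have hW : ENNReal.ofReal (s ^ (((j : ℝ) + 1) / 2)) =
              ENNReal.ofReal (s ^ ((i : ℝ) / 2)) *
                ENNReal.ofReal (s ^ ((((j - i : ℕ) : ℝ) + 1) / 2)) := by
            apply weight_split hs
            rw [hcast]; ring
          have hterm := mulTop 2 (fun x => ‖iteratedFDeriv ℝ i (⇑u) x‖)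
            (fun x => ‖iteratedFDeriv ℝ (j + 1 - i) (⇑v) x‖)
            (contD (v.smooth ⊤)).aestronglyMeasurable
          calc ENNReal.ofReal (s ^ (((j : ℝ) + 1) / 2)) * (((j + 1).choose i : ℝ≥0∞) *
                eLpNorm (fun x => ‖iteratedFDeriv ℝ i (⇑u) x‖ *
                  ‖iteratedFDeriv ℝ (j + 1 - i) (⇑v) x‖) 2 volume)
              ≤ ENNReal.ofReal (s ^ (((j : ℝ) + 1) / 2)) * (((j + 1).choose i : ℝ≥0∞) *
                (TT i (⇑u) * SS (j + 1 - i) (⇑v))) :=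
                mul_le_mul_right (mul_le_mul_right hterm _) _
            _ = ((j + 1).choose i : ℝ≥0∞) *
                ((ENNReal.ofReal (s ^ ((i : ℝ) / 2)) * TT i (⇑u)) *
                  (ENNReal.ofReal (s ^ ((((j - i : ℕ) : ℝ) + 1) / 2)) *
                    SS ((j - i) + 1) (⇑v))) := by
                rw [hsub, hW]; ring
            _ ≤ ((j + 1).choose i : ℝ≥0∞) * (AE m s (⇑u) * AE m s (⇑v)) :=
                mul_le_mul_right (mul_le_mul'
                  (le_AE_T (hij'.trans hj) s (⇑u))
                  (le_AE_S ((Nat.sub_le j i).trans hj) s (⇑v))) _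
        · -- i = j + 1 : put u in L², v in L∞
          subst heq
          have hsub : j + 1 - (j + 1) = 0 := by omega
          have h0 : ENNReal.ofReal (s ^ (((0 : ℕ) : ℝ) / 2)) = 1 := by
            norm_num
          have hterm := mulTop' 2 (fun x => ‖iteratedFDeriv ℝ (j + 1) (⇑u) x‖)
            (fun x => ‖iteratedFDeriv ℝ (j + 1 - (j + 1)) (⇑v) x‖)
            (contD (u.smooth ⊤)).aestronglyMeasurable
          calc ENNReal.ofReal (s ^ (((j : ℝ) + 1) / 2)) * (((j + 1).choose (j + 1) : ℝ≥0∞) *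
                eLpNorm (fun x => ‖iteratedFDeriv ℝ (j + 1) (⇑u) x‖ *
                  ‖iteratedFDeriv ℝ (j + 1 - (j + 1)) (⇑v) x‖) 2 volume)
              ≤ ENNReal.ofReal (s ^ (((j : ℝ) + 1) / 2)) * (((j + 1).choose (j + 1) : ℝ≥0∞) *
                (SS (j + 1) (⇑u) * TT (j + 1 - (j + 1)) (⇑v))) :=
                mul_le_mul_right (mul_le_mul_right hterm _) _
            _ = ((j + 1).choose (j + 1) : ℝ≥0∞) *
                ((ENNReal.ofReal (s ^ (((j : ℝ) + 1) / 2)) * SS (j + 1) (⇑u)) *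
                  (ENNReal.ofReal (s ^ (((0 : ℕ) : ℝ) / 2)) * TT 0 (⇑v))) := by
                rw [hsub, h0]; ring
            _ ≤ ((j + 1).choose (j + 1) : ℝ≥0∞) * (AE m s (⇑u) * AE m s (⇑v)) :=
                mul_le_mul_right (mul_le_mul'
                  (le_AE_S hj s (⇑u))
                  (le_AE_T (Nat.zero_le m) s (⇑v))) _
    _ = (∑ i ∈ Finset.range (j + 2), ((j + 1).choose i : ℝ≥0∞)) *
          (AE m s (⇑u) * AE m s (⇑v)) := by rw [Finset.sum_mul]
    _ ≤ 2 ^ (m + 1) * (AE m s (⇑u) * AE m s (⇑v)) := by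
        apply mul_le_mul_left
        have : ∑ i ∈ Finset.range (j + 2), ((j + 1).choose i : ℝ≥0∞) = 2 ^ (j + 1) := by
          rw [← Nat.cast_sum, Nat.sum_range_choose]
          simp
        rw [this]
        exact pow_le_pow_right₀ (by norm_num) (by omega)


lemma main {m : ℕ} {s : ℝ} (hs : 0 < s) (u v : SchwartzMap E2 ℂ) :
    AE m s (fun x => u x * v x) ≤
      ((m : ℝ≥0∞) + 1) * 2 ^ (m + 2) * (AE m s (⇑u) * AE m s (⇑v)) := by
  rw [AE]
  calc ∑ j ∈ Finset.range (m + 1),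
      (ENNReal.ofReal (s ^ ((j : ℝ) / 2)) * TT j (fun x => u x * v x)
        + ENNReal.ofReal (s ^ (((j : ℝ) + 1) / 2)) * SS (j + 1) (fun x => u x * v x))
      ≤ ∑ _j ∈ Finset.range (m + 1), 2 ^ (m + 2) * (AE m s (⇑u) * AE m s (⇑v)) := by
        apply Finset.sum_le_sum
        intro j hj
        have hj' : j ≤ m := Nat.lt_succ_iff.1 (Finset.mem_range.1 hj)
        have := add_le_add (partA hs u v hj') (partB hs u v hj')
        refine this.trans (le_of_eq ?_)
        rw [← two_mul, ← mul_assoc, ← pow_succ']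
    _ = ((m : ℝ≥0∞) + 1) * 2 ^ (m + 2) * (AE m s (⇑u) * AE m s (⇑v)) := by
        rw [Finset.sum_const, Finset.card_range, nsmul_eq_mul, ← mul_assoc]
        norm_cast

lemma AE_lt_top (m : ℕ) (s : ℝ) (u : SchwartzMap E2 ℂ) : AE m s (⇑u) < ⊤ := by
  rw [AE]
  refine ENNReal.sum_lt_top.2 fun j _ => ?_
  exact ENNReal.add_lt_top.2
    ⟨ENNReal.mul_lt_top ENNReal.ofReal_lt_top (TT_lt_top j u),
      ENNReal.mul_lt_top ENNReal.ofReal_lt_top (SS_lt_top (j + 1) u)⟩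

lemma Anorm_eq_toReal (m : ℕ) {s : ℝ} (hs : 0 < s) (w : E2 → ℂ)
    (hT : ∀ j, j ≤ m → TT j w < ⊤) (hS : ∀ j, j ≤ m → SS (j + 1) w < ⊤) :
    Anorm m s w = (AE m s w).toReal := by
  rw [Anorm, AE, ENNReal.toReal_sum]
  · refine Finset.sum_congr rfl fun j hj => ?_
    have hj' : j ≤ m := Nat.lt_succ_iff.1 (Finset.mem_range.1 hj)
    rw [ENNReal.toReal_add
        (ENNReal.mul_lt_top ENNReal.ofReal_lt_top (hT j hj')).ne
        (ENNReal.mul_lt_top ENNReal.ofReal_lt_top (hS j hj')).ne,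
      ENNReal.toReal_mul, ENNReal.toReal_mul,
      ENNReal.toReal_ofReal (Real.rpow_nonneg hs.le _),
      ENNReal.toReal_ofReal (Real.rpow_nonneg hs.le _)]
    rfl
  · intro j hj
    have hj' : j ≤ m := Nat.lt_succ_iff.1 (Finset.mem_range.1 hj)
    exact (ENNReal.add_lt_top.2
      ⟨ENNReal.mul_lt_top ENNReal.ofReal_lt_top (hT j hj'),
        ENNReal.mul_lt_top ENNReal.ofReal_lt_top (hS j hj')⟩).ne

end Stmt5Aux

open Stmt5Aux

/-- **Algebra property of the `A^m(s)` norms:** for every `m` there is `C_m` with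
`‖uv‖_{A^m(s)} ≤ C_m ‖u‖_{A^m(s)} ‖v‖_{A^m(s)}` for all Schwartz `u, v` and all `s > 0`. -/
theorem stmt5 (m : ℕ) :
    ∃ C > 0, ∀ s : ℝ, 0 < s →
      ∀ u v : SchwartzMap (EuclideanSpace ℝ (Fin 2)) ℂ,
        Anorm m s (fun x => u x * v x) ≤ C * Anorm m s (⇑u) * Anorm m s (⇑v) := by
  refine ⟨((m : ℝ) + 1) * 2 ^ (m + 2), by positivity, fun s hs u v => ?_⟩
  have hP : AE m s (⇑u) * AE m s (⇑v) < ⊤ :=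
    ENNReal.mul_lt_top (AE_lt_top m s u) (AE_lt_top m s v)
  have hCP : ((m : ℝ≥0∞) + 1) * 2 ^ (m + 2) * (AE m s (⇑u) * AE m s (⇑v)) < ⊤ :=
    ENNReal.mul_lt_top (ENNReal.mul_lt_top (ENNReal.add_lt_top.2 ⟨ENNReal.natCast_lt_top m, ENNReal.one_lt_top⟩) (ENNReal.pow_lt_top ENNReal.ofNat_lt_top)) hP
  have hwne : ∀ a : ℝ, ENNReal.ofReal (s ^ a) ≠ 0 :=
    fun a => (ENNReal.ofReal_pos.2 (Real.rpow_pos_of_pos hs a)).ne'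
  have hT : ∀ j, j ≤ m → TT j (fun x => u x * v x) < ⊤ := by
    intro j hj
    by_contra h
    have h' : TT j (fun x => u x * v x) = ⊤ := by simpa using h
    have := partA (m := m) hs u v hj
    rw [h', ENNReal.mul_top (hwne _)] at this
    exact (ENNReal.mul_lt_top (ENNReal.pow_lt_top ENNReal.ofNat_lt_top) hP).ne
      (top_le_iff.1 this)
  have hS : ∀ j, j ≤ m → SS (j + 1) (fun x => u x * v x) < ⊤ := by
    intro j hj
    by_contra h
    have h' : SS (j + 1) (fun x => u x * v x) = ⊤ := by simpa using h
    have := partB (m := m) hs u v hj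
    rw [h', ENNReal.mul_top (hwne _)] at this
    exact (ENNReal.mul_lt_top (ENNReal.pow_lt_top ENNReal.ofNat_lt_top) hP).ne
      (top_le_iff.1 this)
  have e1 : Anorm m s (fun x => u x * v x) = (AE m s (fun x => u x * v x)).toReal :=
    Anorm_eq_toReal m hs _ hT hS
  have e2 : Anorm m s (⇑u) = (AE m s (⇑u)).toReal :=
    Anorm_eq_toReal m hs _ (fun j _ => TT_lt_top j u) (fun j _ => SS_lt_top (j + 1) u)
  have e3 : Anorm m s (⇑v) = (AE m s (⇑v)).toReal :=
    Anorm_eq_toReal m hs _ (fun j _ => TT_lt_top j v) (fun j _ => SS_lt_top (j + 1) v)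
  rw [e1, e2, e3]
  have := ENNReal.toReal_mono hCP.ne (main hs u v)
  refine this.trans (le_of_eq ?_)
  simp only [ENNReal.toReal_mul, ENNReal.toReal_pow, ENNReal.toReal_add
      (ENNReal.natCast_lt_top m).ne ENNReal.one_ne_top,
    ENNReal.toReal_natCast, ENNReal.toReal_one, ENNReal.toReal_ofNat]
  ring


end
end

section
/- Besicovitch-type covering lemma: Let (Y,ν) be a measure space with ν(Y) ≤ A, let I be an interval, let M ≥ 1 be an integer, and for each y ∈ Y let 𝒥_y be a measurable family of at most M intervals partitioning I. Then there exists a partition 𝒥 of I into at most M intervals such that for each J ∈ 𝒥, ∫_Y #{K ∈ 𝒥_y : J ∩ K ≠ ∅} dν(y) ≤ 3A. -/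
open MeasureTheory Set
open scoped ENNReal Classical

namespace S7
set_option linter.unusedSectionVars false

variable {Y : Type*} [MeasurableSpace Y] {M : ℕ}

/-- The predicate: `T y i` is a nonempty interval lying strictly above `α`
and meeting the region strictly below `β`. -/
def Qp (T : Y → Fin M → Set ℝ) (α β : EReal) (y : Y) (i : Fin M) : Prop :=
  (T y i).Nonempty ∧ (∀ x ∈ T y i, α < (x : EReal)) ∧ (∃ x ∈ T y i, (x : EReal) < β)

noncomputable def wf (T : Y → Fin M → Set ℝ) (α β : EReal) (y : Y) : ℕ :=
  (Finset.univ.filter (Qp T α β y)).card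

noncomputable def Wf (T : Y → Fin M → Set ℝ) (ν : Measure Y) (α β : EReal) : ℝ≥0∞ :=
  ∫⁻ y, (wf T α β y : ℝ≥0∞) ∂ν

variable {T : Y → Fin M → Set ℝ}

lemma wf_le_M (α β : EReal) (y : Y) : wf T α β y ≤ M := by
  classical
  calc (Finset.univ.filter (Qp T α β y)).card ≤ Finset.univ.card := Finset.card_filter_le _ _
  _ = M := Finset.card_univ.trans (Fintype.card_fin M)

lemma wf_zero {α β : EReal} (h : β ≤ α) (y : Y) : wf T α β y = 0 := by
  classical
  rw [wf, Finset.card_eq_zero, Finset.filter_eq_empty_iff]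
  rintro i - ⟨-, hgt, x, hx, hlt⟩
  exact absurd (hgt x hx) (not_lt.2 (le_of_lt (lt_of_lt_of_le hlt h)))

lemma wf_mono_left {α α' : EReal} (h : α ≤ α') (β : EReal) (y : Y) :
    wf T α' β y ≤ wf T α β y := by
  classical
  apply Finset.card_le_card
  intro i hi
  rw [Finset.mem_filter] at hi ⊢
  exact ⟨hi.1, hi.2.1, fun x hx => lt_of_le_of_lt h (hi.2.2.1 x hx), hi.2.2.2⟩

lemma wf_mono_right {β β' : EReal} (h : β ≤ β') (α : EReal) (y : Y) :
    wf T α β y ≤ wf T α β' y := by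
  classical
  apply Finset.card_le_card
  intro i hi
  rw [Finset.mem_filter] at hi ⊢
  obtain ⟨h1, h2, x, hx, hlt⟩ := hi.2
  exact ⟨hi.1, h1, h2, x, hx, lt_of_lt_of_le hlt h⟩

lemma wf_superadd (hTdisj : ∀ y, Pairwise fun i i' => Disjoint (T y i) (T y i'))
    {α β γ : EReal} (hab : α ≤ β) (hbc : β ≤ γ) (y : Y) :
    wf T α β y + wf T β γ y ≤ wf T α γ y := by
  classical
  have hdisj : Disjoint (Finset.univ.filter (Qp T α β y))
      (Finset.univ.filter (Qp T β γ y)) := by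
    rw [Finset.disjoint_left]
    rintro i hi hi'
    rw [Finset.mem_filter] at hi hi'
    obtain ⟨-, -, x, hx, hlt⟩ := hi.2
    exact absurd (hi'.2.2.1 x hx) (not_lt.2 (le_of_lt hlt))
  rw [wf, wf, wf, ← Finset.card_union_of_disjoint hdisj]
  apply Finset.card_le_card
  intro i hi
  rw [Finset.mem_union, Finset.mem_filter, Finset.mem_filter] at hi
  rw [Finset.mem_filter]
  rcases hi with ⟨h0, h1, h2, x, hx, hlt⟩ | ⟨h0, h1, h2, x, hx, hlt⟩
  · exact ⟨h0, h1, h2, x, hx, lt_of_lt_of_le hlt hbc⟩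
  · exact ⟨h0, h1, fun z hz => lt_of_le_of_lt hab (h2 z hz), x, hx, hlt⟩

/-- Two distinct pieces cannot both lie strictly above `α` and have points
below `e n` for every `n`, where `e n ↓ α`. -/
lemma pieces_eq (hTdisj : ∀ y, Pairwise fun i i' => Disjoint (T y i) (T y i'))
    (hTint : ∀ y i, (T y i).OrdConnected) {α : EReal} {e : ℕ → ℝ}
    (happrox : ∀ z : ℝ, α < (z : EReal) → ∃ n, e n ≤ z) {y : Y} {i₁ i₂ : Fin M}
    (h₁ : ∀ x ∈ T y i₁, α < (x : EReal)) (h₂ : ∀ x ∈ T y i₂, α < (x : EReal))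
    (hl₁ : ∀ n, ∃ x ∈ T y i₁, x < e n) (hl₂ : ∀ n, ∃ x ∈ T y i₂, x < e n) :
    i₁ = i₂ := by
  by_contra hne
  obtain ⟨z₁, hz₁, -⟩ := hl₁ 0
  obtain ⟨n₁, hn₁⟩ := happrox z₁ (h₁ z₁ hz₁)
  obtain ⟨x₂, hx₂, hx₂lt⟩ := hl₂ n₁
  obtain ⟨n₂, hn₂⟩ := happrox x₂ (h₂ x₂ hx₂)
  obtain ⟨x₁, hx₁, hx₁lt⟩ := hl₁ n₂
  have hx₂mem : x₂ ∈ T y i₁ := by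
    have := (hTint y i₁).out hx₁ hz₁
    exact this ⟨le_of_lt (lt_of_lt_of_le hx₁lt hn₂), le_of_lt (lt_of_lt_of_le hx₂lt hn₁)⟩
  exact (Set.disjoint_left.1 (hTdisj y hne)) hx₂mem hx₂

lemma boundary_card_le_one (hTdisj : ∀ y, Pairwise fun i i' => Disjoint (T y i) (T y i'))
    (r : ℝ) (y : Y) :
    (Finset.univ.filter (fun i : Fin M => r ∈ T y i)).card ≤ 1 := by
  classical
  apply Finset.card_le_one.2
  intro i hi j hj
  rw [Finset.mem_filter] at hi hj
  by_contra hne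
  exact (Set.disjoint_left.1 (hTdisj y hne)) hi.2 hj.2

/-- Pointwise: the number of pieces meeting `I ∩ [b, b')` is at most
`wf b b'` plus a boundary term. -/
lemma count_le (hTint : ∀ y i, (T y i).OrdConnected) (I : Set ℝ) (b b' : EReal) (y : Y) :
    (Finset.univ.filter fun i : Fin M =>
        ((I ∩ {x : ℝ | b ≤ (x : EReal) ∧ (x : EReal) < b'}) ∩ T y i).Nonempty).card ≤
      wf T b b' y +
        (Finset.univ.filter (fun i : Fin M => b.toReal ∈ T y i)).card := by
  classical
  rw [wf]
  refine le_trans (Finset.card_le_card ?_) (Finset.card_union_le _ _)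
  intro i hi
  rw [Finset.mem_filter] at hi
  obtain ⟨z, ⟨⟨hzI, hzb, hzb'⟩, hzT⟩⟩ := hi.2
  rw [Finset.mem_union, Finset.mem_filter, Finset.mem_filter]
  by_cases hall : ∀ x ∈ T y i, b < (x : EReal)
  · exact Or.inl ⟨hi.1, ⟨z, hzT⟩, hall, z, hzT, hzb'⟩
  · push_neg at hall
    obtain ⟨x, hx, hxb⟩ := hall
    right
    refine ⟨hi.1, ?_⟩
    have hbbot : b ≠ ⊥ := fun h => by simp [h] at hxb
    have hbtop : b ≠ ⊤ := fun h => by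
      rw [h] at hzb; exact absurd (lt_of_le_of_lt hzb hzb') (by simp)
    lift b to ℝ using ⟨hbtop, hbbot⟩
    rw [EReal.toReal_coe]
    have hxr : x ≤ b := by exact_mod_cast hxb
    have hrz : b ≤ z := by exact_mod_cast hzb
    exact (hTint y i).out hx hzT ⟨hxr, hrz⟩

/-! ### Measurability -/

section Meas

variable (T)

def Vset (i : Fin M) (r : ℝ) : Set Y := {y | r ∈ T y i}

def NOQ (i : Fin M) : Set Y := {y | ∀ q : ℚ, (q : ℝ) ∉ T y i}

noncomputable def gE (j : Fin M) (y : Y) : EReal :=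
  ⨆ q : ℚ, if (q : ℝ) ∈ T y j then ((q : ℝ) : EReal) else ⊥

def A1 (I : Set ℝ) (i : Fin M) (b : ℝ) : Set Y :=
  (⋃ q : ℚ, ⋃ _ : (q : ℝ) < b, Vset T i q) ∪
    (⋃ j : Fin M, NOQ T i ∩ {y | (gE T j y).toReal ∈ T y i ∧ (gE T j y).toReal < b}) ∪
    (NOQ T i ∩ {y | sInf I ∈ T y i} ∩ {y | sInf I < b})

variable {T}
variable (hTmeas : ∀ i : Fin M, MeasurableSet {p : Y × ℝ | p.2 ∈ T p.1 i})
include hTmeas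

lemma measurable_vset (i : Fin M) (r : ℝ) : MeasurableSet (Vset T i r) := by
  have : Vset T i r = (fun y => (y, r)) ⁻¹' {p : Y × ℝ | p.2 ∈ T p.1 i} := rfl
  rw [this]
  exact (measurable_id.prodMk measurable_const) (hTmeas i)

lemma measurable_noq (i : Fin M) : MeasurableSet (NOQ T i) := by
  have : NOQ T i = ⋂ q : ℚ, (Vset T i q)ᶜ := by
    ext y; simp [NOQ, Vset]
  rw [this]
  exact MeasurableSet.iInter fun q => (measurable_vset hTmeas i q).compl

lemma measurable_gE (j : Fin M) : Measurable (gE T j) := by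
  apply Measurable.iSup
  intro q
  exact Measurable.ite (measurable_vset hTmeas j q) measurable_const measurable_const

lemma measurable_memg (i j : Fin M) : MeasurableSet {y | (gE T j y).toReal ∈ T y i} := by
  have : {y | (gE T j y).toReal ∈ T y i} =
      (fun y => (y, (gE T j y).toReal)) ⁻¹' {p : Y × ℝ | p.2 ∈ T p.1 i} := rfl
  rw [this]
  exact (measurable_id.prodMk (measurable_gE hTmeas j).ereal_toReal) (hTmeas i)

lemma measurable_A1 (I : Set ℝ) (i : Fin M) (b : ℝ) : MeasurableSet (A1 T I i b) := by
  apply MeasurableSet.union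
  apply MeasurableSet.union
  · exact MeasurableSet.iUnion fun q => MeasurableSet.iUnion fun _ =>
      measurable_vset hTmeas i q
  · refine MeasurableSet.iUnion fun j => (measurable_noq hTmeas i).inter ?_
    have : {y : Y | (gE T j y).toReal ∈ T y i ∧ (gE T j y).toReal < b} =
        {y | (gE T j y).toReal ∈ T y i} ∩ ((fun y => (gE T j y).toReal) ⁻¹' Iio b) := rfl
    rw [this]
    exact (measurable_memg hTmeas i j).inter
      ((measurable_gE hTmeas j).ereal_toReal measurableSet_Iio)
  · refine MeasurableSet.inter (MeasurableSet.inter (measurable_noq hTmeas i) ?_) ?_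
    · have : {y : Y | sInf I ∈ T y i} = Vset T i (sInf I) := rfl
      rw [this]; exact measurable_vset hTmeas i _
    · by_cases h : sInf I < b
      · simp only [h]; exact .univ
      · simp only [h]; exact .empty

omit hTmeas in
/-- The key description lemma. -/
lemma A1_eq {I : Set ℝ} (hTcover : ∀ y, (⋃ i, T y i) = I)
    (hTdisj : ∀ y, Pairwise fun i i' => Disjoint (T y i) (T y i'))
    (hTint : ∀ y i, (T y i).OrdConnected) (hI : I.OrdConnected) (i : Fin M) (b : ℝ) :
    A1 T I i b = {y | ∃ x ∈ T y i, x < b} := by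
  ext y
  simp only [A1, mem_union, mem_iUnion, mem_inter_iff, mem_setOf_eq, Vset]
  constructor
  · rintro ((⟨q, hqb, hq⟩ | ⟨j, hnoq, hmem, hlt⟩) | ⟨⟨hnoq, hmem⟩, hlt⟩)
    · exact ⟨q, hq, hqb⟩
    · exact ⟨_, hmem, hlt⟩
    · exact ⟨_, hmem, hlt⟩
  · rintro ⟨x, hx, hxb⟩
    by_cases hq : ∃ q : ℚ, (q : ℝ) ∈ T y i ∧ (q : ℝ) < b
    · obtain ⟨q, h1, h2⟩ := hq
      exact Or.inl (Or.inl ⟨q, h2, h1⟩)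
    · push_neg at hq
      have hnoq : ∀ q : ℚ, (q : ℝ) ∉ T y i := by
        intro q hqT
        have hbq : b ≤ q := hq q hqT
        obtain ⟨q', hq'1, hq'2⟩ := exists_rat_btwn hxb
        have hmem : (q' : ℝ) ∈ T y i :=
          (hTint y i).out hx hqT ⟨le_of_lt hq'1, le_of_lt (lt_of_lt_of_le hq'2 hbq)⟩
        exact absurd hq'2 (not_lt.2 (hq q' hmem))
      have hxI : x ∈ I := by
        rw [← hTcover y]; exact mem_iUnion.2 ⟨i, hx⟩
      by_cases hbelow : ∃ w ∈ I, w < x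
      · obtain ⟨w, hwI, hwx⟩ := hbelow
        have hsel : ∀ n : ℕ, ∃ q : ℚ, (q : ℝ) ∈ I ∧ x - 1 / (n + 1) < q ∧ (q : ℝ) < x := by
          intro n
          have hpos : (0 : ℝ) < 1 / ((n : ℝ) + 1) := by positivity
          have hltx : max w (x - 1 / ((n : ℝ) + 1)) < x := max_lt hwx (by linarith)
          obtain ⟨q, h1, h2⟩ := exists_rat_btwn hltx
          refine ⟨q, ?_, lt_of_le_of_lt (le_max_right _ _) h1, h2⟩
          exact hI.out hwI hxI ⟨le_of_lt (lt_of_le_of_lt (le_max_left _ _) h1), le_of_lt h2⟩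
        choose q hqI hql hqx using hsel
        have hpc : ∀ n : ℕ, ∃ j : Fin M, (q n : ℝ) ∈ T y j := by
          intro n
          have h := hqI n; rw [← hTcover y] at h
          exact mem_iUnion.1 h
        choose jn hjn using hpc
        obtain ⟨j, hjfib⟩ := Finite.exists_infinite_fiber jn
        have hfib : (jn ⁻¹' {j}).Infinite := Set.infinite_coe_iff.1 hjfib
        obtain ⟨n₀, hn₀⟩ := hfib.nonempty
        have hn₀' : jn n₀ = j := hn₀
        have hij : i ≠ j := fun he =>
          hnoq (q n₀) (by rw [he, ← hn₀']; exact hjn n₀)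
        have hjlt : ∀ z ∈ T y j, z < x := by
          intro z hz
          by_contra hzx
          push_neg at hzx
          have hxj : x ∈ T y j :=
            (hTint y j).out (hn₀' ▸ hjn n₀) hz ⟨le_of_lt (hqx n₀), hzx⟩
          exact (Set.disjoint_left.1 (hTdisj y hij)) hx hxj
        have hgE : gE T j y = (x : EReal) := by
          apply le_antisymm
          · apply iSup_le
            intro q'
            by_cases hq' : (q' : ℝ) ∈ T y j
            · simp only [hq', if_true]
              exact_mod_cast le_of_lt (hjlt q' hq')
            · simp [hq']
          · apply le_of_forall_lt
            intro c hc
            obtain ⟨r, hcr, hrx⟩ := EReal.exists_between_coe_real hc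
            have hrx' : r < x := by exact_mod_cast hrx
            obtain ⟨m, hm⟩ := exists_nat_one_div_lt (by linarith : (0 : ℝ) < x - r)
            obtain ⟨n, hn, hmn⟩ := hfib.exists_gt m
            have hjn' : (q n : ℝ) ∈ T y j := by
              have hj : jn n = j := hn
              exact hj ▸ hjn n
            have h1 : x - 1 / ((n : ℝ) + 1) < q n := hql n
            have hle : 1 / ((n : ℝ) + 1) ≤ 1 / ((m : ℝ) + 1) := by
              apply one_div_le_one_div_of_le
              · positivity
              · exact_mod_cast by omega
            have hrq : r < q n := by linarith
            have hs : ((q n : ℝ) : EReal) ≤ gE T j y := by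
              have h2 := le_iSup
                (fun q' : ℚ => if (q' : ℝ) ∈ T y j then ((q' : ℝ) : EReal) else ⊥) (q n)
              simpa [gE, hjn'] using h2
            refine lt_of_lt_of_le hcr (le_trans ?_ hs)
            exact_mod_cast le_of_lt hrq
        refine Or.inl (Or.inr ⟨j, hnoq, ?_, ?_⟩)
        · rw [hgE, EReal.toReal_coe]; exact hx
        · rw [hgE, EReal.toReal_coe]; exact hxb
      · push_neg at hbelow
        have hinf : sInf I = x :=
          le_antisymm (csInf_le ⟨x, fun w hw => hbelow w hw⟩ hxI) (le_csInf ⟨x, hxI⟩ hbelow)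
        exact Or.inr ⟨⟨hnoq, hinf ▸ hx⟩, hinf ▸ hxb⟩

lemma measurable_exlt (hTcover : ∀ y, (⋃ i, T y i) = I)
    (hTdisj : ∀ y, Pairwise fun i i' => Disjoint (T y i) (T y i'))
    (hTint : ∀ y i, (T y i).OrdConnected) (hI : I.OrdConnected) (i : Fin M) (b : ℝ) :
    MeasurableSet {y | ∃ x ∈ T y i, x < b} := by
  rw [← A1_eq hTcover hTdisj hTint hI]
  exact measurable_A1 hTmeas I i b

lemma measurable_ne (hTcover : ∀ y, (⋃ i, T y i) = I)
    (hTdisj : ∀ y, Pairwise fun i i' => Disjoint (T y i) (T y i'))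
    (hTint : ∀ y i, (T y i).OrdConnected) (hI : I.OrdConnected) (i : Fin M) :
    MeasurableSet {y | (T y i).Nonempty} := by
  have : {y | (T y i).Nonempty} = ⋃ n : ℕ, {y | ∃ x ∈ T y i, x < n} := by
    ext y
    simp only [mem_setOf_eq, mem_iUnion]
    constructor
    · rintro ⟨x, hx⟩
      obtain ⟨n, hn⟩ := exists_nat_gt x
      exact ⟨n, x, hx, hn⟩
    · rintro ⟨n, x, hx, -⟩
      exact ⟨x, hx⟩
  rw [this]
  exact MeasurableSet.iUnion fun n => measurable_exlt hTmeas hTcover hTdisj hTint hI i n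

lemma measurable_Qset (hTcover : ∀ y, (⋃ i, T y i) = I)
    (hTdisj : ∀ y, Pairwise fun i i' => Disjoint (T y i) (T y i'))
    (hTint : ∀ y i, (T y i).OrdConnected) (hI : I.OrdConnected)
    (α β : EReal) (i : Fin M) :
    MeasurableSet {y | Qp T α β y i} := by
  have hGT : MeasurableSet {y | (∀ x ∈ T y i, α < (x : EReal))} := by
    induction α using EReal.rec with
    | bot =>
        have : {y : Y | ∀ x ∈ T y i, (⊥ : EReal) < (x : EReal)} = univ := by
          ext y; simp [EReal.bot_lt_coe]
        rw [this]; exact .univ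
    | coe a =>
        have : {y : Y | ∀ x ∈ T y i, (a : EReal) < (x : EReal)} =
            ({y | ∃ x ∈ T y i, x < a} ∪ Vset T i a)ᶜ := by
          ext y
          simp only [mem_compl_iff, mem_union, mem_setOf_eq, Vset, not_or, not_exists]
          constructor
          · intro h
            constructor
            · rintro x ⟨hx, hxa⟩
              exact absurd (h x hx) (not_lt.2 (le_of_lt (by exact_mod_cast hxa)))
            · intro ha
              exact absurd (h a ha) (lt_irrefl _)
          · rintro ⟨h1, h2⟩ x hx
            have : ¬ x < a := fun hlt => h1 x ⟨hx, hlt⟩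
            have hne : x ≠ a := fun he => h2 (he ▸ hx)
            have : a < x := lt_of_le_of_ne (not_lt.1 this) (Ne.symm hne)
            exact_mod_cast this
        rw [this]
        exact ((measurable_exlt hTmeas hTcover hTdisj hTint hI i a).union
          (measurable_vset hTmeas i a)).compl
    | top =>
        have : {y : Y | ∀ x ∈ T y i, (⊤ : EReal) < (x : EReal)} =
            {y | (T y i).Nonempty}ᶜ := by
          ext y
          simp only [mem_compl_iff, mem_setOf_eq]
          constructor
          · rintro h ⟨x, hx⟩
            exact absurd (h x hx) (by simp)
          · intro h x hx
            exact absurd ⟨x, hx⟩ h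
        rw [this]
        exact (measurable_ne hTmeas hTcover hTdisj hTint hI i).compl
  have hLT : MeasurableSet {y | (∃ x ∈ T y i, (x : EReal) < β)} := by
    induction β using EReal.rec with
    | bot =>
        have : {y : Y | ∃ x ∈ T y i, (x : EReal) < (⊥ : EReal)} = ∅ := by
          ext y; simp
        rw [this]; exact .empty
    | coe b =>
        have : {y : Y | ∃ x ∈ T y i, (x : EReal) < (b : EReal)} =
            {y | ∃ x ∈ T y i, x < b} := by
          ext y
          simp only [mem_setOf_eq, EReal.coe_lt_coe_iff]
        rw [this]
        exact measurable_exlt hTmeas hTcover hTdisj hTint hI i b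
    | top =>
        have : {y : Y | ∃ x ∈ T y i, (x : EReal) < (⊤ : EReal)} =
            {y | (T y i).Nonempty} := by
          ext y
          simp only [mem_setOf_eq]
          constructor
          · rintro ⟨x, hx, -⟩; exact ⟨x, hx⟩
          · rintro ⟨x, hx⟩; exact ⟨x, hx, EReal.coe_lt_top x⟩
        rw [this]
        exact measurable_ne hTmeas hTcover hTdisj hTint hI i
  have : {y | Qp T α β y i} =
      {y | (T y i).Nonempty} ∩ {y | (∀ x ∈ T y i, α < (x : EReal))} ∩
        {y | (∃ x ∈ T y i, (x : EReal) < β)} := by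
    ext y; simp only [Qp, mem_inter_iff, mem_setOf_eq]; tauto
  rw [this]
  exact ((measurable_ne hTmeas hTcover hTdisj hTint hI i).inter hGT).inter hLT

lemma measurable_wf (hTcover : ∀ y, (⋃ i, T y i) = I)
    (hTdisj : ∀ y, Pairwise fun i i' => Disjoint (T y i) (T y i'))
    (hTint : ∀ y i, (T y i).OrdConnected) (hI : I.OrdConnected) (α β : EReal) :
    Measurable fun y => (wf T α β y : ℝ≥0∞) := by
  have : (fun y => (wf T α β y : ℝ≥0∞)) =
      fun y => ∑ i : Fin M, (if Qp T α β y i then (1 : ℝ≥0∞) else 0) := by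
    funext y
    rw [wf, Finset.card_filter]
    push_cast
    rfl
  rw [this]
  apply Finset.measurable_sum
  intro i _
  exact Measurable.ite (measurable_Qset hTmeas hTcover hTdisj hTint hI α β i)
    measurable_const measurable_const

lemma measurable_bf (r : ℝ) :
    Measurable fun y =>
      ((Finset.univ.filter (fun i : Fin M => r ∈ T y i)).card : ℝ≥0∞) := by
  have : (fun y => ((Finset.univ.filter (fun i : Fin M => r ∈ T y i)).card : ℝ≥0∞)) =
      fun y => ∑ i : Fin M, (if r ∈ T y i then (1 : ℝ≥0∞) else 0) := by
    funext y
    rw [Finset.card_filter]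
    push_cast
    rfl
  rw [this]
  apply Finset.measurable_sum
  intro i _
  exact Measurable.ite (measurable_vset hTmeas i r) measurable_const measurable_const

end Meas

/-! ### Integrated counting function -/

section WLem

variable {ν : Measure Y} {I : Set ℝ}
variable (hTmeas : ∀ i : Fin M, MeasurableSet {p : Y × ℝ | p.2 ∈ T p.1 i})
variable (hTcover : ∀ y, (⋃ i, T y i) = I)
variable (hTdisj : ∀ y, Pairwise fun i i' => Disjoint (T y i) (T y i'))
variable (hTint : ∀ y i, (T y i).OrdConnected)
variable (hI : I.OrdConnected)

omit hTmeas hTcover hTdisj hTint hI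

lemma Wf_mono_left {α α' : EReal} (h : α ≤ α') (β : EReal) :
    Wf T ν α' β ≤ Wf T ν α β :=
  lintegral_mono fun y => Nat.cast_le.2 (wf_mono_left h β y)

lemma Wf_mono_right {β β' : EReal} (h : β ≤ β') (α : EReal) :
    Wf T ν α β ≤ Wf T ν α β' :=
  lintegral_mono fun y => Nat.cast_le.2 (wf_mono_right h α y)

lemma Wf_zero {α β : EReal} (h : β ≤ α) : Wf T ν α β = 0 := by
  have : ∀ y : Y, (wf T α β y : ℝ≥0∞) = 0 := fun y => by
    rw [wf_zero h y]; exact Nat.cast_zero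
  rw [Wf]
  simp only [this, lintegral_const, zero_mul]

lemma Wf_le (α β : EReal) : Wf T ν α β ≤ (M : ℝ≥0∞) * ν univ := by
  refine le_trans (lintegral_mono fun y => ?_) (le_of_eq (lintegral_const _))
  exact Nat.cast_le.2 (wf_le_M α β y)

include hTmeas hTcover hTdisj hTint hI

lemma Wf_superadd {α β γ : EReal} (hab : α ≤ β) (hbc : β ≤ γ) :
    Wf T ν α β + Wf T ν β γ ≤ Wf T ν α γ := by
  rw [Wf, Wf, Wf, ← lintegral_add_left (measurable_wf hTmeas hTcover hTdisj hTint hI α β)]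
  apply lintegral_mono
  intro y
  show ((wf T α β y : ℝ≥0∞) + (wf T β γ y : ℝ≥0∞)) ≤ ((wf T α γ y : ℝ≥0∞))
  rw [← Nat.cast_add]
  exact Nat.cast_le.2 (wf_superadd hTdisj hab hbc y)

lemma Wf_sup {α β : EReal} {e : ℕ → ℝ} (hmono : Monotone e)
    (hle : ∀ n, ((e n : ℝ) : EReal) ≤ β)
    (happrox : ∀ x : ℝ, (x : EReal) < β → ∃ n, x < e n) :
    Wf T ν α β = ⨆ n, Wf T ν α (e n) := by
  have hfmono : Monotone fun n => fun y => (wf T α (e n) y : ℝ≥0∞) := by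
    intro n n' hnn' y
    exact Nat.cast_le.2 (wf_mono_right (by exact_mod_cast hmono hnn') α y)
  simp only [Wf]
  rw [← lintegral_iSup (fun n => measurable_wf hTmeas hTcover hTdisj hTint hI α (e n))
    hfmono]
  congr 1
  funext y
  classical
  set F : ℕ → Finset (Fin M) := fun n => Finset.univ.filter (Qp T α (e n) y) with hF
  set Fb : Finset (Fin M) := Finset.univ.filter (Qp T α β y) with hFb
  have hsub : ∀ n, F n ⊆ Fb := by
    intro n i hi
    rw [hF, Finset.mem_filter] at hi
    rw [hFb, Finset.mem_filter]
    obtain ⟨h0, h1, h2, x, hx, hlt⟩ := hi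
    exact ⟨h0, h1, h2, x, hx, lt_of_lt_of_le hlt (hle n)⟩
  have hFmono : Monotone F := by
    intro n n' hnn' i hi
    rw [hF, Finset.mem_filter] at hi ⊢
    obtain ⟨h0, h1, h2, x, hx, hlt⟩ := hi
    refine ⟨h0, h1, h2, x, hx, lt_of_lt_of_le hlt ?_⟩
    exact_mod_cast hmono hnn'
  have hex : ∀ i ∈ Fb, ∃ n, i ∈ F n := by
    intro i hi
    rw [hFb, Finset.mem_filter] at hi
    obtain ⟨h0, h1, h2, x, hx, hlt⟩ := hi
    obtain ⟨n, hn⟩ := happrox x hlt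
    refine ⟨n, ?_⟩
    rw [hF, Finset.mem_filter]
    exact ⟨h0, h1, h2, x, hx, by exact_mod_cast hn⟩
  have hchoice : ∀ i : Fin M, ∃ n, i ∈ Fb → i ∈ F n := by
    intro i
    by_cases h : i ∈ Fb
    · obtain ⟨n, hn⟩ := hex i h
      exact ⟨n, fun _ => hn⟩
    · exact ⟨0, fun hc => absurd hc h⟩
  choose f hf using hchoice
  have hN : Fb ⊆ F (Finset.univ.sup f) := by
    intro i hi
    exact hFmono (Finset.le_sup (Finset.mem_univ i)) (hf i hi)
  apply le_antisymm
  · refine le_trans (Nat.cast_le.2 (Finset.card_le_card hN)) ?_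
    exact le_iSup (fun n => ((F n).card : ℝ≥0∞)) _
  · exact iSup_le fun n => Nat.cast_le.2 (Finset.card_le_card (hsub n))

lemma Wf_inf_le {α : EReal} {e : ℕ → ℝ} (hanti : Antitone e)
    (hgt : ∀ n, α < ((e n : ℝ) : EReal))
    (happrox : ∀ z : ℝ, α < (z : EReal) → ∃ n, e n ≤ z)
    (hfin : Wf T ν α (e 0) ≠ ⊤) :
    ⨅ n, Wf T ν α (e n) ≤ ν univ := by
  have hfanti : Antitone fun n => fun y => (wf T α (e n) y : ℝ≥0∞) := by
    intro n n' hnn' y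
    exact Nat.cast_le.2 (wf_mono_right (by exact_mod_cast hanti hnn') α y)
  have heq := lintegral_iInf
    (fun n => measurable_wf hTmeas hTcover hTdisj hTint hI α (e n)) hfanti hfin (μ := ν)
  simp only [Wf]
  rw [← heq]
  refine le_trans (lintegral_mono fun y => ?_) (le_of_eq lintegral_one)
  -- pointwise: ⨅ n, wf ≤ 1
  classical
  set F : ℕ → Finset (Fin M) := fun n => Finset.univ.filter (Qp T α (e n) y) with hF
  have hFanti : ∀ {n n'}, n ≤ n' → F n' ⊆ F n := by
    intro n n' hnn' i hi
    rw [hF, Finset.mem_filter] at hi ⊢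
    obtain ⟨h0, h1, h2, x, hx, hlt⟩ := hi
    refine ⟨h0, h1, h2, x, hx, lt_of_lt_of_le hlt ?_⟩
    exact_mod_cast hanti hnn'
  obtain ⟨n₀, hn₀⟩ : ∃ n₀, (F n₀).card = sInf (Set.range fun n => (F n).card) := by
    have hne : (Set.range fun n => (F n).card).Nonempty := ⟨(F 0).card, 0, rfl⟩
    obtain ⟨n₀, hn₀⟩ := Nat.sInf_mem hne
    exact ⟨n₀, hn₀⟩
  have hstab : ∀ n, n₀ ≤ n → F n = F n₀ := by
    intro n hn
    refine Finset.eq_of_subset_of_card_le (hFanti hn) ?_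
    rw [hn₀]
    exact Nat.sInf_le ⟨n, rfl⟩
  have hcard : (F n₀).card ≤ 1 := by
    by_contra hc
    obtain ⟨i₁, hi₁, i₂, hi₂, hne12⟩ := Finset.one_lt_card.1 (not_le.1 hc)
    have hall : ∀ (i : Fin M), i ∈ F n₀ → ∀ n : ℕ, i ∈ F n := by
      intro i hi n
      rcases le_total n n₀ with h | h
      · exact hFanti h hi
      · rw [hstab n h]; exact hi
    have hq : ∀ (i : Fin M), i ∈ F n₀ →
        ((∀ x ∈ T y i, α < (x : EReal)) ∧ ∀ n, ∃ x ∈ T y i, x < e n) := by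
      intro i hi
      have h1 := hall i hi
      constructor
      · have := h1 0
        rw [hF, Finset.mem_filter] at this
        exact this.2.2.1
      · intro n
        have := h1 n
        rw [hF, Finset.mem_filter] at this
        obtain ⟨-, -, -, x, hx, hlt⟩ := this
        exact ⟨x, hx, by exact_mod_cast hlt⟩
    obtain ⟨hgt₁, hlt₁⟩ := hq i₁ hi₁
    obtain ⟨hgt₂, hlt₂⟩ := hq i₂ hi₂
    exact hne12 (pieces_eq hTdisj hTint happrox hgt₁ hgt₂ hlt₁ hlt₂)
  calc (⨅ n, (wf T α (e n) y : ℝ≥0∞)) ≤ (wf T α (e n₀) y : ℝ≥0∞) := iInf_le _ n₀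
  _ ≤ 1 := by exact_mod_cast hcard

end WLem

end S7

open S7 in
/-- **Besicovitch-type covering lemma.**
Let `(Y,ν)` be a measure space with `ν(Y) ≤ A`, `I` an interval, `M ≥ 1`, and for
each `y ∈ Y` a measurable family `T y` of at most `M` intervals partitioning `I`.
Then there is a partition `J` of `I` into at most `M` intervals such that for each
piece `J i`, `∫_Y #{K ∈ T y : J i ∩ K ≠ ∅} dν(y) ≤ 3A`. -/
theorem stmt7 {Y : Type*} [MeasurableSpace Y] (ν : Measure Y)
    (A : ℝ) (hA : 0 ≤ A) (hY : ν Set.univ ≤ ENNReal.ofReal A)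
    (I : Set ℝ) (hI : I.OrdConnected) (M : ℕ) (hM : 1 ≤ M)
    (T : Y → Fin M → Set ℝ)
    (hTmeas : ∀ i : Fin M, MeasurableSet {p : Y × ℝ | p.2 ∈ T p.1 i})
    (hTcover : ∀ y, (⋃ i, T y i) = I)
    (hTdisj : ∀ y, Pairwise fun i i' => Disjoint (T y i) (T y i'))
    (hTint : ∀ y i, (T y i).OrdConnected) :
    ∃ J : Fin M → Set ℝ,
      (⋃ i, J i) = I ∧
      (Pairwise fun i i' => Disjoint (J i) (J i')) ∧
      (∀ i, (J i).OrdConnected) ∧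
      ∀ i : Fin M,
        (∫⁻ y, ((Finset.univ.filter
            fun i' : Fin M => (J i ∩ T y i').Nonempty).card : ℝ≥0∞) ∂ν)
          ≤ ENNReal.ofReal (3 * A) := by
  classical
  by_cases h0 : ENNReal.ofReal A = 0
  · -- trivial case : the measure vanishes
    have hν : ν = 0 := by
      have : ν Set.univ = 0 := le_antisymm (h0 ▸ hY) zero_le
      exact Measure.measure_univ_eq_zero.1 this
    refine ⟨fun i => if i = ⟨0, hM⟩ then I else ∅, ?_, ?_, ?_, ?_⟩
    · apply subset_antisymm
      · refine iUnion_subset fun i => ?_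
        by_cases h : i = ⟨0, hM⟩ <;> simp [h]
      · intro x hx
        exact mem_iUnion.2 ⟨⟨0, hM⟩, by simp [hx]⟩
    · intro i j hne
      by_cases hi : i = ⟨0, hM⟩ <;> by_cases hj : j = ⟨0, hM⟩ <;>
        simp only [hi, hj, if_pos, if_neg, if_true]
      · exact absurd (hi.trans hj.symm) hne
      · simp [if_neg hj]
      · simp [if_neg hi]
      · simp [if_neg hi, if_neg hj]
    · intro i
      by_cases h : i = ⟨0, hM⟩
      · simpa [h] using hI
      · simp only [if_neg h]
        exact Set.ordConnected_empty
    · intro i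
      rw [hν]
      simp [lintegral_zero_measure]
  · -- main case
    set 𝔸 := ENNReal.ofReal A with h𝔸def
    have h𝔸top : 𝔸 ≠ ⊤ := ENNReal.ofReal_ne_top
    have h2 : 𝔸 < 2 * 𝔸 := by
      rw [two_mul]
      exact ENNReal.lt_add_right h𝔸top h0
    obtain ⟨a, ha0, haS⟩ : ∃ a : ℕ → EReal, a 0 = ⊥ ∧
        ∀ k, a (k + 1) = sSup {e : EReal | Wf T ν (a k) e ≤ 2 * 𝔸} :=
      ⟨fun n => Nat.rec ⊥ (fun k ak => sSup {e | Wf T ν ak e ≤ 2 * 𝔸}) n, rfl, fun _ => rfl⟩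
    have hνfin : ν univ ≠ ⊤ := ne_top_of_le_ne_top h𝔸top hY
    have hfin : ∀ α β : EReal, Wf T ν α β ≠ ⊤ := by
      intro α β
      exact ne_top_of_le_ne_top (ENNReal.mul_ne_top (by simp) hνfin) (Wf_le α β)
    have hmem0 : ∀ k, a k ∈ {e : EReal | Wf T ν (a k) e ≤ 2 * 𝔸} := by
      intro k
      simp only [mem_setOf_eq, Wf_zero (le_refl (a k))]
      exact zero_le
    have hC1 : ∀ k, a k ≤ a (k + 1) := fun k => (haS k) ▸ le_sSup (hmem0 k)
    have hamono : Monotone a := monotone_nat_of_le_succ hC1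
    -- C3
    have hC3 : ∀ k, Wf T ν (a k) (a (k + 1)) ≤ 2 * 𝔸 := by
      intro k
      rw [haS k]
      set S := {e : EReal | Wf T ν (a k) e ≤ 2 * 𝔸} with hSdef
      rcases eq_or_ne (sSup S) ⊥ with hbot | hne
      · rw [hbot, Wf_zero bot_le]
        exact zero_le
      rcases eq_or_ne (sSup S) ⊤ with htop | hne'
      · rw [htop]
        have hsup := Wf_sup (T := T) (ν := ν) (α := a k) (β := (⊤ : EReal))
          (e := fun n : ℕ => (n : ℝ)) hTmeas hTcover hTdisj hTint hI
          (fun n n' h => by show ((n : ℝ)) ≤ (n' : ℝ); exact_mod_cast h)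
          (fun n => le_top)
          (fun x _ => exists_nat_gt x)
        rw [hsup]
        apply iSup_le
        intro n
        have hlt : (((n : ℝ) : ℝ) : EReal) < sSup S := htop ▸ EReal.coe_lt_top _
        obtain ⟨e', he'S, he'lt⟩ := lt_sSup_iff.1 hlt
        exact le_trans (Wf_mono_right (le_of_lt he'lt) _) he'S
      · obtain ⟨b, hb⟩ : ∃ b : ℝ, sSup S = (b : EReal) :=
          ⟨(sSup S).toReal, (EReal.coe_toReal hne' hne).symm⟩
        rw [hb]
        have hposn : ∀ n : ℕ, (0 : ℝ) < 1 / ((n : ℝ) + 1) := fun n => by positivity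
        have hmono : Monotone (fun n : ℕ => b - 1 / ((n : ℝ) + 1)) := by
          intro n n' h
          have h1 : 1 / ((n' : ℝ) + 1) ≤ 1 / ((n : ℝ) + 1) := by
            apply one_div_le_one_div_of_le
            · positivity
            · exact_mod_cast by omega
          simp only
          linarith
        have happx : ∀ x : ℝ, (x : EReal) < ((b : ℝ) : EReal) →
            ∃ n : ℕ, x < b - 1 / ((n : ℝ) + 1) := by
          intro x hx
          have hxb : x < b := by exact_mod_cast hx
          obtain ⟨n, hn⟩ := exists_nat_one_div_lt (by linarith : (0 : ℝ) < b - x)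
          exact ⟨n, by linarith⟩
        have hsup := Wf_sup (T := T) (ν := ν) (α := a k) (β := ((b : ℝ) : EReal))
          (e := fun n : ℕ => b - 1 / ((n : ℝ) + 1)) hTmeas hTcover hTdisj hTint hI
          hmono (fun n => by exact_mod_cast le_of_lt (sub_lt_self b (hposn n))) happx
        rw [hsup]
        apply iSup_le
        intro n
        have hlt : ((b - 1 / ((n : ℝ) + 1) : ℝ) : EReal) < sSup S := by
          rw [hb]
          exact_mod_cast sub_lt_self b (hposn n)
        obtain ⟨e', he'S, he'lt⟩ := lt_sSup_iff.1 hlt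
        exact le_trans (Wf_mono_right (le_of_lt he'lt) _) he'S
    -- C4 : strict progress
    have hC4 : ∀ k, a k < ⊤ → a k < a (k + 1) := by
      intro k hk
      obtain ⟨e, hanti, hgt, happrox⟩ : ∃ e : ℕ → ℝ, Antitone e ∧
          (∀ n, a k < ((e n : ℝ) : EReal)) ∧
          (∀ z : ℝ, a k < (z : EReal) → ∃ n, e n ≤ z) := by
        rcases eq_or_ne (a k) ⊥ with hbot | hne
        · refine ⟨fun n => -(n : ℝ), ?_, ?_, ?_⟩
          · intro n n' h
            simp only [neg_le_neg_iff]
            exact_mod_cast h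
          · intro n
            rw [hbot]
            exact EReal.bot_lt_coe _
          · intro z _
            obtain ⟨n, hn⟩ := exists_nat_gt (-z)
            refine ⟨n, ?_⟩
            show -(n : ℝ) ≤ z
            linarith
        · have hrne : a k ≠ ⊤ := ne_of_lt hk
          have ht : ((a k).toReal : EReal) = a k := EReal.coe_toReal hrne hne
          set t := (a k).toReal with htdef
          refine ⟨fun n => t + 1 / ((n : ℝ) + 1), ?_, ?_, ?_⟩
          · intro n n' h
            have h1 : 1 / ((n' : ℝ) + 1) ≤ 1 / ((n : ℝ) + 1) := by
              apply one_div_le_one_div_of_le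
              · positivity
              · exact_mod_cast by omega
            simp only
            linarith
          · intro n
            rw [← ht]
            have : t < t + 1 / ((n : ℝ) + 1) := lt_add_of_pos_right t (by positivity)
            exact_mod_cast this
          · intro z hz
            rw [← ht] at hz
            have htz : t < z := by exact_mod_cast hz
            obtain ⟨n, hn⟩ := exists_nat_one_div_lt (by linarith : (0 : ℝ) < z - t)
            exact ⟨n, by linarith⟩
      have hinf := Wf_inf_le hTmeas hTcover hTdisj hTint hI hanti hgt happrox (hfin _ _)
      have hex : ∃ n, Wf T ν (a k) ((e n : ℝ) : EReal) ≤ 2 * 𝔸 := by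
        by_contra hno
        push_neg at hno
        have hge : 2 * 𝔸 ≤ ⨅ n, Wf T ν (a k) ((e n : ℝ) : EReal) :=
          le_iInf fun n => le_of_lt (hno n)
        exact absurd (lt_of_le_of_lt (hge.trans (hinf.trans hY)) h2) (lt_irrefl _)
      obtain ⟨n, hn⟩ := hex
      calc a k < ((e n : ℝ) : EReal) := hgt n
      _ ≤ sSup {e' : EReal | Wf T ν (a k) e' ≤ 2 * 𝔸} := le_sSup hn
      _ = a (k + 1) := (haS k).symm
    -- C5
    have hC5 : ∀ (k : ℕ) (e' : EReal), a (k + 1) < e' → 2 * 𝔸 < Wf T ν (a k) e' := by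
      intro k e' hgt
      by_contra hle
      push_neg at hle
      exact absurd (le_sSup (show e' ∈ {e : EReal | Wf T ν (a k) e ≤ 2 * 𝔸} from hle))
        (not_le.2 ((haS k) ▸ hgt))
    -- extended cut sequence
    set c : ℕ → EReal := fun l => if M ≤ l then ⊤ else a l with hcdef
    have hcmono : Monotone c := by
      intro l l' h
      simp only [hcdef]
      by_cases hl : M ≤ l
      · rw [if_pos hl, if_pos (le_trans hl h)]
      · by_cases hl' : M ≤ l'
        · rw [if_neg hl, if_pos hl']
          exact le_top
        · rw [if_neg hl, if_neg hl']
          exact hamono h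
    -- termination
    have hterm : Wf T ν (a (M - 1)) ⊤ ≤ 2 * 𝔸 := by
      by_contra hfail
      push_neg at hfail
      have htop' : a (M - 1) < ⊤ := by
        rcases lt_or_ge (a (M - 1)) ⊤ with h | h
        · exact h
        · exfalso
          have hz : Wf T ν (a (M - 1)) ⊤ = 0 := Wf_zero h
          rw [hz] at hfail
          exact absurd hfail (by simp)
      have halltop : ∀ k, k ≤ M - 1 → a k < ⊤ :=
        fun k hk => lt_of_le_of_lt (hamono hk) htop'
      set K := (M + 1) / 2 with hKdef
      have hterms : ∀ j, j < K → 2 * 𝔸 < Wf T ν (c (2 * j)) (c (2 * j + 2)) := by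
        intro j hj
        have h2jM : 2 * j ≤ M - 1 := by omega
        have hc2j : c (2 * j) = a (2 * j) := if_neg (by omega)
        by_cases hlast : M ≤ 2 * j + 1
        · have h2jeq : 2 * j = M - 1 := by omega
          have hc2 : c (2 * j + 2) = ⊤ := if_pos (by omega)
          rw [hc2j, hc2, h2jeq]
          exact hfail
        · push_neg at hlast
          have ha2j1top : a (2 * j + 1) < ⊤ := halltop _ (by omega)
          by_cases h2j2 : M ≤ 2 * j + 2
          · have hc2 : c (2 * j + 2) = ⊤ := if_pos h2j2
            rw [hc2j, hc2]
            exact hC5 (2 * j) ⊤ ha2j1top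
          · have hc2 : c (2 * j + 2) = a (2 * j + 2) := if_neg h2j2
            rw [hc2j, hc2]
            exact hC5 (2 * j) _ (hC4 _ ha2j1top)
      have hacc : ∀ n, 1 ≤ n → n ≤ K →
          ((2 * n : ℕ) : ℝ≥0∞) * 𝔸 < Wf T ν (c 0) (c (2 * n)) := by
        intro n
        induction n with
        | zero => omega
        | succ n ih =>
            intro h1 hK
            rcases Nat.eq_or_lt_of_le h1 with h1' | h1'
            · -- n + 1 = 1
              have hn0 : n = 0 := by omega
              subst hn0
              have := hterms 0 (by omega)
              simpa using this
            · have hn1 : 1 ≤ n := by omega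
              have hIH := ih hn1 (by omega)
              have hstrict := ENNReal.add_lt_add hIH (hterms n (by omega))
              have hsa := Wf_superadd (T := T) (ν := ν) hTmeas hTcover hTdisj hTint hI
                (hcmono (show 0 ≤ 2 * n by omega))
                (hcmono (show 2 * n ≤ 2 * n + 2 by omega))
              have h2n : 2 * (n + 1) = 2 * n + 2 := by ring
              rw [h2n]
              refine lt_of_lt_of_le (lt_of_le_of_lt (le_of_eq ?_) hstrict) hsa
              push_cast
              ring
      have hKpos : 1 ≤ K := by omega
      have hKM : M ≤ 2 * K := by omega
      have hfinal := hacc K hKpos le_rfl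
      have hWtop : Wf T ν (c 0) (c (2 * K)) = Wf T ν ⊥ ⊤ := by
        have h1 : c 0 = ⊥ := by
          show (if M ≤ 0 then ⊤ else a 0) = ⊥
          rw [if_neg (by omega : ¬ M ≤ 0)]
          exact ha0
        have h2' : c (2 * K) = ⊤ := if_pos hKM
        rw [h1, h2']
      have hWle : Wf T ν ⊥ ⊤ ≤ (M : ℝ≥0∞) * 𝔸 :=
        le_trans (Wf_le _ _) (mul_le_mul' le_rfl hY)
      have hMle : (M : ℝ≥0∞) * 𝔸 ≤ ((2 * K : ℕ) : ℝ≥0∞) * 𝔸 :=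
        mul_le_mul' (Nat.cast_le.2 hKM) le_rfl
      have : ((2 * K : ℕ) : ℝ≥0∞) * 𝔸 < ((2 * K : ℕ) : ℝ≥0∞) * 𝔸 :=
        lt_of_lt_of_le hfinal (le_trans (le_of_eq hWtop) (le_trans hWle hMle))
      exact absurd this (lt_irrefl _)
    -- per-piece bound on W
    have hWk : ∀ k : Fin M, Wf T ν (c k) (c ((k : ℕ) + 1)) ≤ 2 * 𝔸 := by
      intro k
      have hkM : (k : ℕ) < M := k.2
      rcases lt_or_ge ((k : ℕ) + 1) M with h | h
      · rw [show c (k : ℕ) = a (k : ℕ) from if_neg (by omega),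
          show c ((k : ℕ) + 1) = a ((k : ℕ) + 1) from if_neg (by omega)]
        exact hC3 k
      · have hk1 : (k : ℕ) = M - 1 := by omega
        rw [show c (k : ℕ) = a (k : ℕ) from if_neg (by omega),
          show c ((k : ℕ) + 1) = ⊤ from if_pos (by omega), hk1]
        exact hterm
    -- the partition
    refine ⟨fun k : Fin M =>
      I ∩ {x : ℝ | c (k : ℕ) ≤ (x : EReal) ∧ (x : EReal) < c ((k : ℕ) + 1)}, ?_, ?_, ?_, ?_⟩
    · -- union
      apply subset_antisymm
      · exact iUnion_subset fun i => inter_subset_left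
      · intro x hx
        have hP0 : c 0 ≤ (x : EReal) := by
          rw [show c 0 = ⊥ from by
            rw [hcdef]; simp only [if_neg (by omega : ¬ M ≤ 0)]; exact ha0]
          exact bot_le
        set k := Nat.findGreatest (fun l => c l ≤ (x : EReal)) (M - 1) with hkdef
        have hkle : k ≤ M - 1 := Nat.findGreatest_le _
        have hPk : c k ≤ (x : EReal) := by
          rw [hkdef]
          exact Nat.findGreatest_spec (P := fun l => c l ≤ (x : EReal)) (Nat.zero_le _) hP0
        refine mem_iUnion.2 ⟨⟨k, by omega⟩, hx, hPk, ?_⟩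
        by_cases hc : M ≤ k + 1
        · rw [show c (k + 1) = ⊤ from if_pos hc]
          exact EReal.coe_lt_top x
        · push_neg at hc
          have hnP := Nat.findGreatest_is_greatest (show k < k + 1 by omega)
            (by omega : k + 1 ≤ M - 1)
          exact not_le.1 hnP
    · -- disjoint
      have haux : ∀ i j : Fin M, (i : ℕ) < (j : ℕ) →
          Disjoint (I ∩ {x : ℝ | c (i : ℕ) ≤ (x : EReal) ∧ (x : EReal) < c ((i : ℕ) + 1)})
            (I ∩ {x : ℝ | c (j : ℕ) ≤ (x : EReal) ∧ (x : EReal) < c ((j : ℕ) + 1)}) := by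
        intro i j hij
        rw [Set.disjoint_left]
        rintro x ⟨-, -, hxi⟩ ⟨-, hxj, -⟩
        exact absurd (lt_of_lt_of_le hxi (le_trans (hcmono (by omega)) hxj)) (lt_irrefl _)
      intro i j hne
      rcases lt_or_gt_of_ne (Fin.val_ne_of_ne hne) with h | h
      · exact haux i j h
      · exact (haux j i h).symm
    · -- OrdConnected
      intro k
      apply Set.OrdConnected.inter hI
      constructor
      intro x hx y hy z hz
      constructor
      · exact le_trans hx.1 (by exact_mod_cast hz.1)
      · exact lt_of_le_of_lt (by exact_mod_cast hz.2 : (z : EReal) ≤ (y : EReal)) hy.2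
    · -- the integral bound
      intro k
      have hbdry : (∫⁻ y, ((Finset.univ.filter
          (fun i : Fin M => (c (k : ℕ)).toReal ∈ T y i)).card : ℝ≥0∞) ∂ν) ≤ 𝔸 := by
        refine le_trans (lintegral_mono fun y => ?_) (le_trans (le_of_eq lintegral_one)
          hY)
        have h := boundary_card_le_one hTdisj (c (k : ℕ)).toReal y
        refine le_trans (le_of_eq ?_) (((Nat.cast_le (α := ℝ≥0∞)).2 h).trans_eq Nat.cast_one)
        congr 2
      calc (∫⁻ y, ((Finset.univ.filter fun i' : Fin M =>
            ((I ∩ {x : ℝ | c (k : ℕ) ≤ (x : EReal) ∧ (x : EReal) < c ((k : ℕ) + 1)}) ∩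
              T y i').Nonempty).card : ℝ≥0∞) ∂ν)
          ≤ ∫⁻ y, ((wf T (c (k : ℕ)) (c ((k : ℕ) + 1)) y : ℝ≥0∞) +
              ((Finset.univ.filter
                (fun i : Fin M => (c (k : ℕ)).toReal ∈ T y i)).card : ℝ≥0∞)) ∂ν := by
            refine lintegral_mono fun y => ?_
            have h := count_le hTint I (c (k : ℕ)) (c ((k : ℕ) + 1)) y
            refine le_trans (le_of_eq ?_) (((Nat.cast_le (α := ℝ≥0∞)).2 h).trans_eq (Nat.cast_add _ _))
            congr 2
      _ = Wf T ν (c (k : ℕ)) (c ((k : ℕ) + 1)) + ∫⁻ y, ((Finset.univ.filter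
            (fun i : Fin M => (c (k : ℕ)).toReal ∈ T y i)).card : ℝ≥0∞) ∂ν :=
          lintegral_add_left (measurable_wf hTmeas hTcover hTdisj hTint hI _ _) _
      _ ≤ 2 * 𝔸 + 𝔸 := add_le_add (hWk k) hbdry
      _ = ENNReal.ofReal (3 * A) := by
          rw [ENNReal.ofReal_mul (by norm_num : (0 : ℝ) ≤ 3)]
          rw [show ENNReal.ofReal (3 : ℝ) = 3 from by
            rw [show (3 : ℝ) = ((3 : ℕ) : ℝ) by norm_num, ENNReal.ofReal_natCast]
            norm_num]
          rw [← h𝔸def]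
          ring
end

section
/- Let (X,μ) be a measure space, 1 < p < ∞, and (Y,ν) a probability space. For each x ∈ X let E_x ⊆ Y be measurable, and let f : X × Y → ℂ be jointly measurable. Then ∫_X (1−ν(E_x))^k |∫_{E_x} f(x,y) dν(y)|^p dμ(x) ≤ ((p−1)/k)^{p−1} ∫_X ∫_Y |f(x,y)|^p dν(y) dμ(x) for every integer k ≥ 1. -/
open MeasureTheory Set
open scoped ENNReal

/-- Pointwise bound `(1-t)^k * t^(p-1) ≤ ((p-1)/k)^(p-1)` for `t ∈ [0,1]`. -/
lemma stmt10_real_aux (p : ℝ) (hp : 1 < p) (k : ℕ) (hk : 1 ≤ k) {t : ℝ}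
    (ht0 : 0 ≤ t) (ht1 : t ≤ 1) :
    (1 - t) ^ k * t ^ (p - 1) ≤ ((p - 1) / k) ^ (p - 1) := by
  have hk0 : (0:ℝ) < k := by exact_mod_cast hk
  have hp1 : (0:ℝ) < p - 1 := by linarith
  have h1 : (1 - t) ^ k ≤ Real.exp (-(k * t)) := by
    have h : 1 - t ≤ Real.exp (-t) := by
      have := Real.add_one_le_exp (-t); linarith
    calc (1 - t) ^ k ≤ (Real.exp (-t)) ^ k :=
          pow_le_pow_left₀ (by linarith) h k
      _ = Real.exp (-(k * t)) := by
          rw [← Real.exp_nat_mul]; ring_nf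
  have h2 : t ^ (p - 1) ≤ Real.exp (k * t) * ((p - 1) / k) ^ (p - 1) := by
    set s : ℝ := k * t with hs_def
    have hs0 : 0 ≤ s := mul_nonneg hk0.le ht0
    have hs : s ≤ (p - 1) * Real.exp (s / (p - 1)) := by
      have hx : s / (p - 1) ≤ Real.exp (s / (p - 1)) := by
        have := Real.add_one_le_exp (s / (p - 1))
        linarith
      calc s = (p - 1) * (s / (p - 1)) := by field_simp
        _ ≤ (p - 1) * Real.exp (s / (p - 1)) := by
            exact mul_le_mul_of_nonneg_left hx hp1.le
    have ht_eq : t = s / k := by rw [hs_def, mul_comm, mul_div_assoc, div_self hk0.ne', mul_one]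
    have key : s ^ (p - 1) ≤ ((p - 1) * Real.exp (s / (p - 1))) ^ (p - 1) :=
      Real.rpow_le_rpow hs0 hs hp1.le
    have key2 : ((p - 1) * Real.exp (s / (p - 1))) ^ (p - 1)
        = (p - 1) ^ (p - 1) * Real.exp s := by
      rw [Real.mul_rpow hp1.le (Real.exp_pos _).le, ← Real.exp_mul]
      congr 1
      field_simp
    rw [ht_eq, Real.div_rpow hs0 hk0.le, Real.div_rpow hp1.le hk0.le]
    rw [div_le_iff₀ (Real.rpow_pos_of_pos hk0 _)] at *
    calc s ^ (p - 1) ≤ (p - 1) ^ (p - 1) * Real.exp s := key.trans key2.le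
      _ = Real.exp s * ((p - 1) ^ (p - 1) / (k:ℝ) ^ (p - 1)) * (k:ℝ) ^ (p - 1) := by
          field_simp
  calc (1 - t) ^ k * t ^ (p - 1)
      ≤ Real.exp (-(k * t)) * (Real.exp (k * t) * ((p - 1) / k) ^ (p - 1)) := by
        apply mul_le_mul h1 h2 (Real.rpow_nonneg ht0 _) (Real.exp_pos _).le
    _ = ((p - 1) / k) ^ (p - 1) := by
        rw [← mul_assoc, ← Real.exp_add]; simp

/-- **Key estimate in the Minkowski inequality with exceptional sets:**
`∫_X (1−ν(E_x))^k |∫_{E_x} f(x,y) dν(y)|^p dμ(x)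
  ≤ ((p−1)/k)^{p−1} ∫_X ∫_Y |f(x,y)|^p dν(y) dμ(x)` for every integer `k ≥ 1`. -/
theorem stmt10 {X Y : Type*} [MeasurableSpace X] [MeasurableSpace Y]
    (μ : Measure X) (ν : Measure Y) [IsProbabilityMeasure ν]
    (p : ℝ) (hp : 1 < p)
    (E : X → Set Y)
    (hE : MeasurableSet {q : X × Y | q.2 ∈ E q.1})
    (f : X → Y → ℂ)
    (hf : Measurable fun q : X × Y => f q.1 q.2)
    (k : ℕ) (hk : 1 ≤ k) :
    (∫⁻ x, ENNReal.ofReal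
        ((1 - (ν (E x)).toReal) ^ k * ‖∫ y in E x, f x y ∂ν‖ ^ p) ∂μ)
      ≤ ENNReal.ofReal (((p - 1) / k) ^ (p - 1))
          * ∫⁻ x, ∫⁻ y, ENNReal.ofReal (‖f x y‖ ^ p) ∂ν ∂μ := by
  have hp0 : (0:ℝ) < p := by linarith
  -- pointwise bound
  have key : ∀ x, ENNReal.ofReal
      ((1 - (ν (E x)).toReal) ^ k * ‖∫ y in E x, f x y ∂ν‖ ^ p)
      ≤ ENNReal.ofReal (((p - 1) / k) ^ (p - 1))
        * ∫⁻ y, ENNReal.ofReal (‖f x y‖ ^ p) ∂ν := by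
    intro x
    set t := (ν (E x)).toReal with ht_def
    have hEx : MeasurableSet (E x) := measurable_prodMk_left hE
    have hfx : Measurable (f x) := hf.comp measurable_prodMk_left
    have hνE1 : ν (E x) ≤ 1 := prob_le_one
    have ht0 : 0 ≤ t := ENNReal.toReal_nonneg
    have ht1 : t ≤ 1 := by
      rw [ht_def]
      exact ENNReal.toReal_le_of_le_ofReal zero_le_one (by simpa using hνE1)
    have hνE : ν (E x) = ENNReal.ofReal t := by
      rw [ht_def, ENNReal.ofReal_toReal (hνE1.trans_lt ENNReal.one_lt_top).ne]
    -- the inner lintegral as ennnorm rpow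
    have hI : (∫⁻ y, ENNReal.ofReal (‖f x y‖ ^ p) ∂ν)
        = ∫⁻ y, (‖f x y‖₊ : ℝ≥0∞) ^ p ∂ν := by
      refine lintegral_congr fun y => ?_
      rw [← ENNReal.ofReal_rpow_of_nonneg (norm_nonneg _) hp0.le,
        ofReal_norm_eq_enorm, enorm_eq_nnnorm]
    -- Hölder step
    have holder : ENNReal.ofReal (‖∫ y in E x, f x y ∂ν‖ ^ p)
        ≤ ν (E x) ^ (p - 1) * ∫⁻ y, (‖f x y‖₊ : ℝ≥0∞) ^ p ∂ν := by
      have h1 : (‖∫ y in E x, f x y ∂ν‖₊ : ℝ≥0∞)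
          ≤ eLpNorm (f x) 1 (ν.restrict (E x)) := by
        rw [eLpNorm_one_eq_lintegral_enorm]
        exact enorm_integral_le_lintegral_enorm _
      have h2 : eLpNorm (f x) 1 (ν.restrict (E x))
          ≤ eLpNorm (f x) (ENNReal.ofReal p) (ν.restrict (E x))
            * (ν (E x)) ^ (1 - 1/p) := by
        have := eLpNorm_le_eLpNorm_mul_rpow_measure_univ
          (p := 1) (q := ENNReal.ofReal p) (μ := ν.restrict (E x))
          (by simpa using ENNReal.one_le_ofReal.mpr hp.le)
          hfx.aestronglyMeasurable
        simpa [Measure.restrict_apply_univ, ENNReal.toReal_ofReal hp0.le] using this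
      have h3 : (eLpNorm (f x) (ENNReal.ofReal p) (ν.restrict (E x))) ^ p
          = ∫⁻ y in E x, (‖f x y‖₊ : ℝ≥0∞) ^ p ∂ν := by
        rw [eLpNorm_eq_lintegral_rpow_enorm_toReal (ENNReal.ofReal_pos.mpr hp0).ne'
          ENNReal.ofReal_ne_top, ENNReal.toReal_ofReal hp0.le, one_div,
          ← ENNReal.rpow_mul, inv_mul_cancel₀ hp0.ne', ENNReal.rpow_one]
        rfl
      calc ENNReal.ofReal (‖∫ y in E x, f x y ∂ν‖ ^ p)
          = ((‖∫ y in E x, f x y ∂ν‖₊ : ℝ≥0∞)) ^ p := by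
            rw [← ENNReal.ofReal_rpow_of_nonneg (norm_nonneg _) hp0.le,
              ofReal_norm_eq_enorm, enorm_eq_nnnorm]
        _ ≤ (eLpNorm (f x) (ENNReal.ofReal p) (ν.restrict (E x))
              * (ν (E x)) ^ (1 - 1/p)) ^ p :=
            ENNReal.rpow_le_rpow (h1.trans h2) hp0.le
        _ = (eLpNorm (f x) (ENNReal.ofReal p) (ν.restrict (E x))) ^ p
              * (ν (E x)) ^ ((1 - 1/p) * p) := by
            rw [ENNReal.mul_rpow_of_nonneg _ _ hp0.le, ← ENNReal.rpow_mul]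
        _ = (∫⁻ y in E x, (‖f x y‖₊ : ℝ≥0∞) ^ p ∂ν) * (ν (E x)) ^ (p - 1) := by
            have he : (1 - 1/p) * p = p - 1 := by field_simp
            rw [h3, he]
        _ ≤ (∫⁻ y, (‖f x y‖₊ : ℝ≥0∞) ^ p ∂ν) * (ν (E x)) ^ (p - 1) := by
            gcongr
            exact Measure.restrict_le_self
        _ = ν (E x) ^ (p - 1) * ∫⁻ y, (‖f x y‖₊ : ℝ≥0∞) ^ p ∂ν := mul_comm _ _
    -- combine
    have hone : (0:ℝ) ≤ (1 - t) ^ k := pow_nonneg (by linarith) k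
    rw [ENNReal.ofReal_mul hone, hI]
    calc ENNReal.ofReal ((1 - t) ^ k) * ENNReal.ofReal (‖∫ y in E x, f x y ∂ν‖ ^ p)
        ≤ ENNReal.ofReal ((1 - t) ^ k)
          * (ν (E x) ^ (p - 1) * ∫⁻ y, (‖f x y‖₊ : ℝ≥0∞) ^ p ∂ν) := by
          gcongr
      _ = ENNReal.ofReal ((1 - t) ^ k * t ^ (p - 1))
          * ∫⁻ y, (‖f x y‖₊ : ℝ≥0∞) ^ p ∂ν := by
          rw [hνE, ENNReal.ofReal_rpow_of_nonneg ht0 (by linarith),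
            ← mul_assoc, ← ENNReal.ofReal_mul hone]
      _ ≤ ENNReal.ofReal (((p - 1) / k) ^ (p - 1))
          * ∫⁻ y, (‖f x y‖₊ : ℝ≥0∞) ^ p ∂ν := by
          gcongr
          exact stmt10_real_aux p hp k hk ht0 ht1
  calc (∫⁻ x, ENNReal.ofReal
        ((1 - (ν (E x)).toReal) ^ k * ‖∫ y in E x, f x y ∂ν‖ ^ p) ∂μ)
      ≤ ∫⁻ x, ENNReal.ofReal (((p - 1) / k) ^ (p - 1))
          * ∫⁻ y, ENNReal.ofReal (‖f x y‖ ^ p) ∂ν ∂μ := lintegral_mono key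
    _ = ENNReal.ofReal (((p - 1) / k) ^ (p - 1))
          * ∫⁻ x, ∫⁻ y, ENNReal.ofReal (‖f x y‖ ^ p) ∂ν ∂μ :=
        lintegral_const_mul' _ _ ENNReal.ofReal_ne_top
end

section
/- Interval refinement with controlled variation: Let I ⊆ ℝ be an interval, X a family of norms ‖·‖_{X(J)} indexed by subintervals J ⊆ I, monotone under restriction (‖φ|_{J'}‖_{X(J')} ≤ ‖φ‖_{X(J)} for J' ⊆ J) and subadditive under concatenation (‖φ‖_{X(J₁∪J₂)} ≤ ‖φ|_{J₁}‖_{X(J₁)} + ‖φ|_{J₂}‖_{X(J₂)} for adjacent J₁,J₂). Let (Y,ν) be a finite measure space, (φ_y)_{y∈Y} a measurable family, M ≥ 1, F ∈ L¹(ν), and suppose each y ∈ Y admits a partition 𝒥_y of I into at most M intervals with ‖φ_y|_{J}‖_{X(J)} ≤ F(y) for all J ∈ 𝒥_y. Then there is a single partition 𝒥 of I into at most M intervals such that ‖(∫_Y φ_y dν(y))|_J‖_{X(J)} ≤ 3∫_Y F dν for every J ∈ 𝒥. -/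
open MeasureTheory Set
open scoped Classical

section Aux

/-- Orientation: two disjoint order-connected sets are fully ordered once one pair is. -/
lemma aux_orient {A B : Set ℝ} (hA : A.OrdConnected) (hB : B.OrdConnected)
    (hd : Disjoint A B) {a b : ℝ} (ha : a ∈ A) (hb : b ∈ B) (hab : a < b) :
    ∀ u ∈ A, ∀ v ∈ B, u < v := by
  intro u hu v hv
  by_contra h
  push_neg at h
  rcases le_or_gt a v with h1 | h1
  · exact Set.disjoint_left.mp hd (hA.out ha hu ⟨h1, h⟩) hv
  · exact Set.disjoint_left.mp hd ha (hB.out hv hb ⟨h1.le, hab.le⟩)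

/-- An order-connected set with two points contains two distinct rationals. -/
lemma aux_two_rats {A : Set ℝ} (hA : A.OrdConnected) {a b : ℝ} (ha : a ∈ A) (hb : b ∈ A)
    (hab : a < b) : ∃ q q' : ℚ, (q : ℝ) ∈ A ∧ (q' : ℝ) ∈ A ∧ (q : ℝ) < (q' : ℝ) := by
  obtain ⟨q, hq1, hq2⟩ := exists_rat_btwn hab
  obtain ⟨q', hq1', hq2'⟩ := exists_rat_btwn hq2
  exact ⟨q, q', hA.out ha hb ⟨hq1.le, hq2.le⟩, hA.out ha hb ⟨(hq1.trans hq1').le, hq2'.le⟩, hq1'⟩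

/-- A set which is order connected and contains no two distinct rationals and whose
member `x` is known is a subsingleton characterization helper. -/
lemma aux_subsingleton_of_no_two_rats {A : Set ℝ} (hA : A.OrdConnected)
    (h : ¬ ∃ q q' : ℚ, (q : ℝ) ∈ A ∧ (q' : ℝ) ∈ A ∧ (q : ℝ) < (q' : ℝ)) :
    A.Subsingleton := by
  intro a ha b hb
  by_contra hne
  rcases lt_or_gt_of_ne hne with h1 | h1
  · exact h (aux_two_rats hA ha hb h1)
  · exact h (aux_two_rats hA hb ha h1)

/-- Counting lemma. -/
lemma aux_cnt {ι : Type*} [DecidableEq ι] {X SA SB : Finset ι}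
    (h1 : X ∪ SA ⊆ SB) (h2 : (X ∩ SA).card ≤ 1) :
    X.card + SA.card ≤ SB.card + 1 := by
  have := Finset.card_union_add_card_inter X SA
  have hle : (X ∪ SA).card ≤ SB.card := Finset.card_le_card h1
  omega

/-- Exclusion: at most one of two disjoint order-connected sets can simultaneously
"touch `a` from the right" and meet `Ioi a`. -/
lemma aux_exc {A B : Set ℝ} (hA : A.OrdConnected) (hB : B.OrdConnected) {a : ℝ}
    (hA1 : ∀ s, a < s → (A ∩ Iic s).Nonempty) (hA2 : (A ∩ Ioi a).Nonempty)
    (hB1 : ∀ s, a < s → (B ∩ Iic s).Nonempty) (hB2 : (B ∩ Ioi a).Nonempty) :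
    ¬ Disjoint A B := by
  intro hd
  -- each set either contains `a` or meets every `Ioc a s`
  have key : ∀ (C : Set ℝ), C.OrdConnected → (∀ s, a < s → (C ∩ Iic s).Nonempty) →
      (C ∩ Ioi a).Nonempty → (a ∈ C ∨ ∀ s, a < s → (C ∩ Ioc a s).Nonempty) := by
    intro C hC h1 h2
    by_cases hp : ∃ p ∈ C, p ≤ a
    · obtain ⟨p, hp, hpa⟩ := hp
      obtain ⟨p', hp', hp'a⟩ := h2
      exact Or.inl (hC.out hp hp' ⟨hpa, le_of_lt hp'a⟩)
    · push_neg at hp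
      refine Or.inr fun s hs => ?_
      obtain ⟨q, hq, hqs⟩ := h1 s hs
      exact ⟨q, hq, hp q hq, hqs⟩
  rcases key A hA hA1 hA2 with hAk | hAk
  · rcases key B hB hB1 hB2 with hBk | hBk
    · exact Set.disjoint_left.mp hd hAk hBk
    · obtain ⟨p', hp', hp'a⟩ := hA2
      obtain ⟨z, hz, hz1, hz2⟩ := hBk p' hp'a
      exact Set.disjoint_left.mp hd (hA.out hAk hp' ⟨hz1.le, hz2⟩) hz
  · rcases key B hB hB1 hB2 with hBk | hBk
    · obtain ⟨p', hp', hp'a⟩ := hB2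
      obtain ⟨z, hz, hz1, hz2⟩ := hAk p' hp'a
      exact Set.disjoint_left.mp hd hz (hB.out hBk hp' ⟨hz1.le, hz2⟩)
    · obtain ⟨z, hzA, hz1, _⟩ := hAk (a + 1) (by linarith)
      obtain ⟨w, hwB, hw1, hw2⟩ := hBk z hz1
      obtain ⟨v, hvA, _, hv2⟩ := hAk w hw1
      exact Set.disjoint_left.mp hd (hA.out hvA hzA ⟨hv2, hw2⟩) hwB

end Aux

section Aux2

/-- The lower complement of a set. -/
def lowExt (I : Set ℝ) : Set ℝ := {x | x ∉ I ∧ ∀ z ∈ I, x < z}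

lemma lowExt_ordConnected (I : Set ℝ) : (lowExt I).OrdConnected := by
  constructor
  rintro x ⟨hx1, hx2⟩ z ⟨hz1, hz2⟩ y hy
  constructor
  · intro hyI
    exact absurd (hz2 y hyI) (not_lt.mpr hy.2)
  · intro w hw
    exact lt_of_le_of_lt hy.2 (hz2 w hw)

lemma lowExt_disjoint (I : Set ℝ) : lowExt I ∩ I = ∅ := by
  ext x; simp only [mem_inter_iff, mem_empty_iff_false, iff_false, not_and]
  intro hx; exact hx.1

lemma mem_lowExt_union {I : Set ℝ} (hI : I.OrdConnected) {x z : ℝ} (hx : x ∈ I) (hz : z < x) :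
    z ∈ lowExt I ∪ I := by
  by_cases hzI : z ∈ I
  · exact Or.inr hzI
  · refine Or.inl ⟨hzI, fun w hw => ?_⟩
    by_contra h
    push_neg at h
    exact hzI (hI.out hw hx ⟨h, hz.le⟩)

/-- Pigeonhole: if a finite family covers everything below `x`, some member of the family
contains a full interval `(w, x)`. -/
lemma aux_pigeonhole {κ : Type*} [Fintype κ] [Nonempty κ] (P : κ → Set ℝ)
    (hord : ∀ k, (P k).OrdConnected) (x : ℝ)
    (hcov : ∀ z, z < x → ∃ k, z ∈ P k) :
    ∃ k w, w < x ∧ Ioo w x ⊆ P k := by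
  -- cofinality
  have hcof : ∃ k, ∀ n : ℕ, ∃ p ∈ P k, x - 1/(n+1) < p ∧ p < x := by
    by_contra h
    push_neg at h
    choose nf hnf using h
    set Nn : ℕ := Finset.univ.sup nf with hN
    obtain ⟨k, hk⟩ := hcov (x - 1/(Nn+2)) (by
      have : (0:ℝ) < 1/(Nn+2) := by positivity
      linarith)
    have h1 : (nf k : ℝ) ≤ Nn := by exact_mod_cast Finset.le_sup (Finset.mem_univ k)
    have h2 : (1:ℝ)/(Nn+2) < 1/(nf k+1) := by
      apply one_div_lt_one_div_of_lt
      · positivity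
      · linarith
    have hle : x ≤ x - 1/(Nn+2) := hnf k (x - 1/(Nn+2)) hk (by linarith)
    have : (0:ℝ) < 1/(Nn+2) := by positivity
    linarith
  obtain ⟨k, hk⟩ := hcof
  obtain ⟨z₀, hz₀P, hz₀1, hz₀2⟩ := hk 0
  refine ⟨k, z₀, hz₀2, fun p hp => ?_⟩
  -- find a member of P k above p
  obtain ⟨n, hn⟩ := exists_nat_one_div_lt (show (0:ℝ) < x - p by linarith [hp.2])
  obtain ⟨z', hz'P, hz'1, _⟩ := hk n
  have hpz' : p < z' := by linarith
  exact (hord k).out hz₀P hz'P ⟨hp.1.le, hpz'.le⟩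

end Aux2

section Aux3

/-- Subadditivity over a finite disjoint cover by order-connected sets. -/
lemma aux_keyA (N : Set ℝ → (ℝ → ℂ) → ℝ)
    (hmono : ∀ J' J : Set ℝ, J' ⊆ J → ∀ φf, N J' φf ≤ N J φf)
    (hsub : ∀ J₁ J₂ : Set ℝ, (J₁ ∪ J₂).OrdConnected → ∀ φf, N (J₁ ∪ J₂) φf ≤ N J₁ φf + N J₂ φf)
    {ι : Type*} [Fintype ι] (T : ι → Set ℝ)
    (hord : ∀ i, (T i).OrdConnected)
    (hdisj : Pairwise fun i i' => Disjoint (T i) (T i'))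
    (f : ℝ → ℂ) (c : ℝ) (hc : ∀ i, N (T i) f ≤ c) (hc0 : 0 ≤ c) :
    ∀ n : ℕ, ∀ s : Finset ι, s.card ≤ n → ∀ P : Set ℝ, P.Nonempty → P.OrdConnected →
      P ⊆ ⋃ i ∈ s, T i → N P f ≤ n * c := by
  intro n
  induction n with
  | zero =>
    intro s hs P hPne hPoc hPsub
    interval_cases h : s.card
    · rw [Finset.card_eq_zero] at h
      subst h
      simp only [Finset.notMem_empty, iUnion_of_empty, iUnion_empty] at hPsub
      obtain ⟨p, hp⟩ := hPne
      exact absurd (hPsub hp) (by simp)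
  | succ n ih =>
    intro s hs P hPne hPoc hPsub
    set s' : Finset ι := s.filter (fun i => (T i ∩ P).Nonempty) with hs'
    have hPsub' : P ⊆ ⋃ i ∈ s', T i := by
      intro p hp
      obtain ⟨i, hi⟩ := mem_iUnion.mp (hPsub hp)
      simp only [mem_iUnion] at hi ⊢
      obtain ⟨hi1, hi2⟩ := hi
      exact ⟨i, by
        simp only [hs', Finset.mem_filter]
        exact ⟨hi1, ⟨p, hi2, hp⟩⟩, hi2⟩
    have hs'ne : s'.Nonempty := by
      obtain ⟨p, hp⟩ := hPne
      obtain ⟨i, hi⟩ := mem_iUnion.mp (hPsub' hp)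
      simp only [mem_iUnion] at hi
      exact ⟨i, hi.1⟩
    -- representative points and a maximal piece
    have hrep : ∀ i ∈ s', (T i ∩ P).Nonempty := fun i hi => (Finset.mem_filter.mp hi).2
    set pt : ι → ℝ := fun i => if h : (T i ∩ P).Nonempty then h.choose else 0 with hpt
    have hptmem : ∀ i ∈ s', pt i ∈ T i ∩ P := by
      intro i hi
      simp only [hpt, dif_pos (hrep i hi)]
      exact (hrep i hi).choose_spec
    obtain ⟨i₀, hi₀s, hi₀max⟩ := Finset.exists_max_image s' pt hs'ne
    -- split off the last piece
    set P' : Set ℝ := P \ T i₀ with hP'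
    have horient : ∀ j ∈ s', j ≠ i₀ → ∀ u ∈ T j, ∀ v ∈ T i₀, u < v := by
      intro j hj hne
      have h1 : pt j ≤ pt i₀ := hi₀max j hj
      have h2 : pt j ≠ pt i₀ := by
        intro h
        exact Set.disjoint_left.mp (hdisj hne) ((hptmem j hj).1) (h ▸ (hptmem i₀ hi₀s).1)
      exact aux_orient (hord j) (hord i₀) (hdisj hne) (hptmem j hj).1 (hptmem i₀ hi₀s).1
        (lt_of_le_of_ne h1 h2)
    by_cases hP'ne : P'.Nonempty
    · -- P' is order connected
      have hP'oc : P'.OrdConnected := by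
        constructor
        rintro u ⟨huP, huT⟩ v ⟨hvP, hvT⟩ w hw
        refine ⟨hPoc.out huP hvP hw, fun hwT => ?_⟩
        -- v is in some piece j ≠ i₀
        obtain ⟨j, hj⟩ := mem_iUnion.mp (hPsub' hvP)
        simp only [mem_iUnion] at hj
        obtain ⟨hj1, hj2⟩ := hj
        have hjne : j ≠ i₀ := fun h => hvT (h ▸ hj2)
        have := horient j hj1 hjne v hj2 w hwT
        exact absurd hw.2 (not_le.mpr this)
      have hP'sub : P' ⊆ ⋃ i ∈ s'.erase i₀, T i := by
        rintro p ⟨hpP, hpT⟩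
        obtain ⟨j, hj⟩ := mem_iUnion.mp (hPsub' hpP)
        simp only [mem_iUnion] at hj ⊢
        obtain ⟨hj1, hj2⟩ := hj
        exact ⟨j, Finset.mem_erase.mpr ⟨fun h => hpT (h ▸ hj2), hj1⟩, hj2⟩
      have hcard : (s'.erase i₀).card ≤ n := by
        have h1 : s'.card ≤ n + 1 := le_trans (Finset.card_le_card (Finset.filter_subset _ _)) hs
        have := Finset.card_erase_of_mem hi₀s
        omega
      have hih := ih (s'.erase i₀) hcard P' hP'ne hP'oc hP'sub
      -- N P ≤ N P' + N (P ∩ T i₀)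
      have hsplit : P = P' ∪ (P ∩ T i₀) := (Set.diff_union_inter P (T i₀)).symm
      have h1 : N P f ≤ N P' f + N (P ∩ T i₀) f := by
        have := hsub P' (P ∩ T i₀) (by rw [← hsplit]; exact hPoc) f
        rwa [← hsplit] at this
      have h2 : N (P ∩ T i₀) f ≤ c :=
        le_trans (hmono _ _ (Set.inter_subset_right) f) (hc i₀)
      push_cast
      linarith
    · -- P ⊆ T i₀
      have : P ⊆ T i₀ := by
        intro p hp
        by_contra h
        exact hP'ne ⟨p, hp, h⟩
      have h1 : N P f ≤ c := le_trans (hmono _ _ this f) (hc i₀)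
      have : (0:ℝ) ≤ n * c := by positivity
      push_cast
      linarith

end Aux3

section Aux4

variable {Y : Type*} {M : ℕ}

/-- Pieces counted: those meeting `Iic t`. -/
noncomputable def cntIic (T : Y → Fin M → Set ℝ) (t : ℝ) (y : Y) : Finset (Fin M) :=
  Finset.univ.filter fun i => (T y i ∩ Set.Iic t).Nonempty

/-- Rationally witnessed pieces. -/
noncomputable def cntW (T : Y → Fin M → Set ℝ) (t : ℝ) (y : Y) : Finset (Fin M) :=
  Finset.univ.filter fun i => t ∈ T y i ∨ ∃ q : ℚ, (q : ℝ) < t ∧ (q : ℝ) ∈ T y i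

/-- The extended family: pieces plus the lower complement. -/
def pieceOf (I : Set ℝ) (T : Y → Fin M → Set ℝ) (y : Y) : Option (Fin M) → Set ℝ
  | none => lowExt I
  | some i => T y i

/-- Supremum of the rationals of an (extended) piece. -/
noncomputable def uOf (I : Set ℝ) (T : Y → Fin M → Set ℝ) (y : Y) (j : Option (Fin M)) : ℝ :=
  sSup ((fun q : ℚ => (q : ℝ)) '' {q : ℚ | (q : ℝ) ∈ pieceOf I T y j})

/-- The "left neighbour of a bad singleton" predicate. -/
def badP (I : Set ℝ) (T : Y → Fin M → Set ℝ) (t : ℝ) (y : Y) (j : Option (Fin M)) : Prop :=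
  (∃ q : ℚ, (q : ℝ) ∈ pieceOf I T y j) ∧
  (∃ c : ℚ, ∀ q : ℚ, (q : ℝ) ∈ pieceOf I T y j → q ≤ c) ∧
  Irrational (uOf I T y j) ∧ uOf I T y j < t ∧
  ∃ i, (T y i).Subsingleton ∧ uOf I T y j ∈ T y i

noncomputable def cntB (I : Set ℝ) (T : Y → Fin M → Set ℝ) (t : ℝ) (y : Y) :
    Finset (Option (Fin M)) :=
  Finset.univ.filter (badP I T t y)

lemma pieceOf_ordConnected (I : Set ℝ) (T : Y → Fin M → Set ℝ)
    (hTint : ∀ y i, (T y i).OrdConnected) (y : Y) :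
    ∀ j, (pieceOf I T y j).OrdConnected := by
  rintro (_ | i)
  · exact lowExt_ordConnected I
  · exact hTint y i

lemma pieceOf_eq_of_mem {I : Set ℝ} {T : Y → Fin M → Set ℝ}
    (hTcover : ∀ y, (⋃ i, T y i) = I)
    (hTdisj : ∀ y, Pairwise fun i i' => Disjoint (T y i) (T y i'))
    (y : Y) {j₁ j₂ : Option (Fin M)} {z : ℝ}
    (h₁ : z ∈ pieceOf I T y j₁) (h₂ : z ∈ pieceOf I T y j₂) : j₁ = j₂ := by
  have hsub : ∀ i, T y i ⊆ I := fun i => (hTcover y) ▸ Set.subset_iUnion (T y) i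
  match j₁, j₂ with
  | none, none => rfl
  | none, some i =>
    have hz : z ∈ lowExt I ∩ I := ⟨h₁, hsub i h₂⟩
    rw [lowExt_disjoint I] at hz
    exact absurd hz (Set.notMem_empty z)
  | some i, none =>
    have hz : z ∈ lowExt I ∩ I := ⟨h₂, hsub i h₁⟩
    rw [lowExt_disjoint I] at hz
    exact absurd hz (Set.notMem_empty z)
  | some i₁, some i₂ =>
    by_contra hne
    have : i₁ ≠ i₂ := fun h => hne (by rw [h])
    exact Set.disjoint_left.mp (hTdisj y this) h₁ h₂

/-- The master counting identity. -/
lemma card_cntIic_eq {I : Set ℝ} (hI : I.OrdConnected) {T : Y → Fin M → Set ℝ}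
    (hTcover : ∀ y, (⋃ i, T y i) = I)
    (hTdisj : ∀ y, Pairwise fun i i' => Disjoint (T y i) (T y i'))
    (hTint : ∀ y i, (T y i).OrdConnected) (t : ℝ) (y : Y) :
    (cntIic T t y).card = (cntW T t y).card + (cntB I T t y).card := by
  have hTsub : ∀ i, T y i ⊆ I := fun i => (hTcover y) ▸ Set.subset_iUnion (T y) i
  -- W ⊆ S
  have hWS : cntW T t y ⊆ cntIic T t y := by
    intro i hi
    simp only [cntW, Finset.mem_filter, Finset.mem_univ, true_and] at hi
    simp only [cntIic, Finset.mem_filter, Finset.mem_univ, true_and]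
    rcases hi with h | ⟨q, hq1, hq2⟩
    · exact ⟨t, h, le_refl t⟩
    · exact ⟨q, hq2, hq1.le⟩
  have hsplit := Finset.card_sdiff_add_card_eq_card hWS
  -- bad elements are irrational singletons below t
  have hbad : ∀ i ∈ cntIic T t y \ cntW T t y,
      (T y i).Subsingleton ∧ ∃ x, x ∈ T y i ∧ Irrational x ∧ x < t := by
    intro i hi
    rw [Finset.mem_sdiff] at hi
    obtain ⟨hiS, hiW⟩ := hi
    simp only [cntIic, Finset.mem_filter, Finset.mem_univ, true_and] at hiS
    simp only [cntW, Finset.mem_filter, Finset.mem_univ, true_and, not_or, not_exists,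
      not_and] at hiW
    obtain ⟨x, hxT, hxt⟩ := hiS
    obtain ⟨hiW1, hiW2⟩ := hiW
    have hxlt : x < t := lt_of_le_of_ne hxt (fun h => hiW1 (h ▸ hxT))
    have hss : (T y i).Subsingleton := by
      apply aux_subsingleton_of_no_two_rats (hTint y i)
      rintro ⟨q, q', hq, hq', hlt⟩
      -- one of the two rationals is < t or we find one
      by_cases h1 : (q : ℝ) < t
      · exact hiW2 q h1 hq
      · -- q ≥ t > x, so there is a rational in (x, t) inside T y i
        push_neg at h1
        obtain ⟨r, hr1, hr2⟩ := exists_rat_btwn hxlt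
        have : (r : ℝ) ∈ T y i := (hTint y i).out hxT hq ⟨hr1.le, hr2.le.trans h1⟩
        exact hiW2 r hr2 this
    refine ⟨hss, x, hxT, ?_, hxlt⟩
    rintro ⟨q, hq⟩
    exact hiW2 q (hq ▸ hxlt) (hq ▸ hxT)
  -- the bijection between cntB and the bad singleton indices
  have hchoose : ∀ j ∈ cntB I T t y, ∃ i, (T y i).Subsingleton ∧ uOf I T y j ∈ T y i :=
    fun j hj => ((Finset.mem_filter.mp hj).2).2.2.2.2
  have hbddA : ∀ j ∈ cntB I T t y,
      BddAbove ((fun q : ℚ => (q : ℝ)) '' {q : ℚ | (q : ℝ) ∈ pieceOf I T y j}) := by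
    intro j hj
    obtain ⟨c, hc⟩ := ((Finset.mem_filter.mp hj).2).2.1
    refine ⟨(c : ℝ), ?_⟩
    rintro r ⟨q, hq, rfl⟩
    show (q : ℝ) ≤ (c : ℝ)
    exact_mod_cast hc q hq
  have hne : ∀ j ∈ cntB I T t y,
      ((fun q : ℚ => (q : ℝ)) '' {q : ℚ | (q : ℝ) ∈ pieceOf I T y j}).Nonempty := by
    intro j hj
    obtain ⟨q, hq⟩ := ((Finset.mem_filter.mp hj).2).1
    exact ⟨(q : ℝ), ⟨q, hq, rfl⟩⟩
  have hkey : (cntB I T t y).card = (cntIic T t y \ cntW T t y).card := by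
    apply Finset.card_bij (fun j hj => (hchoose j hj).choose)
    · -- maps into
      intro j hj
      obtain ⟨hss, hu⟩ := (hchoose j hj).choose_spec
      obtain ⟨_, _, hirr, hlt, _⟩ := (Finset.mem_filter.mp hj).2
      rw [Finset.mem_sdiff]
      constructor
      · simp only [cntIic, Finset.mem_filter, Finset.mem_univ, true_and]
        exact ⟨uOf I T y j, hu, hlt.le⟩
      · simp only [cntW, Finset.mem_filter, Finset.mem_univ, true_and, not_or, not_exists,
          not_and]
        constructor
        · intro ht
          exact absurd (hss ht hu ▸ hlt) (lt_irrefl t)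
        · intro q hq hqT
          exact hirr ⟨q, hss hqT hu⟩
    · -- injective
      intro j₁ hj₁ j₂ hj₂ heq
      obtain ⟨hss₁, hu₁⟩ := (hchoose j₁ hj₁).choose_spec
      obtain ⟨hss₂, hu₂⟩ := (hchoose j₂ hj₂).choose_spec
      rw [heq] at hu₁
      have hx : uOf I T y j₁ = uOf I T y j₂ := hss₂ hu₁ hu₂
      set x := uOf I T y j₂ with hxdef
      obtain ⟨_, _, hirr₂, _, _⟩ := (Finset.mem_filter.mp hj₂).2
      -- all rationals of each piece are < x
      have hlt : ∀ (j : Option (Fin M)), j ∈ cntB I T t y → uOf I T y j = x →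
          ∀ q : ℚ, (q : ℝ) ∈ pieceOf I T y j → (q : ℝ) < x := by
        intro j hj hjx q hq
        have h1 : (q : ℝ) ≤ x := hjx ▸ le_csSup (hbddA j hj) ⟨q, hq, rfl⟩
        rcases lt_or_eq_of_le h1 with h | h
        · exact h
        · exact absurd ⟨q, h⟩ hirr₂
      -- produce a common rational point
      have hsup₂ : sSup ((fun q : ℚ => (q : ℝ)) '' {q : ℚ | (q : ℝ) ∈ pieceOf I T y j₂}) = x :=
        rfl
      have hsup₁ : sSup ((fun q : ℚ => (q : ℝ)) '' {q : ℚ | (q : ℝ) ∈ pieceOf I T y j₁}) = x :=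
        hx
      obtain ⟨q₁r, hq₁⟩ := hne j₁ hj₁
      obtain ⟨q₁, hq₁T, rfl⟩ := hq₁
      have h1 : (q₁ : ℝ) < x := hlt j₁ hj₁ hx q₁ hq₁T
      obtain ⟨b₂, hb₂, hq₁b₂⟩ := exists_lt_of_lt_csSup (hne j₂ hj₂)
        (lt_of_lt_of_eq h1 hsup₂.symm)
      obtain ⟨q₂, hq₂T, rfl⟩ := hb₂
      have h2 : (q₂ : ℝ) < x := hlt j₂ hj₂ rfl q₂ hq₂T
      obtain ⟨b₃, hb₃, hq₂b₃⟩ := exists_lt_of_lt_csSup (hne j₁ hj₁)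
        (lt_of_lt_of_eq h2 hsup₁.symm)
      obtain ⟨q₃, hq₃T, rfl⟩ := hb₃
      have : (q₂ : ℝ) ∈ pieceOf I T y j₁ :=
        (pieceOf_ordConnected I T hTint y j₁).out hq₁T hq₃T ⟨hq₁b₂.le, hq₂b₃.le⟩
      exact pieceOf_eq_of_mem hTcover hTdisj y this hq₂T
    · -- surjective
      intro i hi
      obtain ⟨hss, x, hxT, hirr, hxlt⟩ := hbad i hi
      have hxI : x ∈ I := hTsub i hxT
      -- pigeonhole for the extended family
      obtain ⟨k, w, hwx, hIoo⟩ := aux_pigeonhole (pieceOf I T y)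
        (pieceOf_ordConnected I T hTint y) x (by
          intro z hz
          rcases mem_lowExt_union hI hxI hz with h | h
          · exact ⟨none, h⟩
          · rw [← hTcover y] at h
            obtain ⟨s, ⟨i', rfl⟩, hs⟩ := h
            exact ⟨some i', hs⟩)
      -- the neighbour piece lies strictly below x
      have hQlt : ∀ p ∈ pieceOf I T y k, p < x := by
        intro p hp
        by_contra h
        push_neg at h
        set z := (w + x) / 2 with hz
        have hz1 : w < z := by rw [hz]; linarith
        have hz2 : z < x := by rw [hz]; linarith
        have hzQ : z ∈ pieceOf I T y k := hIoo ⟨hz1, hz2⟩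
        have hxQ : x ∈ pieceOf I T y k :=
          (pieceOf_ordConnected I T hTint y k).out hzQ hp ⟨hz2.le, h⟩
        have : k = some i := pieceOf_eq_of_mem hTcover hTdisj y hxQ (show x ∈ pieceOf I T y (some i) from hxT)
        rw [this] at hzQ
        exact absurd (hss hzQ hxT) (ne_of_lt hz2)
      -- uOf k = x
      have hrats : ∀ w' : ℝ, w' < x → ∃ q : ℚ, (q : ℝ) ∈ pieceOf I T y k ∧ w' < (q : ℝ) := by
        intro w' hw'
        obtain ⟨q, hq1, hq2⟩ := exists_rat_btwn (show max w w' < x from max_lt hwx hw')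
        exact ⟨q, hIoo ⟨(le_max_left w w').trans_lt hq1, hq2⟩, (le_max_right w w').trans_lt hq1⟩
      have huk : uOf I T y k = x := by
        apply csSup_eq_of_forall_le_of_forall_lt_exists_gt
        · obtain ⟨q, hq, _⟩ := hrats w hwx
          exact ⟨(q : ℝ), ⟨q, hq, rfl⟩⟩
        · rintro r ⟨q, hq, rfl⟩
          exact (hQlt _ hq).le
        · intro w' hw'
          obtain ⟨q, hq1, hq2⟩ := hrats w' hw'
          exact ⟨(q : ℝ), ⟨q, hq1, rfl⟩, hq2⟩
      have hkB : k ∈ cntB I T t y := by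
        simp only [cntB, Finset.mem_filter, Finset.mem_univ, true_and, badP]
        refine ⟨?_, ?_, ?_, ?_, i, hss, ?_⟩
        · obtain ⟨q, hq, _⟩ := hrats w hwx
          exact ⟨q, hq⟩
        · obtain ⟨c, hc1⟩ := exists_rat_gt x
          exact ⟨c, fun q hq => by exact_mod_cast (hQlt _ hq).le.trans hc1.le⟩
        · rw [huk]; exact hirr
        · rw [huk]; exact hxlt
        · rw [huk]; exact hxT
      refine ⟨k, hkB, ?_⟩
      -- the chosen singleton for k is i
      obtain ⟨hss', hu'⟩ := (hchoose k hkB).choose_spec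
      have hxT' : uOf I T y k ∈ T y i := by rw [huk]; exact hxT
      by_contra hne'
      exact Set.disjoint_left.mp (hTdisj y (fun h => hne' h)) hu' hxT'
  omega

end Aux4

section Aux5

variable {Y : Type*} [MeasurableSpace Y] {M : ℕ} {I : Set ℝ} {T : Y → Fin M → Set ℝ}

lemma ms_graphPiece (hTmeas : ∀ i : Fin M, MeasurableSet {p : Y × ℝ | p.2 ∈ T p.1 i})
    (j : Option (Fin M)) : MeasurableSet {p : Y × ℝ | p.2 ∈ pieceOf I T p.1 j} := by
  match j with
  | none =>
    exact (lowExt_ordConnected I).measurableSet.preimage measurable_snd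
  | some i => exact hTmeas i

lemma ms_memPiece (hTmeas : ∀ i : Fin M, MeasurableSet {p : Y × ℝ | p.2 ∈ T p.1 i})
    (j : Option (Fin M)) (x : ℝ) : MeasurableSet {y : Y | x ∈ pieceOf I T y j} :=
  (ms_graphPiece hTmeas j).preimage
    (measurable_id.prodMk measurable_const : Measurable fun y : Y => (y, x))

lemma ms_memT (hTmeas : ∀ i : Fin M, MeasurableSet {p : Y × ℝ | p.2 ∈ T p.1 i})
    (i : Fin M) (x : ℝ) : MeasurableSet {y : Y | x ∈ T y i} :=
  (hTmeas i).preimage (measurable_id.prodMk measurable_const : Measurable fun y : Y => (y, x))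

lemma meas_uOf (hTmeas : ∀ i : Fin M, MeasurableSet {p : Y × ℝ | p.2 ∈ T p.1 i})
    (j : Option (Fin M)) : Measurable fun y => uOf I T y j := by
  have hGm1 : MeasurableSet {y : Y | ∃ q : ℚ, (q : ℝ) ∈ pieceOf I T y j} := by
    rw [Set.setOf_exists]
    exact MeasurableSet.iUnion fun q => ms_memPiece hTmeas j q
  have hGm2 : MeasurableSet {y : Y | ∃ c' : ℚ, ∀ q : ℚ, (q : ℝ) ∈ pieceOf I T y j → q ≤ c'} := by
    rw [Set.setOf_exists]
    refine MeasurableSet.iUnion fun c' => ?_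
    rw [Set.setOf_forall]
    refine MeasurableSet.iInter fun q => ?_
    by_cases h : q ≤ c'
    · simp only [h, implies_true]; exact MeasurableSet.univ
    · have : {y : Y | (q : ℝ) ∈ pieceOf I T y j → q ≤ c'} =
          {y : Y | (q : ℝ) ∈ pieceOf I T y j}ᶜ := by
        ext y; simp [h]
      rw [this]
      exact (ms_memPiece hTmeas j q).compl
  have hGm : MeasurableSet {y : Y | (∃ q : ℚ, (q : ℝ) ∈ pieceOf I T y j) ∧
      (∃ c' : ℚ, ∀ q : ℚ, (q : ℝ) ∈ pieceOf I T y j → q ≤ c')} := hGm1.inter hGm2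
  apply measurable_of_Iio
  intro c
  have heq : (fun y => uOf I T y j) ⁻¹' Set.Iio c =
      ({y : Y | (∃ q : ℚ, (q : ℝ) ∈ pieceOf I T y j) ∧
          (∃ c' : ℚ, ∀ q : ℚ, (q : ℝ) ∈ pieceOf I T y j → q ≤ c')} ∩
        ⋃ c' : ℚ, {y : Y | (c' : ℝ) < c ∧ ∀ q : ℚ, (q : ℝ) ∈ pieceOf I T y j → q ≤ c'}) ∪
      ({y : Y | (∃ q : ℚ, (q : ℝ) ∈ pieceOf I T y j) ∧
          (∃ c' : ℚ, ∀ q : ℚ, (q : ℝ) ∈ pieceOf I T y j → q ≤ c')}ᶜ ∩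
        {_y : Y | (0 : ℝ) < c}) := by
    ext y
    simp only [Set.mem_preimage, Set.mem_Iio, Set.mem_union, Set.mem_inter_iff, Set.mem_compl_iff,
      Set.mem_iUnion, Set.mem_setOf_eq]
    by_cases hG : (∃ q : ℚ, (q : ℝ) ∈ pieceOf I T y j) ∧
        (∃ c' : ℚ, ∀ q : ℚ, (q : ℝ) ∈ pieceOf I T y j → q ≤ c')
    · have hne : ((fun q : ℚ => (q : ℝ)) '' {q : ℚ | (q : ℝ) ∈ pieceOf I T y j}).Nonempty := by
        obtain ⟨q, hq⟩ := hG.1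
        exact ⟨(q : ℝ), ⟨q, hq, rfl⟩⟩
      have hbdd : BddAbove ((fun q : ℚ => (q : ℝ)) '' {q : ℚ | (q : ℝ) ∈ pieceOf I T y j}) := by
        obtain ⟨c', hc'⟩ := hG.2
        refine ⟨(c' : ℝ), ?_⟩
        rintro r ⟨q, hq, rfl⟩
        show (q : ℝ) ≤ (c' : ℝ)
        exact_mod_cast hc' q hq
      constructor
      · intro hu
        refine Or.inl ⟨hG, ?_⟩
        obtain ⟨c', hc1, hc2⟩ := exists_rat_btwn hu
        refine ⟨c', hc2, fun q hq => ?_⟩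
        have : (q : ℝ) ≤ uOf I T y j := le_csSup hbdd ⟨q, hq, rfl⟩
        exact_mod_cast this.trans hc1.le
      · rintro (⟨-, c', hc1, hc2⟩ | ⟨hnG, -⟩)
        · have : uOf I T y j ≤ (c' : ℝ) := by
            apply csSup_le hne
            rintro r ⟨q, hq, rfl⟩
            show (q : ℝ) ≤ (c' : ℝ)
            exact_mod_cast hc2 q hq
          exact lt_of_le_of_lt this hc1
        · exact absurd hG hnG
    · have hu0 : uOf I T y j = 0 := by
        by_cases hne : ∃ q : ℚ, (q : ℝ) ∈ pieceOf I T y j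
        · have hnb : ¬ BddAbove ((fun q : ℚ => (q : ℝ)) '' {q : ℚ | (q : ℝ) ∈ pieceOf I T y j}) := by
            intro ⟨b, hb⟩
            obtain ⟨c', hc'⟩ := exists_rat_gt b
            refine hG ⟨hne, c', fun q hq => ?_⟩
            have : (q : ℝ) ≤ b := hb ⟨q, hq, rfl⟩
            exact_mod_cast this.trans hc'.le
          exact Real.sSup_of_not_bddAbove hnb
        · have : ((fun q : ℚ => (q : ℝ)) '' {q : ℚ | (q : ℝ) ∈ pieceOf I T y j}) = ∅ := by
            rw [Set.image_eq_empty]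
            ext q; simp only [Set.mem_setOf_eq, Set.mem_empty_iff_false, iff_false]
            exact fun hq => hne ⟨q, hq⟩
          rw [uOf, this]
          exact Real.sSup_empty
      rw [hu0]
      constructor
      · intro hc; exact Or.inr ⟨hG, hc⟩
      · rintro (⟨hGp, -⟩ | ⟨-, hc⟩)
        · exact absurd hGp hG
        · exact hc
  rw [heq]
  refine MeasurableSet.union (hGm.inter ?_) (hGm.compl.inter (MeasurableSet.const _))
  refine MeasurableSet.iUnion fun c' => ?_
  by_cases h : (c' : ℝ) < c
  · have : {y : Y | (c' : ℝ) < c ∧ ∀ q : ℚ, (q : ℝ) ∈ pieceOf I T y j → q ≤ c'} =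
        ⋂ q : ℚ, {y : Y | (q : ℝ) ∈ pieceOf I T y j → q ≤ c'} := by
      ext y; simp [h, Set.setOf_forall]
    rw [this]
    refine MeasurableSet.iInter fun q => ?_
    by_cases hq : q ≤ c'
    · simp only [hq, implies_true]; exact MeasurableSet.univ
    · have : {y : Y | (q : ℝ) ∈ pieceOf I T y j → q ≤ c'} =
          {y : Y | (q : ℝ) ∈ pieceOf I T y j}ᶜ := by
        ext y; simp [hq]
      rw [this]
      exact (ms_memPiece hTmeas j q).compl
  · have : {y : Y | (c' : ℝ) < c ∧ ∀ q : ℚ, (q : ℝ) ∈ pieceOf I T y j → q ≤ c'} = ∅ := by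
      ext y; simp [h]
    rw [this]
    exact MeasurableSet.empty

lemma ms_sing (hTmeas : ∀ i : Fin M, MeasurableSet {p : Y × ℝ | p.2 ∈ T p.1 i})
    (hTint : ∀ y i, (T y i).OrdConnected) (i : Fin M) :
    MeasurableSet {y : Y | (T y i).Subsingleton} := by
  have heq : {y : Y | (T y i).Subsingleton} =
      ⋂ q : ℚ, ⋂ q' : ℚ, {y : Y | ¬((q : ℝ) ∈ T y i ∧ (q' : ℝ) ∈ T y i ∧ (q : ℝ) < (q' : ℝ))} := by
    ext y
    simp only [Set.mem_setOf_eq, Set.mem_iInter]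
    constructor
    · rintro hss q q' ⟨h1, h2, h3⟩
      exact absurd (hss h1 h2) (ne_of_lt h3)
    · intro h
      apply aux_subsingleton_of_no_two_rats (hTint y i)
      rintro ⟨q, q', h1, h2, h3⟩
      exact h q q' ⟨h1, h2, h3⟩
  rw [heq]
  refine MeasurableSet.iInter fun q => MeasurableSet.iInter fun q' => ?_
  exact (((ms_memT hTmeas i q).inter ((ms_memT hTmeas i q').inter
    (MeasurableSet.const _))).compl)

lemma ms_badP (hTmeas : ∀ i : Fin M, MeasurableSet {p : Y × ℝ | p.2 ∈ T p.1 i})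
    (hTint : ∀ y i, (T y i).OrdConnected) (t : ℝ) (j : Option (Fin M)) :
    MeasurableSet {y : Y | badP I T t y j} := by
  have h1 : MeasurableSet {y : Y | ∃ q : ℚ, (q : ℝ) ∈ pieceOf I T y j} := by
    rw [Set.setOf_exists]; exact MeasurableSet.iUnion fun q => ms_memPiece hTmeas j q
  have h2 : MeasurableSet {y : Y | ∃ c' : ℚ, ∀ q : ℚ, (q : ℝ) ∈ pieceOf I T y j → q ≤ c'} := by
    rw [Set.setOf_exists]
    refine MeasurableSet.iUnion fun c' => ?_
    rw [Set.setOf_forall]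
    refine MeasurableSet.iInter fun q => ?_
    by_cases h : q ≤ c'
    · simp only [h, implies_true]; exact MeasurableSet.univ
    · have : {y : Y | (q : ℝ) ∈ pieceOf I T y j → q ≤ c'} =
          {y : Y | (q : ℝ) ∈ pieceOf I T y j}ᶜ := by
        ext y; simp [h]
      rw [this]
      exact (ms_memPiece hTmeas j q).compl
  have h3 : MeasurableSet {y : Y | Irrational (uOf I T y j)} := by
    have : {y : Y | Irrational (uOf I T y j)} =
        (fun y => uOf I T y j) ⁻¹' (Set.range ((↑) : ℚ → ℝ))ᶜ := rfl
    rw [this]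
    exact ((Set.countable_range _).measurableSet.compl).preimage (meas_uOf hTmeas j)
  have h4 : MeasurableSet {y : Y | uOf I T y j < t} :=
    measurableSet_Iio.preimage (meas_uOf hTmeas j)
  have h5 : MeasurableSet {y : Y | ∃ i, (T y i).Subsingleton ∧ uOf I T y j ∈ T y i} := by
    rw [Set.setOf_exists]
    refine MeasurableSet.iUnion fun i => ?_
    refine (ms_sing hTmeas hTint i).inter ?_
    exact (hTmeas i).preimage (measurable_id.prodMk (meas_uOf hTmeas j))
  have : {y : Y | badP I T t y j} = {y : Y | ∃ q : ℚ, (q : ℝ) ∈ pieceOf I T y j} ∩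
      ({y : Y | ∃ c' : ℚ, ∀ q : ℚ, (q : ℝ) ∈ pieceOf I T y j → q ≤ c'} ∩
        ({y : Y | Irrational (uOf I T y j)} ∩ ({y : Y | uOf I T y j < t} ∩
          {y : Y | ∃ i, (T y i).Subsingleton ∧ uOf I T y j ∈ T y i}))) := by
    ext y
    simp only [badP, Set.mem_inter_iff, Set.mem_setOf_eq, and_assoc]
  rw [this]
  exact h1.inter (h2.inter (h3.inter (h4.inter h5)))

lemma meas_card_filter {κ : Type*} [Fintype κ] (A : Y → Finset κ) (p : κ → Y → Prop)
    (hA : ∀ y k, k ∈ A y ↔ p k y) (hp : ∀ k, MeasurableSet {y : Y | p k y}) :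
    Measurable fun y => ((A y).card : ℝ) := by
  have heq : (fun y => ((A y).card : ℝ)) =
      fun y => ∑ k : κ, if p k y then (1 : ℝ) else 0 := by
    funext y
    have h1 : A y = Finset.univ.filter (fun k => p k y) := by
      ext k; simp [hA y k]
    rw [h1, Finset.card_filter]
    push_cast
    try rfl
  rw [heq]
  exact Finset.measurable_sum _ fun k _ => Measurable.ite (hp k) measurable_const measurable_const

lemma meas_card_cntIic (hI : I.OrdConnected)
    (hTmeas : ∀ i : Fin M, MeasurableSet {p : Y × ℝ | p.2 ∈ T p.1 i})
    (hTcover : ∀ y, (⋃ i, T y i) = I)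
    (hTdisj : ∀ y, Pairwise fun i i' => Disjoint (T y i) (T y i'))
    (hTint : ∀ y i, (T y i).OrdConnected) (t : ℝ) :
    Measurable fun y => ((cntIic T t y).card : ℝ) := by
  have heq : (fun y => ((cntIic T t y).card : ℝ)) =
      fun y => ((cntW T t y).card : ℝ) + ((cntB I T t y).card : ℝ) := by
    funext y
    rw [card_cntIic_eq hI hTcover hTdisj hTint t y]
    push_cast
    ring
  rw [heq]
  refine Measurable.add ?_ ?_
  · apply meas_card_filter (A := fun y => cntW T t y)
      (p := fun (i : Fin M) y => t ∈ T y i ∨ ∃ q : ℚ, (q : ℝ) < t ∧ (q : ℝ) ∈ T y i)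
      (hA := fun y k => by simp [cntW])
    intro i
    have : {y : Y | t ∈ T y i ∨ ∃ q : ℚ, (q : ℝ) < t ∧ (q : ℝ) ∈ T y i} =
        {y : Y | t ∈ T y i} ∪ ⋃ q : ℚ, {y : Y | (q : ℝ) < t ∧ (q : ℝ) ∈ T y i} := by
      ext y; simp only [Set.mem_setOf_eq, Set.mem_union, Set.mem_iUnion]
    rw [this]
    refine (ms_memT hTmeas i t).union (MeasurableSet.iUnion fun q => ?_)
    by_cases h : (q : ℝ) < t
    · have : {y : Y | (q : ℝ) < t ∧ (q : ℝ) ∈ T y i} = {y : Y | (q : ℝ) ∈ T y i} := by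
        ext y; simp [h]
      rw [this]; exact ms_memT hTmeas i q
    · have : {y : Y | (q : ℝ) < t ∧ (q : ℝ) ∈ T y i} = ∅ := by
        ext y; simp [h]
      rw [this]; exact MeasurableSet.empty
  · exact meas_card_filter (A := fun y => cntB I T t y)
      (p := fun (j : Option (Fin M)) y => badP I T t y j)
      (fun y k => by simp [cntB]) (fun j => ms_badP hTmeas hTint t j)

end Aux5

section Aux6

variable {Y : Type*} {M : ℕ}

noncomputable def cntIio (T : Y → Fin M → Set ℝ) (t : ℝ) (y : Y) : Finset (Fin M) :=
  Finset.univ.filter fun i => (T y i ∩ Set.Iio t).Nonempty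

noncomputable def cntPlus (T : Y → Fin M → Set ℝ) (t : ℝ) (y : Y) : Finset (Fin M) :=
  Finset.univ.filter fun i => ∀ s, t < s → (T y i ∩ Set.Iic s).Nonempty

noncomputable def cntTot (T : Y → Fin M → Set ℝ) (y : Y) : Finset (Fin M) :=
  Finset.univ.filter fun i => (T y i).Nonempty

noncomputable def cntBet (T : Y → Fin M → Set ℝ) (y : Y) : Finset (Fin M) :=
  Finset.univ.filter fun i => ∀ s : ℝ, (T y i ∩ Set.Iic s).Nonempty

lemma stab_Iio (T : Y → Fin M → Set ℝ) (b : ℝ) (y : Y) :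
    ∃ Nn : ℕ, ∀ n ≥ Nn, cntIic T (b - 1/(n+1)) y = cntIio T b y := by
  set nf : Fin M → ℕ := fun i =>
    if h : (T y i ∩ Set.Iio b).Nonempty then
      (exists_nat_one_div_lt (show (0:ℝ) < b - h.choose from by
        have := h.choose_spec.2; simp only [Set.mem_Iio] at this; linarith)).choose
    else 0 with hnf
  refine ⟨Finset.univ.sup nf, fun n hn => ?_⟩
  apply Finset.Subset.antisymm
  · intro i hi
    simp only [cntIic, Finset.mem_filter, Finset.mem_univ, true_and] at hi
    simp only [cntIio, Finset.mem_filter, Finset.mem_univ, true_and]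
    obtain ⟨x, hx1, hx2⟩ := hi
    refine ⟨x, hx1, ?_⟩
    simp only [Set.mem_Iic] at hx2
    simp only [Set.mem_Iio]
    have : (0:ℝ) < 1/(n+1) := by positivity
    linarith
  · intro i hi
    simp only [cntIio, Finset.mem_filter, Finset.mem_univ, true_and] at hi
    simp only [cntIic, Finset.mem_filter, Finset.mem_univ, true_and]
    have hch := hi.choose_spec
    have hnfi : nf i = (exists_nat_one_div_lt (show (0:ℝ) < b - hi.choose from by
        have := hi.choose_spec.2; simp only [Set.mem_Iio] at this; linarith)).choose := by
      rw [hnf]; simp only [dif_pos hi]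
    have hspec := (exists_nat_one_div_lt (show (0:ℝ) < b - hi.choose from by
        have := hi.choose_spec.2; simp only [Set.mem_Iio] at this; linarith)).choose_spec
    refine ⟨hi.choose, hch.1, ?_⟩
    simp only [Set.mem_Iic]
    have h1 : nf i ≤ n := le_trans (Finset.le_sup (Finset.mem_univ i)) hn
    have h2 : (1:ℝ)/(n+1) ≤ 1/(nf i+1) := by
      apply one_div_le_one_div_of_le
      · positivity
      · exact_mod_cast by omega
    rw [hnfi] at h2
    linarith [hspec, h2]

lemma stab_plus (T : Y → Fin M → Set ℝ) (a : ℝ) (y : Y) :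
    ∃ Nn : ℕ, ∀ n ≥ Nn, cntIic T (a + 1/(n+1)) y = cntPlus T a y := by
  set nf : Fin M → ℕ := fun i =>
    if h : ∃ s, a < s ∧ (T y i ∩ Set.Iic s) = ∅ then
      (exists_nat_one_div_lt (show (0:ℝ) < h.choose - a from by linarith [h.choose_spec.1])).choose
    else 0 with hnf
  refine ⟨Finset.univ.sup nf, fun n hn => ?_⟩
  apply Finset.Subset.antisymm
  · intro i hi
    simp only [cntIic, Finset.mem_filter, Finset.mem_univ, true_and] at hi
    simp only [cntPlus, Finset.mem_filter, Finset.mem_univ, true_and]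
    by_contra hcon
    push_neg at hcon
    obtain ⟨s, hs1, hs2⟩ := hcon
    rw [← Set.not_nonempty_iff_eq_empty] at hs2
    rw [Set.not_nonempty_iff_eq_empty] at hs2
    have hex : ∃ s, a < s ∧ (T y i ∩ Set.Iic s) = ∅ := ⟨s, hs1, hs2⟩
    have hnfi : nf i = (exists_nat_one_div_lt (show (0:ℝ) < hex.choose - a from by
        linarith [hex.choose_spec.1])).choose := by
      rw [hnf]; simp only [dif_pos hex]
    have hspec := (exists_nat_one_div_lt (show (0:ℝ) < hex.choose - a from by
        linarith [hex.choose_spec.1])).choose_spec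
    have h1 : nf i ≤ n := le_trans (Finset.le_sup (Finset.mem_univ i)) hn
    have h2 : (1:ℝ)/(n+1) ≤ 1/(nf i+1) := by
      apply one_div_le_one_div_of_le
      · positivity
      · exact_mod_cast by omega
    rw [hnfi] at h2
    -- a + 1/(n+1) ≤ hex.choose, so T y i ∩ Iic (a+1/(n+1)) ⊆ T y i ∩ Iic hex.choose = ∅
    obtain ⟨x, hx1, hx2⟩ := hi
    simp only [Set.mem_Iic] at hx2
    have hxs : x ≤ hex.choose := by linarith [hspec]
    have : x ∈ T y i ∩ Set.Iic hex.choose := ⟨hx1, hxs⟩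
    rw [hex.choose_spec.2] at this
    exact this
  · intro i hi
    simp only [cntPlus, Finset.mem_filter, Finset.mem_univ, true_and] at hi
    simp only [cntIic, Finset.mem_filter, Finset.mem_univ, true_and]
    exact hi (a + 1/(n+1)) (by
      have : (0:ℝ) < 1/(n+1) := by positivity
      linarith)

lemma stab_tot (T : Y → Fin M → Set ℝ) (y : Y) :
    ∃ Nn : ℕ, ∀ n ≥ Nn, cntIic T (n : ℝ) y = cntTot T y := by
  set nf : Fin M → ℕ := fun i =>
    if h : (T y i).Nonempty then (exists_nat_ge h.choose).choose else 0 with hnf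
  refine ⟨Finset.univ.sup nf, fun n hn => ?_⟩
  apply Finset.Subset.antisymm
  · intro i hi
    simp only [cntIic, Finset.mem_filter, Finset.mem_univ, true_and] at hi
    simp only [cntTot, Finset.mem_filter, Finset.mem_univ, true_and]
    exact ⟨hi.choose, hi.choose_spec.1⟩
  · intro i hi
    simp only [cntTot, Finset.mem_filter, Finset.mem_univ, true_and] at hi
    simp only [cntIic, Finset.mem_filter, Finset.mem_univ, true_and]
    have hnfi : nf i = (exists_nat_ge hi.choose).choose := by
      rw [hnf]; simp only [dif_pos hi]
    have hspec := (exists_nat_ge hi.choose).choose_spec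
    have h1 : nf i ≤ n := le_trans (Finset.le_sup (Finset.mem_univ i)) hn
    refine ⟨hi.choose, hi.choose_spec, ?_⟩
    simp only [Set.mem_Iic]
    rw [hnfi] at h1
    have : ((exists_nat_ge hi.choose).choose : ℝ) ≤ n := by exact_mod_cast h1
    linarith [hspec]

lemma stab_bet (T : Y → Fin M → Set ℝ) (y : Y) :
    ∃ Nn : ℕ, ∀ n ≥ Nn, cntIic T (-(n : ℝ)) y = cntBet T y := by
  set nf : Fin M → ℕ := fun i =>
    if h : ∃ s : ℝ, (T y i ∩ Set.Iic s) = ∅ then (exists_nat_ge (-h.choose)).choose else 0 with hnf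
  refine ⟨Finset.univ.sup nf, fun n hn => ?_⟩
  apply Finset.Subset.antisymm
  · intro i hi
    simp only [cntIic, Finset.mem_filter, Finset.mem_univ, true_and] at hi
    simp only [cntBet, Finset.mem_filter, Finset.mem_univ, true_and]
    intro s
    by_contra hcon
    rw [Set.not_nonempty_iff_eq_empty] at hcon
    have hex : ∃ s : ℝ, (T y i ∩ Set.Iic s) = ∅ := ⟨s, hcon⟩
    have hnfi : nf i = (exists_nat_ge (-hex.choose)).choose := by
      rw [hnf]; simp only [dif_pos hex]
    have hspec := (exists_nat_ge (-hex.choose)).choose_spec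
    have h1 : nf i ≤ n := le_trans (Finset.le_sup (Finset.mem_univ i)) hn
    obtain ⟨x, hx1, hx2⟩ := hi
    simp only [Set.mem_Iic] at hx2
    have : ((exists_nat_ge (-hex.choose)).choose : ℝ) ≤ n := by exact_mod_cast hnfi ▸ h1
    have hxs : x ≤ hex.choose := by linarith [hspec]
    have : x ∈ T y i ∩ Set.Iic hex.choose := ⟨hx1, hxs⟩
    rw [hex.choose_spec] at this
    exact this
  · intro i hi
    simp only [cntBet, Finset.mem_filter, Finset.mem_univ, true_and] at hi
    simp only [cntIic, Finset.mem_filter, Finset.mem_univ, true_and]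
    exact hi (-(n:ℝ))

end Aux6

section Aux7

variable {Y : Type*} {M : ℕ} {T : Y → Fin M → Set ℝ} {y : Y}

lemma cnt_mono {s t : ℝ} (h : s ≤ t) : cntIic T s y ⊆ cntIic T t y := by
  intro i hi
  simp only [cntIic, Finset.mem_filter, Finset.mem_univ, true_and] at hi ⊢
  obtain ⟨x, hx1, hx2⟩ := hi
  exact ⟨x, hx1, le_trans hx2 h⟩

lemma cntIic_subset_cntPlus (t : ℝ) : cntIic T t y ⊆ cntPlus T t y := by
  intro i hi
  simp only [cntIic, Finset.mem_filter, Finset.mem_univ, true_and] at hi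
  simp only [cntPlus, Finset.mem_filter, Finset.mem_univ, true_and]
  intro s hs
  obtain ⟨x, hx1, hx2⟩ := hi
  exact ⟨x, hx1, le_trans hx2 hs.le⟩

lemma cntPlus_subset_cntIio {a b : ℝ} (h : a < b) : cntPlus T a y ⊆ cntIio T b y := by
  intro i hi
  simp only [cntPlus, Finset.mem_filter, Finset.mem_univ, true_and] at hi
  simp only [cntIio, Finset.mem_filter, Finset.mem_univ, true_and]
  obtain ⟨x, hx1, hx2⟩ := hi ((a+b)/2) (by linarith)
  simp only [Set.mem_Iic] at hx2
  exact ⟨x, hx1, by simp only [Set.mem_Iio]; linarith⟩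

lemma cntIio_subset_cntIic (b : ℝ) : cntIio T b y ⊆ cntIic T b y := by
  intro i hi
  simp only [cntIio, Finset.mem_filter, Finset.mem_univ, true_and] at hi
  simp only [cntIic, Finset.mem_filter, Finset.mem_univ, true_and]
  obtain ⟨x, hx1, hx2⟩ := hi
  simp only [Set.mem_Iio] at hx2
  exact ⟨x, hx1, by simp only [Set.mem_Iic]; linarith⟩

lemma cntIic_subset_cntTot (t : ℝ) : cntIic T t y ⊆ cntTot T y := by
  intro i hi
  simp only [cntIic, Finset.mem_filter, Finset.mem_univ, true_and] at hi
  simp only [cntTot, Finset.mem_filter, Finset.mem_univ, true_and]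
  exact ⟨hi.choose, hi.choose_spec.1⟩

lemma cntPlus_subset_cntTot (t : ℝ) : cntPlus T t y ⊆ cntTot T y := by
  intro i hi
  simp only [cntPlus, Finset.mem_filter, Finset.mem_univ, true_and] at hi
  simp only [cntTot, Finset.mem_filter, Finset.mem_univ, true_and]
  obtain ⟨x, hx1, _⟩ := hi (t+1) (by linarith)
  exact ⟨x, hx1⟩

lemma cntBet_subset_cntIio (b : ℝ) : cntBet T y ⊆ cntIio T b y := by
  intro i hi
  simp only [cntBet, Finset.mem_filter, Finset.mem_univ, true_and] at hi
  simp only [cntIio, Finset.mem_filter, Finset.mem_univ, true_and]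
  obtain ⟨x, hx1, hx2⟩ := hi (b-1)
  simp only [Set.mem_Iic] at hx2
  exact ⟨x, hx1, by simp only [Set.mem_Iio]; linarith⟩

lemma cntBet_subset_cntTot : cntBet T y ⊆ cntTot T y := by
  intro i hi
  simp only [cntBet, Finset.mem_filter, Finset.mem_univ, true_and] at hi
  simp only [cntTot, Finset.mem_filter, Finset.mem_univ, true_and]
  obtain ⟨x, hx1, _⟩ := hi 0
  exact ⟨x, hx1⟩

lemma card_cntBet_le_one (hTint : ∀ y i, (T y i).OrdConnected)
    (hTdisj : ∀ y, Pairwise fun i i' => Disjoint (T y i) (T y i')) :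
    (cntBet T y).card ≤ 1 := by
  rw [Finset.card_le_one]
  intro i hi j hj
  simp only [cntBet, Finset.mem_filter, Finset.mem_univ, true_and] at hi hj
  obtain ⟨a, ha1, _⟩ := hi 0
  obtain ⟨b, hb1, hb2⟩ := hj a
  simp only [Set.mem_Iic] at hb2
  obtain ⟨c, hc1, hc2⟩ := hi b
  simp only [Set.mem_Iic] at hc2
  have : b ∈ T y i := (hTint y i).out hc1 ha1 ⟨hc2, hb2⟩
  by_contra hne
  exact Set.disjoint_left.mp (hTdisj y hne) this hb1

/-- Middle/last piece exclusion. -/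
lemma card_inter_cntPlus_le_one (hTint : ∀ y i, (T y i).OrdConnected)
    (hTdisj : ∀ y, Pairwise fun i i' => Disjoint (T y i) (T y i'))
    {P : Set ℝ} {a : ℝ} (hP : P ⊆ Set.Ioi a) :
    ((Finset.univ.filter fun i => (T y i ∩ P).Nonempty) ∩ cntPlus T a y).card ≤ 1 := by
  rw [Finset.card_le_one]
  intro i hi j hj
  rw [Finset.mem_inter] at hi hj
  obtain ⟨hi1, hi2⟩ := hi
  obtain ⟨hj1, hj2⟩ := hj
  simp only [Finset.mem_filter, Finset.mem_univ, true_and] at hi1 hj1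
  simp only [cntPlus, Finset.mem_filter, Finset.mem_univ, true_and] at hi2 hj2
  by_contra hne
  refine aux_exc (hTint y i) (hTint y j) hi2 ?_ hj2 ?_ (hTdisj y hne)
  · obtain ⟨x, hx1, hx2⟩ := hi1
    exact ⟨x, hx1, hP hx2⟩
  · obtain ⟨x, hx1, hx2⟩ := hj1
    exact ⟨x, hx1, hP hx2⟩

end Aux7

section Aux8

/-- The single-piece bound: combine `keyA` with Minkowski. -/
lemma aux_piece_bound {Y : Type*} [MeasurableSpace Y] (ν : Measure Y)
    (N : Set ℝ → (ℝ → ℂ) → ℝ)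
    (hmono : ∀ J' J : Set ℝ, J' ⊆ J → ∀ φf, N J' φf ≤ N J φf)
    (hsub : ∀ J₁ J₂ : Set ℝ, (J₁ ∪ J₂).OrdConnected → ∀ φf, N (J₁ ∪ J₂) φf ≤ N J₁ φf + N J₂ φf)
    {M : ℕ} (hM : 1 ≤ M) (φ : Y → ℝ → ℂ) (F : Y → ℝ) (hF : Integrable F ν)
    (hF0 : ∀ y, 0 ≤ F y)
    (I : Set ℝ) (T : Y → Fin M → Set ℝ)
    (hTcover : ∀ y, (⋃ i, T y i) = I)
    (hTdisj : ∀ y, Pairwise fun i i' => Disjoint (T y i) (T y i'))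
    (hTint : ∀ y i, (T y i).OrdConnected)
    (hbound : ∀ y i, N (T y i) (φ y) ≤ F y)
    (hMink : ∀ (J : Set ℝ) (g : Y → ℝ), Integrable g ν →
      (∀ y, N J (φ y) ≤ g y) →
      N J (fun t => ∫ y, φ y t ∂ν) ≤ ∫ y, g y ∂ν)
    (P : Set ℝ) (hPoc : P.OrdConnected) (hPI : P ⊆ I)
    (cnt : Y → ℕ) (hmeas : Measurable fun y => (cnt y : ℝ)) (hbd : ∀ y, cnt y ≤ M + 1)
    (hcnt : ∀ y, ((Finset.univ.filter fun i => (T y i ∩ P).Nonempty).card ≤ cnt y))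
    (hpos : ∀ y, 1 ≤ cnt y) :
    N P (fun t => ∫ y, φ y t ∂ν) ≤ ∫ y, (cnt y : ℝ) * F y ∂ν := by
  apply hMink
  · refine Integrable.bdd_mul hF hmeas.aestronglyMeasurable (c := (M : ℝ) + 1) (ae_of_all _ fun y => ?_)
    rw [Real.norm_natCast]
    exact_mod_cast hbd y
  · intro y
    rcases Set.eq_empty_or_nonempty P with hPe | hPne
    · have h1 : N P (φ y) ≤ F y := by
        rw [hPe]
        exact le_trans (hmono ∅ (T y ⟨0, hM⟩) (Set.empty_subset _) (φ y)) (hbound y ⟨0, hM⟩)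
      have h2 : (1 : ℝ) * F y ≤ (cnt y : ℝ) * F y := by
        apply mul_le_mul_of_nonneg_right _ (hF0 y)
        exact_mod_cast hpos y
      linarith
    · have hsubP : P ⊆ ⋃ i ∈ (Finset.univ.filter fun i => (T y i ∩ P).Nonempty), T y i := by
        intro p hp
        have : p ∈ ⋃ i, T y i := (hTcover y) ▸ hPI hp
        obtain ⟨s, ⟨i, rfl⟩, hs⟩ := this
        refine Set.mem_biUnion (show i ∈ Finset.univ.filter
          (fun i => (T y i ∩ P).Nonempty) from ?_) hs
        simp only [Finset.mem_filter, Finset.mem_univ, true_and]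
        exact ⟨p, hs, hp⟩
      exact aux_keyA N hmono hsub (T y) (hTint y) (hTdisj y) (φ y) (F y) (hbound y) (hF0 y)
        (cnt y) (Finset.univ.filter fun i => (T y i ∩ P).Nonempty) (hcnt y) P hPne hPoc hsubP

end Aux8

set_option maxHeartbeats 1000000

/-- **Interval refinement with controlled variation (divisibility).**
Given a family of norms `N J` on functions, indexed by subintervals `J` of the
interval `I`, monotone under restriction, subadditive under concatenation, and
satisfying Minkowski's integral inequality, and given for each `y ∈ Y` a partition
of `I` into at most `M` intervals on each of which `N J (φ y) ≤ F y`, there is a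
single partition `J` of `I` into at most `M` intervals on each of which the
`ν`-average `∫_Y φ_y dν(y)` has norm at most `3 ∫_Y F dν`. -/
theorem stmt17 (I : Set ℝ) (hI : I.OrdConnected)
    (N : Set ℝ → (ℝ → ℂ) → ℝ)
    (hN0 : ∀ J φf, 0 ≤ N J φf)
    (hmono : ∀ J' J : Set ℝ, J' ⊆ J → ∀ φf, N J' φf ≤ N J φf)
    (hsub : ∀ J₁ J₂ : Set ℝ, (J₁ ∪ J₂).OrdConnected →
      ∀ φf, N (J₁ ∪ J₂) φf ≤ N J₁ φf + N J₂ φf)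
    {Y : Type*} [MeasurableSpace Y] (ν : Measure Y) [IsFiniteMeasure ν]
    (φ : Y → ℝ → ℂ) (M : ℕ) (hM : 1 ≤ M)
    (F : Y → ℝ) (hF : Integrable F ν)
    (hMink : ∀ (J : Set ℝ) (g : Y → ℝ), Integrable g ν →
      (∀ y, N J (φ y) ≤ g y) →
      N J (fun t => ∫ y, φ y t ∂ν) ≤ ∫ y, g y ∂ν)
    (T : Y → Fin M → Set ℝ)
    (hTmeas : ∀ i : Fin M, MeasurableSet {p : Y × ℝ | p.2 ∈ T p.1 i})
    (hTcover : ∀ y, (⋃ i, T y i) = I)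
    (hTdisj : ∀ y, Pairwise fun i i' => Disjoint (T y i) (T y i'))
    (hTint : ∀ y i, (T y i).OrdConnected)
    (hbound : ∀ y i, N (T y i) (φ y) ≤ F y) :
    ∃ J : Fin M → Set ℝ,
      (⋃ i, J i) = I ∧
      (Pairwise fun i i' => Disjoint (J i) (J i')) ∧
      (∀ i, (J i).OrdConnected) ∧
      ∀ i, N (J i) (fun t => ∫ y, φ y t ∂ν) ≤ 3 * ∫ y, F y ∂ν := by
  classical
  have hF0 : ∀ y, 0 ≤ F y := fun y =>
    le_trans (hN0 (T y ⟨0, hM⟩) (φ y)) (hbound y ⟨0, hM⟩)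
  set A : ℝ := ∫ y, F y ∂ν with hA
  have hA0 : 0 ≤ A := integral_nonneg hF0
  have cardleM : ∀ s : Finset (Fin M), s.card ≤ M := fun s =>
    le_trans (Finset.card_le_univ s) (by simp)
  -- measurability of all the counting functions
  have mIic : ∀ t : ℝ, Measurable fun y => ((cntIic T t y).card : ℝ) :=
    fun t => meas_card_cntIic hI hTmeas hTcover hTdisj hTint t
  have tendIio : ∀ (b : ℝ) (y : Y),
      Filter.Tendsto (fun n : ℕ => ((cntIic T (b - 1/(n+1)) y).card : ℝ))
        Filter.atTop (nhds ((cntIio T b y).card : ℝ)) := by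
    intro b y
    obtain ⟨Nn, hNn⟩ := stab_Iio T b y
    exact tendsto_atTop_of_eventually_const (i₀ := Nn) (fun n hn => by rw [hNn n hn])
  have tendPlus : ∀ (a : ℝ) (y : Y),
      Filter.Tendsto (fun n : ℕ => ((cntIic T (a + 1/(n+1)) y).card : ℝ))
        Filter.atTop (nhds ((cntPlus T a y).card : ℝ)) := by
    intro a y
    obtain ⟨Nn, hNn⟩ := stab_plus T a y
    exact tendsto_atTop_of_eventually_const (i₀ := Nn) (fun n hn => by rw [hNn n hn])
  have tendTot : ∀ y : Y,
      Filter.Tendsto (fun n : ℕ => ((cntIic T (n : ℝ) y).card : ℝ))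
        Filter.atTop (nhds ((cntTot T y).card : ℝ)) := by
    intro y
    obtain ⟨Nn, hNn⟩ := stab_tot T y
    exact tendsto_atTop_of_eventually_const (i₀ := Nn) (fun n hn => by rw [hNn n hn])
  have tendBet : ∀ y : Y,
      Filter.Tendsto (fun n : ℕ => ((cntIic T (-(n : ℝ)) y).card : ℝ))
        Filter.atTop (nhds ((cntBet T y).card : ℝ)) := by
    intro y
    obtain ⟨Nn, hNn⟩ := stab_bet T y
    exact tendsto_atTop_of_eventually_const (i₀ := Nn) (fun n hn => by rw [hNn n hn])
  have mIio : ∀ b : ℝ, Measurable fun y => ((cntIio T b y).card : ℝ) := fun b =>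
    measurable_of_tendsto_metrizable (fun n => mIic _) (tendsto_pi_nhds.mpr (tendIio b))
  have mPlus : ∀ a : ℝ, Measurable fun y => ((cntPlus T a y).card : ℝ) := fun a =>
    measurable_of_tendsto_metrizable (fun n => mIic _) (tendsto_pi_nhds.mpr (tendPlus a))
  have mTot : Measurable fun y => ((cntTot T y).card : ℝ) :=
    measurable_of_tendsto_metrizable (fun n => mIic _) (tendsto_pi_nhds.mpr tendTot)
  have mBet : Measurable fun y => ((cntBet T y).card : ℝ) :=
    measurable_of_tendsto_metrizable (fun n => mIic _) (tendsto_pi_nhds.mpr tendBet)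
  -- integrability
  have hIntg : ∀ (c : Y → Finset (Fin M)), (Measurable fun y => ((c y).card : ℝ)) →
      Integrable (fun y => ((c y).card : ℝ) * F y) ν := by
    intro c hc
    refine Integrable.bdd_mul hF hc.aestronglyMeasurable (c := (M : ℝ)) (ae_of_all _ fun y => ?_)
    rw [Real.norm_natCast]
    exact_mod_cast cardleM (c y)
  have intIic : ∀ t : ℝ, Integrable (fun y => ((cntIic T t y).card : ℝ) * F y) ν :=
    fun t => hIntg _ (mIic t)
  have intIio : ∀ b : ℝ, Integrable (fun y => ((cntIio T b y).card : ℝ) * F y) ν :=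
    fun b => hIntg _ (mIio b)
  have intPlus : ∀ a : ℝ, Integrable (fun y => ((cntPlus T a y).card : ℝ) * F y) ν :=
    fun a => hIntg _ (mPlus a)
  have intTot : Integrable (fun y => ((cntTot T y).card : ℝ) * F y) ν := hIntg _ mTot
  have intBet : Integrable (fun y => ((cntBet T y).card : ℝ) * F y) ν := hIntg _ mBet
  -- the integral functionals
  set PhiI : ℝ → ℝ := fun t => ∫ y, ((cntIic T t y).card : ℝ) * F y ∂ν with hPhiI
  set PhiO : ℝ → ℝ := fun b => ∫ y, ((cntIio T b y).card : ℝ) * F y ∂ν with hPhiO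
  set PhiP : ℝ → ℝ := fun a => ∫ y, ((cntPlus T a y).card : ℝ) * F y ∂ν with hPhiP
  set PhiT : ℝ := ∫ y, ((cntTot T y).card : ℝ) * F y ∂ν with hPhiT
  set PhiB : ℝ := ∫ y, ((cntBet T y).card : ℝ) * F y ∂ν with hPhiB
  -- integral monotonicity helper
  have intMono : ∀ (c d : Y → Finset (Fin M)), (Measurable fun y => ((c y).card : ℝ)) →
      (Measurable fun y => ((d y).card : ℝ)) → (∀ y, c y ⊆ d y) →
      (∫ y, ((c y).card : ℝ) * F y ∂ν) ≤ ∫ y, ((d y).card : ℝ) * F y ∂ν := by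
    intro c d hc hd hcd
    apply integral_mono (hIntg c hc) (hIntg d hd)
    intro y
    apply mul_le_mul_of_nonneg_right _ (hF0 y)
    exact_mod_cast Finset.card_le_card (hcd y)
  -- dominated convergence helper
  have DCT : ∀ (seq : ℕ → ℝ) (lim : Y → Finset (Fin M)),
      (∀ y, Filter.Tendsto (fun n => ((cntIic T (seq n) y).card : ℝ)) Filter.atTop
        (nhds ((lim y).card : ℝ))) →
      (Measurable fun y => ((lim y).card : ℝ)) →
      Filter.Tendsto (fun n => PhiI (seq n)) Filter.atTop
        (nhds (∫ y, ((lim y).card : ℝ) * F y ∂ν)) := by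
    intro seq lim hlim hm
    apply tendsto_integral_of_dominated_convergence (fun y => (M : ℝ) * F y)
    · exact fun n => ((mIic (seq n)).aestronglyMeasurable.mul hF.aestronglyMeasurable)
    · exact hF.const_mul (M : ℝ)
    · intro n
      filter_upwards with y
      rw [Real.norm_eq_abs, abs_mul, abs_of_nonneg (by positivity : (0:ℝ) ≤ ((cntIic T (seq n) y).card : ℝ)),
        abs_of_nonneg (hF0 y)]
      apply mul_le_mul_of_nonneg_right _ (hF0 y)
      exact_mod_cast cardleM _
    · filter_upwards with y
      exact (hlim y).mul_const (F y)
  have tendO : ∀ b : ℝ, Filter.Tendsto (fun n : ℕ => PhiI (b - 1/(n+1))) Filter.atTop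
      (nhds (PhiO b)) := fun b => DCT _ _ (tendIio b) (mIio b)
  have tendP : ∀ a : ℝ, Filter.Tendsto (fun n : ℕ => PhiI (a + 1/(n+1))) Filter.atTop
      (nhds (PhiP a)) := fun a => DCT _ _ (tendPlus a) (mPlus a)
  have tendT : Filter.Tendsto (fun n : ℕ => PhiI (n : ℝ)) Filter.atTop (nhds PhiT) :=
    DCT _ _ tendTot mTot
  have tendB : Filter.Tendsto (fun n : ℕ => PhiI (-(n : ℝ))) Filter.atTop (nhds PhiB) :=
    DCT _ _ tendBet mBet
  -- order facts among the functionals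
  have monoI : ∀ {s t : ℝ}, s ≤ t → PhiI s ≤ PhiI t := fun {s t} h =>
    intMono _ _ (mIic s) (mIic t) (fun y => cnt_mono h)
  have hIleP : ∀ t : ℝ, PhiI t ≤ PhiP t := fun t =>
    intMono _ _ (mIic t) (mPlus t) (fun y => cntIic_subset_cntPlus t)
  have hPleO : ∀ {a b : ℝ}, a < b → PhiP a ≤ PhiO b := fun {a b} h =>
    intMono _ _ (mPlus a) (mIio b) (fun y => cntPlus_subset_cntIio h)
  have hOleI : ∀ b : ℝ, PhiO b ≤ PhiI b := fun b =>
    intMono _ _ (mIio b) (mIic b) (fun y => cntIio_subset_cntIic b)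
  have hIleT : ∀ t : ℝ, PhiI t ≤ PhiT := fun t =>
    intMono _ _ (mIic t) mTot (fun y => cntIic_subset_cntTot t)
  have hPleT : ∀ t : ℝ, PhiP t ≤ PhiT := fun t =>
    intMono _ _ (mPlus t) mTot (fun y => cntPlus_subset_cntTot t)
  have hBleO : ∀ b : ℝ, PhiB ≤ PhiO b := fun b =>
    intMono _ _ mBet (mIio b) (fun y => cntBet_subset_cntIio b)
  have hB0 : 0 ≤ PhiB := by
    apply integral_nonneg
    intro y
    have : (0:ℝ) ≤ ((cntBet T y).card : ℝ) := by positivity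
    exact mul_nonneg this (hF0 y)
  have hP0 : ∀ a : ℝ, 0 ≤ PhiP a := by
    intro a
    apply integral_nonneg
    intro y
    have : (0:ℝ) ≤ ((cntPlus T a y).card : ℝ) := by positivity
    exact mul_nonneg this (hF0 y)
  have hTleMA : PhiT ≤ (M : ℝ) * A := by
    rw [hPhiT, hA, ← integral_const_mul]
    apply integral_mono intTot (hF.const_mul _)
    intro y
    apply mul_le_mul_of_nonneg_right _ (hF0 y)
    exact_mod_cast cardleM _
  have hBleA : PhiB ≤ A := by
    rw [hPhiB, hA]
    apply integral_mono intBet hF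
    intro y
    calc ((cntBet T y).card : ℝ) * F y ≤ 1 * F y := by
          apply mul_le_mul_of_nonneg_right _ (hF0 y)
          exact_mod_cast card_cntBet_le_one hTint hTdisj
      _ = F y := one_mul _
  -- generic piece bound with 'SB + 1 - SA' counting
  have pieceB : ∀ (P : Set ℝ), P.OrdConnected → P ⊆ I →
      ∀ (SB SA : Y → Finset (Fin M)),
      (Measurable fun y => ((SB y).card : ℝ)) → (Measurable fun y => ((SA y).card : ℝ)) →
      (∀ y, SA y ⊆ SB y) →
      (∀ y, ((Finset.univ.filter fun i => (T y i ∩ P).Nonempty).card + (SA y).card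
        ≤ (SB y).card + 1)) →
      N P (fun t => ∫ y, φ y t ∂ν) ≤
        (∫ y, ((SB y).card : ℝ) * F y ∂ν) + A - ∫ y, ((SA y).card : ℝ) * F y ∂ν := by
    intro P hPoc hPI SB SA mSB mSA hsubBA hXS
    set cnt : Y → ℕ := fun y => (SB y).card + 1 - (SA y).card with hcnt
    have hle : ∀ y, (SA y).card ≤ (SB y).card := fun y => Finset.card_le_card (hsubBA y)
    have hcast : ∀ y, ((cnt y : ℝ)) = ((SB y).card : ℝ) + 1 - ((SA y).card : ℝ) := by
      intro y
      rw [hcnt]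
      have h : (SA y).card ≤ (SB y).card + 1 := by have := hle y; omega
      simp only []
      rw [Nat.cast_sub h]
      push_cast
      ring
    have hmeascnt : Measurable fun y => (cnt y : ℝ) := by
      have heq2 : (fun y => (cnt y : ℝ)) =
          fun y => ((SB y).card : ℝ) + 1 - ((SA y).card : ℝ) := funext hcast
      rw [heq2]
      exact (mSB.add_const 1).sub mSA
    have hb := aux_piece_bound ν N hmono hsub hM φ F hF hF0 I T hTcover hTdisj hTint hbound hMink
      P hPoc hPI cnt hmeascnt (fun y => by have := cardleM (SB y); simp only [hcnt]; omega)
      (fun y => by have h1 := hXS y; have h2 := hle y; simp only [hcnt]; omega)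
      (fun y => by have := hle y; simp only [hcnt]; omega)
    refine le_trans hb (le_of_eq ?_)
    have heq3 : (fun y => (cnt y : ℝ) * F y) =
        fun y => (((SB y).card : ℝ) * F y + F y) - ((SA y).card : ℝ) * F y := by
      funext y
      rw [hcast y]
      ring
    have h1 : Integrable (fun y => ((SB y).card : ℝ) * F y + F y) ν := (hIntg _ mSB).add hF
    rw [heq3, integral_sub h1 (hIntg _ mSA), integral_add (hIntg _ mSB) hF, ← hA]
  -- counting inequalities for the four kinds of pieces
  have cardFirst : ∀ (b : ℝ) (y : Y),
      (Finset.univ.filter fun i => (T y i ∩ (Set.Iio b ∩ I)).Nonempty).card + (cntBet T y).card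
        ≤ (cntIio T b y).card + 1 := by
    intro b y
    apply aux_cnt
    · intro i hi
      rw [Finset.mem_union] at hi
      rcases hi with hi | hi
      · simp only [Finset.mem_filter, Finset.mem_univ, true_and] at hi
        simp only [cntIio, Finset.mem_filter, Finset.mem_univ, true_and]
        obtain ⟨z, hz1, hz2, _⟩ := hi
        exact ⟨z, hz1, hz2⟩
      · exact cntBet_subset_cntIio b hi
    · exact le_trans (Finset.card_le_card Finset.inter_subset_right)
        (card_cntBet_le_one hTint hTdisj)
  have cardMid : ∀ (a b : ℝ), a < b → ∀ y : Y,
      (Finset.univ.filter fun i => (T y i ∩ (Set.Ioo a b ∩ I)).Nonempty).card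
        + (cntPlus T a y).card ≤ (cntIio T b y).card + 1 := by
    intro a b hab y
    apply aux_cnt
    · intro i hi
      rw [Finset.mem_union] at hi
      rcases hi with hi | hi
      · simp only [Finset.mem_filter, Finset.mem_univ, true_and] at hi
        simp only [cntIio, Finset.mem_filter, Finset.mem_univ, true_and]
        obtain ⟨z, hz1, ⟨_, hz2⟩, _⟩ := hi
        exact ⟨z, hz1, hz2⟩
      · exact cntPlus_subset_cntIio hab hi
    · exact card_inter_cntPlus_le_one hTint hTdisj
        (le_trans Set.inter_subset_left Set.Ioo_subset_Ioi_self)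
  have cardLast : ∀ (a : ℝ) (y : Y),
      (Finset.univ.filter fun i => (T y i ∩ (Set.Ioi a ∩ I)).Nonempty).card
        + (cntPlus T a y).card ≤ (cntTot T y).card + 1 := by
    intro a y
    apply aux_cnt
    · intro i hi
      rw [Finset.mem_union] at hi
      rcases hi with hi | hi
      · simp only [Finset.mem_filter, Finset.mem_univ, true_and] at hi
        simp only [cntTot, Finset.mem_filter, Finset.mem_univ, true_and]
        exact ⟨hi.choose, hi.choose_spec.1⟩
      · exact cntPlus_subset_cntTot a hi
    · exact card_inter_cntPlus_le_one hTint hTdisj Set.inter_subset_left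
  have cardAll : ∀ y : Y,
      (Finset.univ.filter fun i => (T y i ∩ I).Nonempty).card + (cntBet T y).card
        ≤ (cntTot T y).card + 1 := by
    intro y
    apply aux_cnt
    · intro i hi
      rw [Finset.mem_union] at hi
      rcases hi with hi | hi
      · simp only [Finset.mem_filter, Finset.mem_univ, true_and] at hi
        simp only [cntTot, Finset.mem_filter, Finset.mem_univ, true_and]
        exact ⟨hi.choose, hi.choose_spec.1⟩
      · exact cntBet_subset_cntTot hi
    · exact le_trans (Finset.card_le_card Finset.inter_subset_right)
        (card_cntBet_le_one hTint hTdisj)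
  -- the four piece bounds
  have bndFirst : ∀ b : ℝ,
      N (Set.Iio b ∩ I) (fun t => ∫ y, φ y t ∂ν) ≤ PhiO b + A - PhiB :=
    fun b => pieceB _ (Set.ordConnected_Iio.inter hI) Set.inter_subset_right _ _
      (mIio b) mBet (fun y => cntBet_subset_cntIio b) (cardFirst b)
  have bndMid : ∀ a b : ℝ, a < b →
      N (Set.Ioo a b ∩ I) (fun t => ∫ y, φ y t ∂ν) ≤ PhiO b + A - PhiP a :=
    fun a b hab => pieceB _ (Set.ordConnected_Ioo.inter hI) Set.inter_subset_right _ _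
      (mIio b) (mPlus a) (fun y => cntPlus_subset_cntIio hab) (cardMid a b hab)
  have bndLast : ∀ a : ℝ,
      N (Set.Ioi a ∩ I) (fun t => ∫ y, φ y t ∂ν) ≤ PhiT + A - PhiP a :=
    fun a => pieceB _ (Set.ordConnected_Ioi.inter hI) Set.inter_subset_right _ _
      mTot (mPlus a) (fun y => cntPlus_subset_cntTot a) (cardLast a)
  have bndAll : N I (fun t => ∫ y, φ y t ∂ν) ≤ PhiT + A - PhiB := by
    have := pieceB I hI (le_refl I) _ _ mTot mBet (fun y => cntBet_subset_cntTot) cardAll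
    exact this
  have bndSingle : ∀ x : ℝ, N ({x} ∩ I) (fun t => ∫ y, φ y t ∂ν) ≤ A := by
    intro x
    have hcnt1 : ∀ y : Y,
        (Finset.univ.filter fun i => (T y i ∩ ({x} ∩ I)).Nonempty).card ≤ 1 := by
      intro y
      rw [Finset.card_le_one]
      intro i hi j hj
      simp only [Finset.mem_filter, Finset.mem_univ, true_and] at hi hj
      obtain ⟨z, hz1, hz2, _⟩ := hi
      obtain ⟨w, hw1, hw2, _⟩ := hj
      simp only [Set.mem_singleton_iff] at hz2 hw2
      subst hz2; subst hw2
      by_contra hne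
      exact Set.disjoint_left.mp (hTdisj y hne) hz1 hw1
    have hmeas1 : Measurable fun _ : Y => ((1 : ℕ) : ℝ) := measurable_const
    have hbd1 : ∀ _ : Y, (1 : ℕ) ≤ M + 1 := fun _ => Nat.succ_le_succ (Nat.zero_le M)
    have hb := aux_piece_bound ν N hmono hsub hM φ F hF hF0 I T hTcover hTdisj hTint hbound hMink
      ({x} ∩ I) (Set.ordConnected_singleton.inter hI) Set.inter_subset_right
      (fun _ => 1) hmeas1 hbd1 (fun y => hcnt1 y) (fun y => le_refl 1)
    refine le_trans hb (le_of_eq ?_)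
    rw [hA]
    congr 1
    funext y
    simp
  have bndEmpty : N ∅ (fun t => ∫ y, φ y t ∂ν) ≤ A := by
    have hcnt1 : ∀ y : Y,
        (Finset.univ.filter fun i => (T y i ∩ (∅ : Set ℝ)).Nonempty).card ≤ 1 := by
      intro y
      simp
    have hmeas1 : Measurable fun _ : Y => ((1 : ℕ) : ℝ) := measurable_const
    have hbd1 : ∀ _ : Y, (1 : ℕ) ≤ M + 1 := fun _ => Nat.succ_le_succ (Nat.zero_le M)
    have hb := aux_piece_bound ν N hmono hsub hM φ F hF hF0 I T hTcover hTdisj hTint hbound hMink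
      ∅ Set.ordConnected_empty (Set.empty_subset I)
      (fun _ => 1) hmeas1 hbd1 (fun y => hcnt1 y) (fun y => le_refl 1)
    refine le_trans hb (le_of_eq ?_)
    rw [hA]
    congr 1
    funext y
    simp
  -- the terminal (rightmost) piece construction, used in both branches of the recursion
  have hsingle : ∀ x : ℝ, PhiT ≤ PhiP x + 2*A →
      List.Pairwise Disjoint [Set.Ioi x ∩ I] ∧
      (∀ P ∈ [Set.Ioi x ∩ I], P.OrdConnected) ∧
      (∀ P ∈ [Set.Ioi x ∩ I], P ⊆ Set.Ioi x) ∧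
      (∀ P ∈ [Set.Ioi x ∩ I], N P (fun t => ∫ y, φ y t ∂ν) ≤ 3*A) := by
    intro x hx
    refine ⟨by simp, ?_, ?_, ?_⟩
    · intro P hP
      simp only [List.mem_singleton] at hP
      subst hP
      exact Set.ordConnected_Ioi.inter hI
    · intro P hP
      simp only [List.mem_singleton] at hP
      subst hP
      exact Set.inter_subset_left
    · intro P hP
      simp only [List.mem_singleton] at hP
      subst hP
      have := bndLast x
      linarith
  have hsingleU : ∀ x : ℝ, ⋃₀ {Q | Q ∈ [Set.Ioi x ∩ I]} = Set.Ioi x ∩ I := by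
    intro x
    have : {Q | Q ∈ [Set.Ioi x ∩ I]} = {Set.Ioi x ∩ I} := by
      ext Q; simp
    rw [this, Set.sUnion_singleton]
  -- the recursive construction
  have REC : ∀ k : ℕ, ∀ x : ℝ, PhiT ≤ PhiP x + (2*(k:ℝ)+2)*A →
      ∃ L : List (Set ℝ), L.length ≤ 2*k+1 ∧
        ⋃₀ {Q | Q ∈ L} = Set.Ioi x ∩ I ∧
        List.Pairwise Disjoint L ∧
        (∀ P ∈ L, P.OrdConnected) ∧ (∀ P ∈ L, P ⊆ Set.Ioi x) ∧
        (∀ P ∈ L, N P (fun t => ∫ y, φ y t ∂ν) ≤ 3*A) := by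
    intro k
    induction k with
    | zero =>
      intro x hlev
      obtain ⟨h1, h2, h3, h4⟩ := hsingle x (by push_cast at hlev; linarith)
      exact ⟨[Set.Ioi x ∩ I], by simp, hsingleU x, h1, h2, h3, h4⟩
    | succ k ih =>
      intro x hlev
      by_cases hc : PhiT ≤ PhiP x + 2*A
      · obtain ⟨h1, h2, h3, h4⟩ := hsingle x hc
        exact ⟨[Set.Ioi x ∩ I], by simp only [List.length_singleton]; omega, hsingleU x, h1, h2, h3, h4⟩
      · push_neg at hc
        -- positivity of A
        have hApos : 0 < A := by
          rcases lt_or_eq_of_le hA0 with h | h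
          · exact h
          · exfalso
            have h1 : PhiT ≤ (M : ℝ) * A := hTleMA
            rw [← h, mul_zero] at h1
            have h2 := hP0 x
            rw [← h] at hc
            linarith
        set S : Set ℝ := {t | PhiI t ≤ PhiP x + 2*A} with hS
        have hxS : x ∈ S := by
          simp only [hS, Set.mem_setOf_eq]
          have := hIleP x
          linarith
        have hSne : S.Nonempty := ⟨x, hxS⟩
        have hSbdd : BddAbove S := by
          obtain ⟨n₀, hn₀⟩ := (tendT.eventually_const_lt hc).exists
          refine ⟨(n₀ : ℝ), fun t ht => ?_⟩
          simp only [hS, Set.mem_setOf_eq] at ht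
          by_contra hlt
          push_neg at hlt
          have := monoI hlt.le
          linarith
        set x' : ℝ := sSup S with hx'
        have hxx' : x < x' := by
          obtain ⟨n₀, hn₀⟩ := ((tendP x).eventually_lt_const
            (show PhiP x < PhiP x + 2*A by linarith)).exists
          have hmem : x + 1/(n₀+1) ∈ S := by
            simp only [hS, Set.mem_setOf_eq]
            linarith
          have h1 : x + 1/(n₀+1) ≤ x' := le_csSup hSbdd hmem
          have h2 : (0:ℝ) < 1/(n₀+1) := by positivity
          linarith
        have hOx' : PhiO x' ≤ PhiP x + 2*A := by
          refine le_of_tendsto (tendO x') ?_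
          filter_upwards with n
          rcases le_or_gt (x' - 1/(n+1)) x with h | h
          · calc PhiI (x' - 1/(n+1)) ≤ PhiI x := monoI h
              _ ≤ PhiP x := hIleP x
              _ ≤ PhiP x + 2*A := by linarith
          · obtain ⟨t, htS, hth⟩ := exists_lt_of_lt_csSup hSne
              (show x' - 1/(n+1) < sSup S from by
                have : (0:ℝ) < 1/(n+1) := by positivity
                linarith)
            simp only [hS, Set.mem_setOf_eq] at htS
            exact le_trans (monoI hth.le) htS
        have hPx' : PhiP x + 2*A ≤ PhiP x' := by
          refine ge_of_tendsto (tendP x') ?_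
          filter_upwards with n
          have hnotS : x' + 1/(n+1) ∉ S := by
            intro hmem
            have h1 : x' + 1/(n+1) ≤ x' := le_csSup hSbdd hmem
            have h2 : (0:ℝ) < 1/(n+1) := by positivity
            linarith
          simp only [hS, Set.mem_setOf_eq, not_le] at hnotS
          linarith
        obtain ⟨L', hlen', hU', hdisj', hoc', hsubset', hbnd'⟩ := ih x' (by
          push_cast at hlev ⊢
          linarith)
        refine ⟨(Set.Ioo x x' ∩ I) :: (({x'} ∩ I) :: L'), ?_, ?_, ?_, ?_, ?_, ?_⟩
        · simp only [List.length_cons]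
          omega
        · have h1 : {Q | Q ∈ (Set.Ioo x x' ∩ I) :: (({x'} ∩ I) :: L')} =
              insert (Set.Ioo x x' ∩ I) (insert ({x'} ∩ I) {Q | Q ∈ L'}) := by
            ext Q; simp [List.mem_cons]
          rw [h1, Set.sUnion_insert, Set.sUnion_insert, hU']
          rw [← Set.union_inter_distrib_right, ← Set.union_inter_distrib_right]
          congr 1
          ext z
          simp only [Set.mem_union, Set.mem_Ioo, Set.mem_singleton_iff, Set.mem_Ioi]
          constructor
          · rintro ((⟨h1, h2⟩) | rfl | h1)
            · exact h1
            · exact hxx'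
            · linarith
          · intro hz
            rcases lt_trichotomy z x' with h | h | h
            · exact Or.inl ⟨hz, h⟩
            · exact Or.inr (Or.inl h)
            · exact Or.inr (Or.inr h)
        · refine List.Pairwise.cons ?_ (List.Pairwise.cons ?_ hdisj')
          · intro Q hQ
            rcases List.mem_cons.mp hQ with rfl | hQ
            · apply Set.disjoint_left.mpr
              rintro z ⟨⟨_, hz2⟩, _⟩ ⟨hz3, _⟩
              simp only [Set.mem_singleton_iff] at hz3
              subst hz3
              exact absurd hz2 (lt_irrefl _)
            · have hQ' := hsubset' Q hQ
              apply Set.disjoint_left.mpr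
              rintro z ⟨⟨_, hz2⟩, _⟩ hzQ
              have := hQ' hzQ
              simp only [Set.mem_Ioi] at this
              exact absurd hz2 (not_lt.mpr this.le)
          · intro Q hQ
            have hQ' := hsubset' Q hQ
            apply Set.disjoint_left.mpr
            rintro z ⟨hz1, _⟩ hzQ
            simp only [Set.mem_singleton_iff] at hz1
            subst hz1
            have := hQ' hzQ
            simp only [Set.mem_Ioi] at this
            exact absurd this (lt_irrefl _)
        · intro P hP
          rcases List.mem_cons.mp hP with rfl | hP
          · exact Set.ordConnected_Ioo.inter hI
          rcases List.mem_cons.mp hP with rfl | hP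
          · exact Set.ordConnected_singleton.inter hI
          · exact hoc' P hP
        · intro P hP
          rcases List.mem_cons.mp hP with rfl | hP
          · exact le_trans Set.inter_subset_left Set.Ioo_subset_Ioi_self
          rcases List.mem_cons.mp hP with rfl | hP
          · intro z hz
            simp only [Set.mem_inter_iff, Set.mem_singleton_iff] at hz
            simp only [Set.mem_Ioi]
            rw [hz.1]
            exact hxx'
          · exact le_trans (hsubset' P hP) (Set.Ioi_subset_Ioi hxx'.le)
        · intro P hP
          rcases List.mem_cons.mp hP with rfl | hP
          · have := bndMid x x' hxx'
            linarith
          rcases List.mem_cons.mp hP with rfl | hP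
          · have := bndSingle x'
            linarith
          · exact hbnd' P hP
  -- the top-level construction
  have hTop : ∃ L : List (Set ℝ), L.length ≤ M ∧ ⋃₀ {Q | Q ∈ L} = I ∧
      List.Pairwise Disjoint L ∧ (∀ P ∈ L, P.OrdConnected) ∧
      (∀ P ∈ L, N P (fun t => ∫ y, φ y t ∂ν) ≤ 3*A) := by
    set S : Set ℝ := {t | PhiI t ≤ PhiB + 2*A} with hS
    by_cases hbdd : BddAbove S
    · have hex : ∃ t : ℝ, PhiB + 2*A < PhiI t := by
        by_contra hcon
        push_neg at hcon
        have : S = Set.univ := Set.eq_univ_of_forall (fun t => hcon t)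
        rw [this] at hbdd
        exact absurd hbdd not_bddAbove_univ
      have hTgt : PhiB + 2*A < PhiT := by
        obtain ⟨t, ht⟩ := hex
        exact lt_of_lt_of_le ht (hIleT t)
      have hApos : 0 < A := by
        rcases lt_or_eq_of_le hA0 with h | h
        · exact h
        · exfalso
          have h1 : PhiT ≤ (M : ℝ) * A := hTleMA
          rw [← h, mul_zero] at h1
          rw [← h] at hTgt
          linarith
      have hM3 : 3 ≤ M := by
        by_contra hcon
        push_neg at hcon
        have h2 : (M : ℝ) ≤ 2 := by exact_mod_cast Nat.lt_succ_iff.mp hcon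
        have h3 : (M : ℝ) * A ≤ 2 * A := mul_le_mul_of_nonneg_right h2 hA0
        linarith
      have hSne : S.Nonempty := by
        obtain ⟨n, hn⟩ := (tendB.eventually_lt_const
          (show PhiB < PhiB + 2*A by linarith)).exists
        exact ⟨-(n:ℝ), hn.le⟩
      set x₁ : ℝ := sSup S with hx₁
      have hO₁ : PhiO x₁ ≤ PhiB + 2*A := by
        refine le_of_tendsto (tendO x₁) ?_
        filter_upwards with n
        obtain ⟨t, htS, hth⟩ := exists_lt_of_lt_csSup hSne
          (show x₁ - 1/(n+1) < sSup S from by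
            have : (0:ℝ) < 1/(n+1) := by positivity
            linarith)
        exact le_trans (monoI hth.le) htS
      have hP₁ : PhiB + 2*A ≤ PhiP x₁ := by
        refine ge_of_tendsto (tendP x₁) ?_
        filter_upwards with n
        have hnotS : x₁ + 1/(n+1) ∉ S := by
          intro hmem
          have h1 : x₁ + 1/(n+1) ≤ x₁ := le_csSup hbdd hmem
          have h2 : (0:ℝ) < 1/(n+1) := by positivity
          linarith
        simp only [hS, Set.mem_setOf_eq, not_le] at hnotS
        linarith
      set K : ℕ := (M - 3)/2 with hK
      have hKlev : PhiT ≤ PhiP x₁ + (2*(K:ℝ)+2)*A := by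
        have hMK : M ≤ 2*K + 4 := by omega
        have h1 : (M:ℝ) ≤ 2*(K:ℝ) + 4 := by exact_mod_cast hMK
        have h2 : (M:ℝ)*A ≤ (2*(K:ℝ) + 4)*A := mul_le_mul_of_nonneg_right h1 hA0
        have h3 := hTleMA
        nlinarith [hB0]
      obtain ⟨L', hlen', hU', hdisj', hoc', hsubset', hbnd'⟩ := REC K x₁ hKlev
      refine ⟨(Set.Iio x₁ ∩ I) :: (({x₁} ∩ I) :: L'), ?_, ?_, ?_, ?_, ?_⟩
      · simp only [List.length_cons]
        omega
      · have h1 : {Q | Q ∈ (Set.Iio x₁ ∩ I) :: (({x₁} ∩ I) :: L')} =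
            insert (Set.Iio x₁ ∩ I) (insert ({x₁} ∩ I) {Q | Q ∈ L'}) := by
          ext Q; simp [List.mem_cons]
        rw [h1, Set.sUnion_insert, Set.sUnion_insert, hU']
        rw [← Set.union_inter_distrib_right, ← Set.union_inter_distrib_right]
        have h2 : Set.Iio x₁ ∪ ({x₁} ∪ Set.Ioi x₁) = Set.univ := by
          ext z
          simp only [Set.mem_union, Set.mem_Iio, Set.mem_singleton_iff, Set.mem_Ioi,
            Set.mem_univ, iff_true]
          rcases lt_trichotomy z x₁ with h | h | h
          · exact Or.inl h
          · exact Or.inr (Or.inl h)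
          · exact Or.inr (Or.inr h)
        rw [h2, Set.univ_inter]
      · refine List.Pairwise.cons ?_ (List.Pairwise.cons ?_ hdisj')
        · intro Q hQ
          rcases List.mem_cons.mp hQ with rfl | hQ
          · apply Set.disjoint_left.mpr
            rintro z ⟨hz1, _⟩ ⟨hz2, _⟩
            simp only [Set.mem_Iio] at hz1
            simp only [Set.mem_singleton_iff] at hz2
            subst hz2
            exact absurd hz1 (lt_irrefl _)
          · have hQ' := hsubset' Q hQ
            apply Set.disjoint_left.mpr
            rintro z ⟨hz1, _⟩ hzQ
            simp only [Set.mem_Iio] at hz1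
            have := hQ' hzQ
            simp only [Set.mem_Ioi] at this
            linarith
        · intro Q hQ
          have hQ' := hsubset' Q hQ
          apply Set.disjoint_left.mpr
          rintro z ⟨hz1, _⟩ hzQ
          simp only [Set.mem_singleton_iff] at hz1
          subst hz1
          have := hQ' hzQ
          simp only [Set.mem_Ioi] at this
          exact absurd this (lt_irrefl _)
      · intro P hP
        rcases List.mem_cons.mp hP with rfl | hP
        · exact Set.ordConnected_Iio.inter hI
        rcases List.mem_cons.mp hP with rfl | hP
        · exact Set.ordConnected_singleton.inter hI
        · exact hoc' P hP
      · intro P hP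
        rcases List.mem_cons.mp hP with rfl | hP
        · have := bndFirst x₁
          linarith
        rcases List.mem_cons.mp hP with rfl | hP
        · have := bndSingle x₁
          linarith
        · exact hbnd' P hP
    · -- S unbounded above: the whole interval is a single piece
      have hall : ∀ t, PhiI t ≤ PhiB + 2*A := by
        intro t
        obtain ⟨t', ht'S, htt'⟩ := not_bddAbove_iff.mp hbdd t
        exact le_trans (monoI htt'.le) ht'S
      have hTle : PhiT ≤ PhiB + 2*A := by
        refine le_of_tendsto tendT ?_
        filter_upwards with n
        exact hall _
      refine ⟨[I], by simpa using hM, ?_, by simp, ?_, ?_⟩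
      · have h1 : {Q | Q ∈ [I]} = {I} := by ext Q; simp
        rw [h1, Set.sUnion_singleton]
      · intro P hP
        simp only [List.mem_singleton] at hP
        subst hP
        exact hI
      · intro P hP
        simp only [List.mem_singleton] at hP
        subst hP
        linarith [bndAll]
  -- final assembly
  obtain ⟨L, hlen, hU, hdisj, hoc, hbnd⟩ := hTop
  have hLsubI : ∀ P ∈ L, P ⊆ I := by
    intro P hP
    rw [← hU]
    exact Set.subset_sUnion_of_mem hP
  refine ⟨fun i => L.getD (i : ℕ) ∅, ?_, ?_, ?_, ?_⟩
  · apply Set.Subset.antisymm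
    · apply Set.iUnion_subset
      intro i
      rcases lt_or_ge ((i : ℕ)) L.length with h | h
      · rw [List.getD_eq_get L ∅ ⟨_, h⟩]
        exact hLsubI _ (L.get_mem _)
      · rw [List.getD_eq_default L ∅ h]
        exact Set.empty_subset I
    · intro z hz
      rw [← hU] at hz
      obtain ⟨P, hP, hzP⟩ := hz
      simp only [Set.mem_setOf_eq] at hP
      obtain ⟨n, hn⟩ := List.mem_iff_get.mp hP
      have hnM : (n : ℕ) < M := lt_of_lt_of_le n.isLt hlen
      refine Set.mem_iUnion.mpr ⟨⟨(n : ℕ), hnM⟩, ?_⟩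
      have hcoe : (((⟨(n : ℕ), hnM⟩ : Fin M)) : ℕ) = (n : ℕ) := rfl
      rw [hcoe, List.getD_eq_get L ∅ ⟨_, n.isLt⟩]
      have : L.get ⟨(n : ℕ), n.isLt⟩ = L.get n := by congr
      rw [this, hn]
      exact hzP
  · intro i i' hne
    rcases lt_or_ge ((i : ℕ)) L.length with h | h
    · rcases lt_or_ge ((i' : ℕ)) L.length with h' | h'
      · simp only []
        rw [List.getD_eq_get L ∅ ⟨_, h⟩, List.getD_eq_get L ∅ ⟨_, h'⟩]
        have hvne : (i : ℕ) ≠ (i' : ℕ) := fun hcon => hne (Fin.ext hcon)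
        rcases Nat.lt_or_ge (i : ℕ) (i' : ℕ) with hlt | hge
        · exact List.pairwise_iff_get.mp hdisj ⟨(i:ℕ), h⟩ ⟨(i':ℕ), h'⟩ hlt
        · have hlt : (i' : ℕ) < (i : ℕ) := by omega
          exact (List.pairwise_iff_get.mp hdisj ⟨(i':ℕ), h'⟩ ⟨(i:ℕ), h⟩ hlt).symm
      · simp only []
        rw [List.getD_eq_default L ∅ h']
        exact Set.disjoint_empty _
    · simp only []
      rw [List.getD_eq_default L ∅ h]
      exact Set.empty_disjoint _
  · intro i
    rcases lt_or_ge ((i : ℕ)) L.length with h | h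
    · simp only []
      rw [List.getD_eq_get L ∅ ⟨_, h⟩]
      exact hoc _ (L.get_mem _)
    · simp only []
      rw [List.getD_eq_default L ∅ h]
      exact Set.ordConnected_empty
  · intro i
    show N (L.getD (i : ℕ) ∅) (fun t => ∫ y, φ y t ∂ν) ≤ 3 * A
    rcases lt_or_ge ((i : ℕ)) L.length with h | h
    · have heq : L.getD (i : ℕ) ∅ = L.get ⟨(i:ℕ), h⟩ := List.getD_eq_get L ∅ ⟨_, h⟩
      rw [heq]
      exact hbnd _ (L.get_mem _)
    · have heq : L.getD (i : ℕ) ∅ = ∅ := List.getD_eq_default L ∅ h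
      rw [heq]
      linarith [bndEmpty]
end
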